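/- arXiv:1212.5888 — 6 statements merged into one kernel-verified Lean document; each statement's English description precedes it below -/
import Mathlib

section
/- If X and Y are càdlàg paths of finite p- and q-variation respectively with 1/p + 1/q > 1, then for any θ > 0 with 1/p + 1/q ≥ 1/θ, the two-parameter function Z_{s,t} := ∫_{(s,t]} (Y_{r-} − Y_s) dX_r (Young integral) has finite θ-variation: sup over partitions of ∑ |Z_{s,t}|^θ < ∞. -/
open scoped BigOperators
open MeasureTheory

noncomputable section

def IsPartition (a b : ℝ) (P : Finset ℝ) : Prop :=
  a ∈ P ∧ b ∈ P ∧ ∀ x ∈ P, x ∈ Set.Icc a b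

noncomputable def nextPt (P : Finset ℝ) (b x : ℝ) : ℝ :=
  WithBot.unbotD b (P.filter (fun y => x < y)).min

noncomputable def varSum {E : Type*} [NormedAddCommGroup E] (X : ℝ → E) (p b : ℝ)
    (P : Finset ℝ) : ℝ :=
  ∑ x ∈ P.erase b, ‖X (nextPt P b x) - X x‖ ^ p

def HasFiniteVar {E : Type*} [NormedAddCommGroup E] (X : ℝ → E) (p a b : ℝ) : Prop :=
  ∃ M : ℝ, ∀ P : Finset ℝ, IsPartition a b P → varSum X p b P ≤ M

noncomputable def varNorm {E : Type*} [NormedAddCommGroup E] (X : ℝ → E) (p a b : ℝ) : ℝ :=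
  (sSup {v | ∃ P : Finset ℝ, IsPartition a b P ∧ v = varSum X p b P}) ^ (1 / p)

def Cadlag {E : Type*} [NormedAddCommGroup E] (X : ℝ → E) (a b : ℝ) : Prop :=
  (∀ t ∈ Set.Ico a b, Filter.Tendsto X (nhdsWithin t (Set.Ici t)) (nhds (X t))) ∧
  (∀ t ∈ Set.Ioc a b, ∃ L : E, Filter.Tendsto X (nhdsWithin t (Set.Iio t)) (nhds L))

noncomputable def minus {E : Type*} [NormedAddCommGroup E] (X : ℝ → E) (a t : ℝ) : E :=
  if t ≤ a then X a else Function.leftLim X t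

noncomputable def jump {E : Type*} [NormedAddCommGroup E] (X : ℝ → E) (a t : ℝ) : E :=
  X t - minus X a t

def RRSTendsto {E : Type*} [NormedAddCommGroup E] (a b : ℝ) (S : Finset ℝ → E) (L : E) : Prop :=
  ∀ ε > 0, ∃ P₀ : Finset ℝ, IsPartition a b P₀ ∧
    ∀ P : Finset ℝ, IsPartition a b P → P₀ ⊆ P → ‖S P - L‖ < ε


noncomputable def varSum2 {F : Type*} [NormedAddCommGroup F] (Ξ : ℝ → ℝ → F) (q b : ℝ)
    (P : Finset ℝ) : ℝ :=
  ∑ x ∈ P.erase b, ‖Ξ x (nextPt P b x)‖ ^ q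

def HasFiniteVar2 {F : Type*} [NormedAddCommGroup F] (Ξ : ℝ → ℝ → F) (q a b : ℝ) : Prop :=
  ∃ M : ℝ, ∀ P : Finset ℝ, IsPartition a b P → varSum2 Ξ q b P ≤ M

namespace YoungAux

lemma nextPt_eq {P : Finset ℝ} {b x m : ℝ} (hm : m ∈ P) (hxm : x < m)
    (hmin : ∀ y ∈ P, x < y → m ≤ y) : nextPt P b x = m := by
  unfold nextPt
  have hne : (P.filter (fun y => x < y)).Nonempty := ⟨m, Finset.mem_filter.2 ⟨hm, hxm⟩⟩
  have h1 : (P.filter (fun y => x < y)).min = ((P.filter (fun y => x < y)).min' hne : WithBot ℝ) :=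
    (Finset.coe_min' hne).symm
  have h2 : (P.filter (fun y => x < y)).min' hne = m := by
    apply le_antisymm
    · exact Finset.min'_le _ _ (Finset.mem_filter.2 ⟨hm, hxm⟩)
    · apply Finset.le_min'
      intro y hy
      rcases Finset.mem_filter.1 hy with ⟨ha, hb⟩
      exact hmin y ha hb
  rw [h1, h2, WithBot.unbotD_coe]

/-- a strictly increasing chain from `u` to `v` with `n` steps -/
def chainOn (u v : ℝ) (n : ℕ) (c : ℕ → ℝ) : Prop :=
  c 0 = u ∧ c n = v ∧ ∀ i < n, c i < c (i + 1)

lemma chainOn.mono_le {u v n c} (h : chainOn u v n c) {i j : ℕ} (hij : i ≤ j) (hj : j ≤ n) :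
    c i ≤ c j := by
  induction j with
  | zero => simp_all
  | succ k ih =>
    rcases Nat.lt_or_ge i (k+1) with h'|h'
    · exact le_trans (ih (by omega) (by omega)) (le_of_lt (h.2.2 k (by omega)))
    · have : i = k + 1 := by omega
      simp [this]

lemma chainOn.mono_lt {u v n c} (h : chainOn u v n c) {i j : ℕ} (hij : i < j) (hj : j ≤ n) :
    c i < c j :=
  lt_of_lt_of_le (h.2.2 i (by omega)) (h.mono_le hij hj)

lemma chainOn.mem_Icc {u v n c} (h : chainOn u v n c) {i : ℕ} (hi : i ≤ n) :
    c i ∈ Set.Icc u v :=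
  ⟨h.1 ▸ h.mono_le (Nat.zero_le i) hi, h.2.1 ▸ h.mono_le hi le_rfl⟩

lemma chainOn.le {u v n c} (h : chainOn u v n c) : u ≤ v := by
  have := h.mem_Icc (le_refl n); rw [h.2.1] at this; exact this.1

/-- convert a partition to a chain -/
lemma partition_chain {a b : ℝ} {P : Finset ℝ} (hP : IsPartition a b P) :
    ∃ n c, chainOn a b n c ∧ (∀ i ≤ n, c i ∈ P) ∧
      (∀ i < n, nextPt P b (c i) = c (i + 1)) ∧
      (P.erase b = Finset.image c (Finset.range n)) ∧
      (∀ i j, i ≤ n → j ≤ n → c i = c j → i = j) := by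
  obtain ⟨ha, hb, hmem⟩ := hP
  have hcard : 0 < P.card := Finset.card_pos.2 ⟨a, ha⟩
  set n := P.card - 1 with hn
  have hcard' : P.card = n + 1 := by omega
  set e := P.orderIsoOfFin hcard' with he
  set c : ℕ → ℝ := fun i => (e ⟨min i n, by omega⟩ : ℝ) with hc
  have hmono : ∀ i j, i < j → j ≤ n → c i < c j := by
    intro i j hij hj
    have : (⟨min i n, by omega⟩ : Fin (n+1)) < ⟨min j n, by omega⟩ := by
      simp only [Fin.mk_lt_mk]; omega
    simpa [hc] using e.strictMono this
  have hmemP : ∀ i, c i ∈ P := fun i => (e _).2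
  -- surjectivity
  have hsurj : ∀ x ∈ P, ∃ i ≤ n, c i = x := by
    intro x hx
    obtain ⟨i, hi⟩ := e.surjective ⟨x, hx⟩
    exact ⟨i, by omega, by simp [hc, Nat.min_eq_left (by omega : (i:ℕ) ≤ n), Fin.eta, hi]⟩
  have hc0 : c 0 = a := by
    obtain ⟨i, hi, hci⟩ := hsurj a ha
    have h1 : a ≤ c 0 := (hmem _ (hmemP 0)).1
    rcases Nat.eq_zero_or_pos i with rfl|hpos
    · exact le_antisymm (hci ▸ le_rfl) h1
    · exact absurd (hci ▸ hmono 0 i hpos hi) (not_lt.2 h1)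
  have hcn : c n = b := by
    obtain ⟨i, hi, hci⟩ := hsurj b hb
    have h1 : c n ≤ b := (hmem _ (hmemP n)).2
    rcases Nat.lt_or_ge i n with hlt|hge
    · exact absurd (hci ▸ hmono i n hlt le_rfl) (not_lt.2 h1)
    · have hin : i = n := by omega
      rw [← hin]; exact hci
  have hchain : chainOn a b n c := ⟨hc0, hcn, fun i hi => hmono i (i+1) (Nat.lt_succ_self i) hi⟩
  have hinj : ∀ i j, i ≤ n → j ≤ n → c i = c j → i = j := by
    intro i j hi hj hij
    rcases lt_trichotomy i j with h|h|h
    · exact absurd hij (ne_of_lt (hmono i j h hj))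
    · exact h
    · exact absurd hij.symm (ne_of_lt (hmono j i h hi))
  refine ⟨n, c, hchain, fun i _ => hmemP i, ?_, ?_, hinj⟩
  · intro i hi
    apply nextPt_eq (hmemP (i+1)) (hmono i (i+1) (Nat.lt_succ_self i) hi)
    intro y hy hcy
    obtain ⟨j, hj, hcj⟩ := hsurj y hy
    have : i < j := by
      by_contra h
      exact absurd (hcj ▸ hcy) (not_lt.2 (hchain.mono_le (not_lt.1 h) hi.le))
    calc c (i+1) ≤ c j := hchain.mono_le this hj
    _ = y := hcj
  · ext x
    simp only [Finset.mem_erase, Finset.mem_image, Finset.mem_range]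
    constructor
    · rintro ⟨hxb, hx⟩
      obtain ⟨i, hi, hci⟩ := hsurj x hx
      refine ⟨i, ?_, hci⟩
      rcases Nat.lt_or_ge i n with h|h
      · exact h
      · have hin : i = n := by omega
        rw [hin, hcn] at hci
        exact absurd hci.symm hxb
    · rintro ⟨i, hi, rfl⟩
      exact ⟨fun h => absurd (hinj i n (by omega) le_rfl (h.trans hcn.symm)) (by omega),
        hmemP i⟩

/-- chain to partition -/
lemma chain_partition {a b : ℝ} {n : ℕ} {c : ℕ → ℝ} (h : chainOn a b n c) :
    IsPartition a b (Finset.image c (Finset.range (n+1))) ∧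
    ((Finset.image c (Finset.range (n+1))).erase b = Finset.image c (Finset.range n)) ∧
    (∀ i < n, nextPt (Finset.image c (Finset.range (n+1))) b (c i) = c (i + 1)) := by
  set P := Finset.image c (Finset.range (n+1)) with hP
  have hmem : ∀ i ≤ n, c i ∈ P := fun i hi =>
    Finset.mem_image.2 ⟨i, Finset.mem_range.2 (by omega), rfl⟩
  have hpart : IsPartition a b P := by
    refine ⟨h.1 ▸ hmem 0 (by omega), h.2.1 ▸ hmem n le_rfl, ?_⟩
    intro x hx
    simp only [hP, Finset.mem_image, Finset.mem_range] at hx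
    obtain ⟨i, hi, rfl⟩ := hx
    exact h.mem_Icc (by omega)
  refine ⟨hpart, ?_, ?_⟩
  · ext x
    simp only [hP, Finset.mem_erase, Finset.mem_image, Finset.mem_range]
    constructor
    · rintro ⟨hxb, i, hi, rfl⟩
      refine ⟨i, ?_, rfl⟩
      rcases Nat.lt_or_ge i n with h'|h'
      · exact h'
      · have hin : i = n := by omega
        rw [hin] at hxb
        exact absurd h.2.1 hxb
    · rintro ⟨i, hi, rfl⟩
      exact ⟨fun hh => absurd (hh ▸ h.2.1 ▸ h.mono_lt hi le_rfl) (lt_irrefl _),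
        ⟨i, by omega, rfl⟩⟩
  · intro i hi
    apply nextPt_eq (hmem (i+1) (by omega)) (h.2.2 i hi)
    intro y hy hcy
    simp only [hP, Finset.mem_image, Finset.mem_range] at hy
    obtain ⟨j, hj, rfl⟩ := hy
    have hj' : j ≤ n := by omega
    have hlt : i < j := by
      by_contra h'
      exact absurd hcy (not_lt.2 (h.mono_le (not_lt.1 h') (by omega)))
    exact h.mono_le hlt hj'

variable {E : Type*} [NormedAddCommGroup E]

noncomputable def chainSum (W : ℝ → E) (r : ℝ) (n : ℕ) (c : ℕ → ℝ) : ℝ :=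
  ∑ i ∈ Finset.range n, ‖W (c (i + 1)) - W (c i)‖ ^ r

lemma chainSum_nonneg (W : ℝ → E) (r : ℝ) (n : ℕ) (c : ℕ → ℝ) : 0 ≤ chainSum W r n c :=
  Finset.sum_nonneg fun _ _ => Real.rpow_nonneg (norm_nonneg _) _

lemma sum_erase_eq {A : Type*} [AddCommMonoid A] (g : ℝ → ℝ → A) {P : Finset ℝ} {b : ℝ}
    {n : ℕ} {c : ℕ → ℝ}
    (himg : P.erase b = Finset.image c (Finset.range n))
    (hnext : ∀ i < n, nextPt P b (c i) = c (i + 1))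
    (hinj : ∀ i j, i < n → j < n → c i = c j → i = j) :
    ∑ x ∈ P.erase b, g x (nextPt P b x) = ∑ i ∈ Finset.range n, g (c i) (c (i + 1)) := by
  rw [himg, Finset.sum_image (fun i hi j hj hij =>
    hinj i j (Finset.mem_range.1 hi) (Finset.mem_range.1 hj) hij)]
  exact Finset.sum_congr rfl fun i hi => by rw [hnext i (Finset.mem_range.1 hi)]

/-- varSum equals chainSum for the chain coming from `partition_chain`. -/
lemma varSum_eq_chainSum (W : ℝ → E) (r : ℝ) {a b : ℝ} {P : Finset ℝ}
    (hP : IsPartition a b P) :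
    ∃ n c, chainOn a b n c ∧ varSum W r b P = chainSum W r n c := by
  obtain ⟨n, c, hc, -, hnext, himg, hinj⟩ := partition_chain hP
  exact ⟨n, c, hc, sum_erase_eq (fun x y => ‖W y - W x‖ ^ r) himg hnext
    (fun i j hi hj => hinj i j hi.le hj.le)⟩

lemma chainSum_eq_varSum (W : ℝ → E) (r : ℝ) {a b : ℝ} {n : ℕ} {c : ℕ → ℝ}
    (h : chainOn a b n c) :
    ∃ P : Finset ℝ, IsPartition a b P ∧ varSum W r b P = chainSum W r n c := by
  obtain ⟨hpart, himg, hnext⟩ := chain_partition h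
  refine ⟨_, hpart, sum_erase_eq (fun x y => ‖W y - W x‖ ^ r) himg hnext ?_⟩
  intro i j hi hj hij
  by_contra hne
  rcases Nat.lt_or_ge i j with h'|h'
  · exact absurd hij (ne_of_lt (h.mono_lt h' hj.le))
  · exact absurd hij.symm (ne_of_lt (h.mono_lt (by omega) hi.le))

lemma chain_extend_left (W : ℝ → E) (r : ℝ) {u v : ℝ} {n : ℕ} {c : ℕ → ℝ}
    (h : chainOn u v n c) {l : ℝ} (hl : l < u) :
    ∃ c', chainOn l v (n + 1) c' ∧ chainSum W r n c ≤ chainSum W r (n + 1) c' := by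
  refine ⟨fun i => if i = 0 then l else c (i - 1), ⟨by simp, by simp [h.2.1], ?_⟩, ?_⟩
  · intro i hi
    rcases Nat.eq_zero_or_pos i with rfl|hpos
    · simpa [h.1] using hl
    · have h1 : i ≠ 0 := by omega
      have h2 : i + 1 ≠ 0 := by omega
      simp only [h1, h2, if_false]
      have : i - 1 + 1 = i + 1 - 1 := by omega
      rw [← this]
      exact h.2.2 (i-1) (by omega)
  · unfold chainSum
    rw [Finset.sum_range_succ']
    have heq : ∀ i ∈ Finset.range n,
        ‖W ((fun i => if i = 0 then l else c (i - 1)) (i + 1 + 1)) -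
          W ((fun i => if i = 0 then l else c (i - 1)) (i + 1))‖ ^ r
        = ‖W (c (i + 1)) - W (c i)‖ ^ r := by
      intro i _
      simp only [Nat.succ_ne_zero, if_false, Nat.add_sub_cancel]
    rw [Finset.sum_congr rfl heq]
    exact le_add_of_nonneg_right (Real.rpow_nonneg (norm_nonneg _) _)

lemma chain_extend_right (W : ℝ → E) (r : ℝ) {u v : ℝ} {n : ℕ} {c : ℕ → ℝ}
    (h : chainOn u v n c) {m : ℝ} (hm : v < m) :
    ∃ c', chainOn u m (n + 1) c' ∧ chainSum W r n c ≤ chainSum W r (n + 1) c' := by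
  refine ⟨fun i => if i ≤ n then c i else m, ⟨by simp [h.1], by simp, ?_⟩, ?_⟩
  · intro i hi
    rcases Nat.lt_or_ge i n with h'|h'
    · simp only [if_pos (by omega : i ≤ n), if_pos (by omega : i + 1 ≤ n)]
      exact h.2.2 i h'
    · have : i = n := by omega
      subst this
      simp only [if_pos le_rfl, if_neg (by omega : ¬ i + 1 ≤ i), h.2.1]
      exact hm
  · unfold chainSum
    rw [Finset.sum_range_succ]
    have heq : ∀ i ∈ Finset.range n,
        ‖W ((fun i => if i ≤ n then c i else m) (i + 1)) -
          W ((fun i => if i ≤ n then c i else m) i)‖ ^ r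
        = ‖W (c (i + 1)) - W (c i)‖ ^ r := by
      intro i hi
      have hi' := Finset.mem_range.1 hi
      simp only [if_pos (by omega : i + 1 ≤ n), if_pos (by omega : i ≤ n)]
    rw [Finset.sum_congr rfl heq]
    exact le_add_of_nonneg_right (Real.rpow_nonneg (norm_nonneg _) _)

/-- Global bound on chain sums over subintervals of `[0,T]`. -/
def GBoundOn (W : ℝ → E) (r T M : ℝ) : Prop :=
  ∀ u v (n : ℕ) (c : ℕ → ℝ), 0 ≤ u → v ≤ T → chainOn u v n c → chainSum W r n c ≤ M


lemma gboundOn_of_var' {W : ℝ → E} {r T M : ℝ}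
    (hv : ∀ P : Finset ℝ, IsPartition 0 T P → varSum W r T P ≤ M) :
    GBoundOn W r T M := by
  intro u v n c hu hv' hc
  have main : ∀ (n' : ℕ) (c' : ℕ → ℝ), chainOn 0 T n' c' → chainSum W r n' c' ≤ M := by
    intro n' c' hc'
    obtain ⟨P, hP, hPe⟩ := chainSum_eq_varSum W r hc'
    exact hPe ▸ hv P hP
  rcases eq_or_lt_of_le hu with h0|h0
  · rcases eq_or_lt_of_le hv' with h1|h1
    · subst h0 h1; exact main n c hc
    · obtain ⟨c', hc', hle⟩ := chain_extend_right W r hc h1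
      subst h0
      exact hle.trans (main _ _ hc')
  · rcases eq_or_lt_of_le hv' with h1|h1
    · obtain ⟨c', hc', hle⟩ := chain_extend_left W r hc h0
      subst h1
      exact hle.trans (main _ _ hc')
    · obtain ⟨c', hc', hle⟩ := chain_extend_left W r hc h0
      obtain ⟨c'', hc'', hle'⟩ := chain_extend_right W r hc' h1
      exact (hle.trans hle').trans (main _ _ hc'')

noncomputable def ctrl (W : ℝ → E) (r : ℝ) (u v : ℝ) : ℝ :=
  sSup {A | ∃ n c, chainOn u v n c ∧ A = chainSum W r n c}

lemma exists_chainOn {u v : ℝ} (huv : u ≤ v) : ∃ n c, chainOn u v n c := by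
  rcases eq_or_lt_of_le huv with h|h
  · exact ⟨0, fun _ => u, rfl, h ▸ rfl, fun i hi => absurd hi (Nat.not_lt_zero i)⟩
  · refine ⟨1, fun i => if i = 0 then u else v, by simp, by simp, ?_⟩
    intro i hi
    have : i = 0 := by omega
    subst this
    simpa using h

lemma ctrl_set_nonempty {u v : ℝ} (huv : u ≤ v) (W : ℝ → E) (r : ℝ) :
    {A | ∃ n c, chainOn u v n c ∧ A = chainSum W r n c}.Nonempty := by
  obtain ⟨n, c, hc⟩ := exists_chainOn huv
  exact ⟨chainSum W r n c, n, c, hc, rfl⟩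

lemma ctrl_bddAbove {W : ℝ → E} {r T M : ℝ} (hb : GBoundOn W r T M) {u v : ℝ}
    (hu : 0 ≤ u) (hv : v ≤ T) :
    BddAbove {A | ∃ n c, chainOn u v n c ∧ A = chainSum W r n c} :=
  ⟨M, by rintro A ⟨n, c, hc, rfl⟩; exact hb u v n c hu hv hc⟩

lemma chainSum_le_ctrl {W : ℝ → E} {r T M : ℝ} (hb : GBoundOn W r T M) {u v : ℝ}
    (hu : 0 ≤ u) (hv : v ≤ T) {n : ℕ} {c : ℕ → ℝ} (hc : chainOn u v n c) :
    chainSum W r n c ≤ ctrl W r u v :=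
  le_csSup (ctrl_bddAbove hb hu hv) ⟨n, c, hc, rfl⟩

lemma ctrl_nonneg {W : ℝ → E} {r T M : ℝ} (hb : GBoundOn W r T M) {u v : ℝ}
    (hu : 0 ≤ u) (hv : v ≤ T) (huv : u ≤ v) : 0 ≤ ctrl W r u v := by
  obtain ⟨n, c, hc⟩ := exists_chainOn huv
  exact (chainSum_nonneg W r n c).trans (chainSum_le_ctrl hb hu hv hc)

lemma ctrl_le {W : ℝ → E} {r T M : ℝ} (hb : GBoundOn W r T M) {u v : ℝ}
    (hu : 0 ≤ u) (hv : v ≤ T) (huv : u ≤ v) : ctrl W r u v ≤ M := by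
  apply csSup_le (ctrl_set_nonempty huv W r)
  rintro A ⟨n, c, hc, rfl⟩
  exact hb u v n c hu hv hc

lemma rpow_le_ctrl {W : ℝ → E} {r T M : ℝ} (hb : GBoundOn W r T M) {u v : ℝ}
    (hu : 0 ≤ u) (hv : v ≤ T) (huv : u < v) : ‖W v - W u‖ ^ r ≤ ctrl W r u v := by
  obtain ⟨n, c, hc⟩ : ∃ n c, chainOn u v n c ∧ chainSum W r n c = ‖W v - W u‖ ^ r := by
    refine ⟨1, fun i => if i = 0 then u else v, ⟨by simp, by simp, ?_⟩, ?_⟩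
    · intro i hi
      have : i = 0 := by omega
      subst this
      simpa using huv
    · simp [chainSum]
  exact hc.2 ▸ chainSum_le_ctrl hb hu hv hc.1

lemma chain_concat (W : ℝ → E) (r : ℝ) {u m v : ℝ} {n1 n2 : ℕ} {c1 c2 : ℕ → ℝ}
    (h1 : chainOn u m n1 c1) (h2 : chainOn m v n2 c2) :
    ∃ c, chainOn u v (n1 + n2) c ∧
      chainSum W r (n1 + n2) c = chainSum W r n1 c1 + chainSum W r n2 c2 := by
  set c : ℕ → ℝ := fun i => if i < n1 then c1 i else c2 (i - n1) with hcdef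
  have hvals1 : ∀ i ≤ n1, c i = c1 i := by
    intro i hi
    rcases Nat.lt_or_ge i n1 with h|h
    · simp [hcdef, h]
    · have : i = n1 := by omega
      subst this
      simp [hcdef, h1.2.1, h2.1]
  have hvals2 : ∀ i, n1 ≤ i → c i = c2 (i - n1) := by
    intro i hi
    simp [hcdef, Nat.not_lt.2 hi]
  refine ⟨c, ⟨?_, ?_, ?_⟩, ?_⟩
  · rcases Nat.eq_zero_or_pos n1 with h|h
    · rw [hvals2 0 (by omega)]
      simp [h2.1, ← h1.1, ← h1.2.1, h]
    · rw [hvals1 0 (by omega)]; exact h1.1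
  · rw [hvals2 (n1 + n2) (by omega)]
    simpa using h2.2.1
  · intro i hi
    rcases Nat.lt_or_ge (i+1) n1 with h|h
    · rw [hvals1 i (by omega), hvals1 (i+1) (by omega)]
      exact h1.2.2 i (by omega)
    · rcases Nat.lt_or_ge i n1 with h'|h'
      · rw [hvals1 i (by omega), hvals2 (i+1) (by omega)]
        have : i + 1 - n1 = 0 := by omega
        rw [this, h2.1]
        have : i + 1 = n1 := by omega
        calc c1 i < c1 (i+1) := h1.2.2 i (by omega)
        _ = m := by rw [this, h1.2.1]
      · rw [hvals2 i (by omega), hvals2 (i+1) (by omega)]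
        have : i + 1 - n1 = (i - n1) + 1 := by omega
        rw [this]
        exact h2.2.2 (i - n1) (by omega)
  · unfold chainSum
    rw [Finset.sum_range_add]
    congr 1
    · apply Finset.sum_congr rfl
      intro i hi
      have hi' := Finset.mem_range.1 hi
      rw [hvals1 i (by omega), hvals1 (i+1) (by omega)]
    · apply Finset.sum_congr rfl
      intro i hi
      have hi' := Finset.mem_range.1 hi
      rw [hvals2 (n1 + i) (by omega), hvals2 (n1 + i + 1) (by omega)]
      have e1 : n1 + i - n1 = i := by omega
      have e2 : n1 + i + 1 - n1 = i + 1 := by omega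
      rw [e1, e2]

lemma ctrl_superadd {W : ℝ → E} {r T M : ℝ} (hb : GBoundOn W r T M) {u m v : ℝ}
    (hu : 0 ≤ u) (hv : v ≤ T) (hum : u ≤ m) (hmv : m ≤ v) :
    ctrl W r u m + ctrl W r m v ≤ ctrl W r u v := by
  have hm0 : 0 ≤ m := hu.trans hum
  have hmT : m ≤ T := hmv.trans hv
  have key : ∀ A ∈ {A | ∃ n c, chainOn u m n c ∧ A = chainSum W r n c},
      ∀ B ∈ {B | ∃ n c, chainOn m v n c ∧ B = chainSum W r n c},
      A + B ≤ ctrl W r u v := by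
    rintro A ⟨n1, c1, hc1, rfl⟩ B ⟨n2, c2, hc2, rfl⟩
    obtain ⟨c, hc, hsum⟩ := chain_concat W r hc1 hc2
    exact hsum ▸ chainSum_le_ctrl hb hu hv hc
  have h1 : ctrl W r u m ≤ ctrl W r u v - ctrl W r m v := by
    apply csSup_le (ctrl_set_nonempty hum W r)
    intro A hA
    have h2 : ctrl W r m v ≤ ctrl W r u v - A := by
      apply csSup_le (ctrl_set_nonempty hmv W r)
      intro B hB
      linarith [key A hA B hB]
    linarith
  linarith

lemma ctrl_mono {W : ℝ → E} {r T M : ℝ} (hb : GBoundOn W r T M) {u' u v v' : ℝ}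
    (hu' : 0 ≤ u') (hv' : v' ≤ T) (h1 : u' ≤ u) (h2 : u ≤ v) (h3 : v ≤ v') :
    ctrl W r u v ≤ ctrl W r u' v' := by
  have c1 : ctrl W r u v + ctrl W r v v' ≤ ctrl W r u v' :=
    ctrl_superadd hb (hu'.trans h1) hv' h2 h3
  have c2 : ctrl W r u' u + ctrl W r u v' ≤ ctrl W r u' v' :=
    ctrl_superadd hb hu' hv' h1 (h2.trans h3)
  have n1 : 0 ≤ ctrl W r v v' := ctrl_nonneg hb ((hu'.trans h1).trans h2) hv' h3
  have n2 : 0 ≤ ctrl W r u' u := ctrl_nonneg hb hu' (((h2.trans h3)).trans hv') h1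
  linarith

section rpowlemmas

variable {ι : Type*}

lemma sum_rpow_le_rpow_sum {s : Finset ι} {f : ι → ℝ} (hf : ∀ i ∈ s, 0 ≤ f i) {r : ℝ}
    (hr : 1 ≤ r) : ∑ i ∈ s, f i ^ r ≤ (∑ i ∈ s, f i) ^ r := by
  set S := ∑ i ∈ s, f i with hS
  have hS0 : 0 ≤ S := Finset.sum_nonneg hf
  rcases eq_or_lt_of_le hS0 with h|h
  · have hz : ∀ i ∈ s, f i = 0 := by
      intro i hi
      exact (Finset.sum_eq_zero_iff_of_nonneg hf).1 h.symm i hi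
    have : ∀ i ∈ s, f i ^ r = 0 := fun i hi => by
      rw [hz i hi, Real.zero_rpow (by linarith : r ≠ 0)]
    rw [Finset.sum_congr rfl this, Finset.sum_const_zero, ← h,
      Real.zero_rpow (by linarith : r ≠ 0)]
  · have key : ∀ i ∈ s, f i ^ r ≤ S ^ (r - 1) * f i := by
      intro i hi
      have h1 : f i ^ r = f i ^ (r - 1) * f i := by
        have h2 := Real.rpow_add' (hf i hi) (show r - 1 + 1 ≠ 0 from ne_of_gt (by linarith))
        rw [Real.rpow_one] at h2
        rw [show r - 1 + 1 = r from by ring] at h2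
        exact h2
      rw [h1]
      apply mul_le_mul_of_nonneg_right _ (hf i hi)
      exact Real.rpow_le_rpow (hf i hi) (Finset.single_le_sum hf hi) (by linarith)
    calc ∑ i ∈ s, f i ^ r ≤ ∑ i ∈ s, S ^ (r - 1) * f i := Finset.sum_le_sum key
    _ = S ^ (r - 1) * S := by rw [← Finset.mul_sum]
    _ = S ^ r := by
        have h2 := Real.rpow_add' hS0 (show r - 1 + 1 ≠ 0 from ne_of_gt (by linarith))
        rw [Real.rpow_one] at h2
        rw [show r - 1 + 1 = r from by ring] at h2
        exact h2.symm

lemma hoelder_pair_one {s : Finset ι} {f g : ι → ℝ} (hf : ∀ i ∈ s, 0 ≤ f i)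
    (hg : ∀ i ∈ s, 0 ≤ g i) {α β : ℝ} (hα : 0 < α) (hβ : 0 < β) (hαβ : α + β = 1) :
    ∑ i ∈ s, f i ^ α * g i ^ β ≤ (∑ i ∈ s, f i) ^ α * (∑ i ∈ s, g i) ^ β := by
  set F := ∑ i ∈ s, f i with hF
  set G := ∑ i ∈ s, g i with hG
  have hF0 : 0 ≤ F := Finset.sum_nonneg hf
  have hG0 : 0 ≤ G := Finset.sum_nonneg hg
  rcases eq_or_lt_of_le hF0 with h|h
  · have hz : ∀ i ∈ s, f i = 0 := fun i hi => (Finset.sum_eq_zero_iff_of_nonneg hf).1 h.symm i hi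
    have : ∀ i ∈ s, f i ^ α * g i ^ β = 0 := fun i hi => by
      rw [hz i hi, Real.zero_rpow hα.ne', zero_mul]
    rw [Finset.sum_congr rfl this, Finset.sum_const_zero, ← h, Real.zero_rpow hα.ne', zero_mul]
  rcases eq_or_lt_of_le hG0 with h'|h'
  · have hz : ∀ i ∈ s, g i = 0 := fun i hi => (Finset.sum_eq_zero_iff_of_nonneg hg).1 h'.symm i hi
    have : ∀ i ∈ s, f i ^ α * g i ^ β = 0 := fun i hi => by
      rw [hz i hi, Real.zero_rpow hβ.ne', mul_zero]
    rw [Finset.sum_congr rfl this, Finset.sum_const_zero, ← h', Real.zero_rpow hβ.ne', mul_zero]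
  have key : ∀ i ∈ s, f i ^ α * g i ^ β ≤ F ^ α * G ^ β * (α * (f i / F) + β * (g i / G)) := by
    intro i hi
    have h1 : f i ^ α * g i ^ β = F ^ α * G ^ β * ((f i / F) ^ α * (g i / G) ^ β) := by
      rw [Real.div_rpow (hf i hi) hF0, Real.div_rpow (hg i hi) hG0]
      field_simp
    rw [h1]
    apply mul_le_mul_of_nonneg_left _ (mul_nonneg (Real.rpow_nonneg hF0 _) (Real.rpow_nonneg hG0 _))
    exact Real.geom_mean_le_arith_mean2_weighted hα.le hβ.le
      (div_nonneg (hf i hi) hF0) (div_nonneg (hg i hi) hG0) hαβ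
  calc ∑ i ∈ s, f i ^ α * g i ^ β
      ≤ ∑ i ∈ s, F ^ α * G ^ β * (α * (f i / F) + β * (g i / G)) := Finset.sum_le_sum key
  _ = F ^ α * G ^ β * (α * (F / F) + β * (G / G)) := by
      rw [← Finset.mul_sum]
      congr 1
      rw [Finset.sum_add_distrib, ← Finset.mul_sum, ← Finset.mul_sum, ← Finset.sum_div,
        ← Finset.sum_div]
  _ = F ^ α * G ^ β := by
      have hone : α * (F / F) + β * (G / G) = 1 := by
        rw [div_self h.ne', div_self h'.ne', mul_one, mul_one, hαβ]
      rw [hone, mul_one]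

lemma hoelder_pair {s : Finset ι} {f g : ι → ℝ} (hf : ∀ i ∈ s, 0 ≤ f i)
    (hg : ∀ i ∈ s, 0 ≤ g i) {α β : ℝ} (hα : 0 < α) (hβ : 0 < β) (hαβ : 1 ≤ α + β) :
    ∑ i ∈ s, f i ^ α * g i ^ β ≤ (∑ i ∈ s, f i) ^ α * (∑ i ∈ s, g i) ^ β := by
  set r := α + β with hr
  have hr0 : 0 < r := by positivity
  have expand : ∀ x : ℝ, 0 ≤ x → (x ^ (α / r)) ^ r = x ^ α := by
    intro x hx
    rw [← Real.rpow_mul hx, div_mul_cancel₀ _ hr0.ne']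
  have expand' : ∀ x : ℝ, 0 ≤ x → (x ^ (β / r)) ^ r = x ^ β := by
    intro x hx
    rw [← Real.rpow_mul hx, div_mul_cancel₀ _ hr0.ne']
  have hterm : ∀ i ∈ s, f i ^ α * g i ^ β = (f i ^ (α / r) * g i ^ (β / r)) ^ r := by
    intro i hi
    rw [Real.mul_rpow (Real.rpow_nonneg (hf i hi) _) (Real.rpow_nonneg (hg i hi) _),
      expand _ (hf i hi), expand' _ (hg i hi)]
  rw [Finset.sum_congr rfl hterm]
  calc ∑ i ∈ s, (f i ^ (α / r) * g i ^ (β / r)) ^ r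
      ≤ (∑ i ∈ s, f i ^ (α / r) * g i ^ (β / r)) ^ r :=
        sum_rpow_le_rpow_sum (fun i hi =>
          mul_nonneg (Real.rpow_nonneg (hf i hi) _) (Real.rpow_nonneg (hg i hi) _)) hαβ
  _ ≤ ((∑ i ∈ s, f i) ^ (α / r) * (∑ i ∈ s, g i) ^ (β / r)) ^ r := by
      apply Real.rpow_le_rpow
        (Finset.sum_nonneg fun i hi =>
          mul_nonneg (Real.rpow_nonneg (hf i hi) _) (Real.rpow_nonneg (hg i hi) _))
        (hoelder_pair_one hf hg (by positivity) (by positivity)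
          (by field_simp; linarith)) hr0.le
  _ = (∑ i ∈ s, f i) ^ α * (∑ i ∈ s, g i) ^ β := by
      rw [Real.mul_rpow (Real.rpow_nonneg (Finset.sum_nonneg hf) _)
        (Real.rpow_nonneg (Finset.sum_nonneg hg) _),
        expand _ (Finset.sum_nonneg hf), expand' _ (Finset.sum_nonneg hg)]

lemma add_rpow_le {u v θ : ℝ} (hu : 0 ≤ u) (hv : 0 ≤ v) (hθ : 0 ≤ θ) :
    (u + v) ^ θ ≤ 2 ^ θ * (u ^ θ + v ^ θ) := by
  have h1 : u + v ≤ 2 * max u v := by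
    rcases le_total u v with h|h
    · simp [max_eq_right h]; linarith
    · simp [max_eq_left h]; linarith
  calc (u + v) ^ θ ≤ (2 * max u v) ^ θ :=
        Real.rpow_le_rpow (by linarith) h1 hθ
  _ = 2 ^ θ * (max u v) ^ θ := Real.mul_rpow (by norm_num) (le_max_iff.2 (Or.inl hu))
  _ ≤ 2 ^ θ * (u ^ θ + v ^ θ) := by
      apply mul_le_mul_of_nonneg_left _ (Real.rpow_nonneg (by norm_num) _)
      rcases le_total u v with h|h
      · rw [max_eq_right h]
        have := Real.rpow_nonneg hu θ
        linarith
      · rw [max_eq_left h]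
        have := Real.rpow_nonneg hv θ
        linarith

lemma prod_rpow_le {a b ω e1 e2 : ℝ} (ha : 0 ≤ a) (hb : 0 ≤ b) (haw : a ≤ ω) (hbw : b ≤ ω)
    (he1 : 0 < e1) (he2 : 0 < e2) : a ^ e1 * b ^ e2 ≤ ω ^ (e1 + e2) := by
  have hw : 0 ≤ ω := ha.trans haw
  calc a ^ e1 * b ^ e2 ≤ ω ^ e1 * ω ^ e2 :=
        mul_le_mul (Real.rpow_le_rpow ha haw he1.le) (Real.rpow_le_rpow hb hbw he2.le)
          (Real.rpow_nonneg hb _) (Real.rpow_nonneg hw _)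
  _ = ω ^ (e1 + e2) := (Real.rpow_add' hw (by positivity)).symm

end rpowlemmas

section matrixlemmas

variable {d : ℕ}

def T2 (a b : EuclideanSpace ℝ (Fin d)) : Fin d → Fin d → ℝ := fun i j => a i * b j

lemma coord_le_norm (a : EuclideanSpace ℝ (Fin d)) (i : Fin d) : |a i| ≤ ‖a‖ := by
  rw [EuclideanSpace.norm_eq]
  rw [← Real.sqrt_sq_eq_abs]
  apply Real.sqrt_le_sqrt
  have : |a i| ^ 2 ≤ ∑ j : Fin d, ‖a j‖ ^ 2 := by
    have := Finset.single_le_sum (f := fun j => ‖a j‖ ^ 2)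
      (fun j _ => by positivity) (Finset.mem_univ i)
    simpa [Real.norm_eq_abs, sq_abs] using this
  simpa [sq_abs] using this

lemma T2_norm_le (a b : EuclideanSpace ℝ (Fin d)) : ‖T2 a b‖ ≤ ‖a‖ * ‖b‖ := by
  rw [pi_norm_le_iff_of_nonneg (mul_nonneg (norm_nonneg _) (norm_nonneg _))]
  intro i
  rw [pi_norm_le_iff_of_nonneg (mul_nonneg (norm_nonneg _) (norm_nonneg _))]
  intro j
  rw [Real.norm_eq_abs, T2, abs_mul]
  exact mul_le_mul (coord_le_norm a i) (coord_le_norm b j) (abs_nonneg _) (norm_nonneg _)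

lemma T2_sub_left (a a' b : EuclideanSpace ℝ (Fin d)) :
    T2 a b - T2 a' b = T2 (a - a') b := by
  funext i j
  simp [T2, sub_mul]

end matrixlemmas

section omegachain

lemma mono_chain_le {m : ℕ} {e : ℕ → ℝ} (hmono : ∀ j < m, e j ≤ e (j + 1)) :
    ∀ i j, i ≤ j → j ≤ m → e i ≤ e j := by
  intro i j hij hj
  induction j with
  | zero => simp_all
  | succ k ih =>
    rcases Nat.lt_or_ge i (k + 1) with h|h
    · exact le_trans (ih (by omega) (by omega)) (hmono k (by omega))
    · have : i = k + 1 := by omega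
      simp [this]

lemma omega_chain_sum {T : ℝ} {ω : ℝ → ℝ → ℝ}
    (hsuper : ∀ u m v, 0 ≤ u → u ≤ m → m ≤ v → v ≤ T → ω u m + ω m v ≤ ω u v)
    (hnn : ∀ u v, 0 ≤ u → u ≤ v → v ≤ T → 0 ≤ ω u v)
    {m : ℕ} {e : ℕ → ℝ} (hmono : ∀ j < m, e j ≤ e (j + 1)) (h0 : 0 ≤ e 0) (hT : e m ≤ T) :
    ∑ j ∈ Finset.range m, ω (e j) (e (j + 1)) ≤ ω (e 0) (e m) := by
  induction m with
  | zero => simpa using hnn _ _ h0 le_rfl hT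
  | succ k ih =>
    rw [Finset.sum_range_succ]
    have hmono' : ∀ j < k, e j ≤ e (j + 1) := fun j hj => hmono j (by omega)
    have hek : e k ≤ e (k + 1) := hmono k (by omega)
    have hik : e k ≤ T := hek.trans hT
    have h0k : 0 ≤ e k := h0.trans (mono_chain_le hmono' 0 k (by omega) le_rfl)
    calc ∑ j ∈ Finset.range k, ω (e j) (e (j + 1)) + ω (e k) (e (k + 1))
        ≤ ω (e 0) (e k) + ω (e k) (e (k + 1)) := by
          have := ih hmono' hik
          linarith
    _ ≤ ω (e 0) (e (k + 1)) :=
        hsuper _ _ _ h0 (mono_chain_le hmono' 0 k (by omega) le_rfl) hek hT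

end omegachain

variable {E : Type*} [NormedAddCommGroup E]

lemma tendsto_minus {Y : ℝ → E} {T : ℝ} (hYc : Cadlag Y 0 T) {x : ℝ}
    (hx : 0 < x) (hxT : x ≤ T) :
    Filter.Tendsto Y (nhdsWithin x (Set.Iio x)) (nhds (minus Y 0 x)) := by
  obtain ⟨L, hL⟩ := hYc.2 x ⟨hx, hxT⟩
  have h : minus Y 0 x = L := by
    rw [minus, if_neg (not_le.2 hx)]
    exact leftLim_eq_of_tendsto hL
  rw [h]; exact hL

lemma exists_approx {Y : ℝ → E} {T : ℝ} (hYc : Cadlag Y 0 T) {x l δ : ℝ}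
    (hx : 0 < x) (hxT : x ≤ T) (hl : l < x) (hδ : 0 < δ) :
    ∃ y, l < y ∧ y < x ∧ ‖Y y - minus Y 0 x‖ < δ := by
  have h1 := tendsto_minus hYc hx hxT
  have h2 : ∀ᶠ y in nhdsWithin x (Set.Iio x), ‖Y y - minus Y 0 x‖ < δ := by
    have := Metric.tendsto_nhds.1 h1 δ hδ
    simpa [dist_eq_norm] using this
  have h3 : ∀ᶠ y in nhdsWithin x (Set.Iio x), l < y ∧ y < x := by
    have hmem : Set.Ioo l x ∈ nhdsWithin x (Set.Iio x) := Ioo_mem_nhdsLT_of_mem ⟨hl, le_rfl⟩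
    exact Filter.eventually_of_mem hmem (fun y hy => ⟨hy.1, hy.2⟩)
  obtain ⟨y, hy⟩ := (h3.and h2).exists
  exact ⟨y, hy.1.1, hy.1.2, hy.2⟩

lemma rpow_approx {a qq ε : ℝ} (hq : 0 ≤ qq) (hε : 0 < ε) :
    ∃ δ > 0, ∀ s : ℝ, |s - a| < δ → a ^ qq < s ^ qq + ε := by
  have hc := Real.continuousAt_rpow_const a qq (Or.inr hq)
  rw [Metric.continuousAt_iff] at hc
  obtain ⟨δ, hδ, H⟩ := hc ε hε
  refine ⟨δ, hδ, fun s hs => ?_⟩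
  have h2 := H (show dist s a < δ by rwa [Real.dist_eq])
  rw [Real.dist_eq] at h2
  have h3 := abs_sub_lt_iff.1 h2
  linarith [h3.2]

lemma gbound_nonneg {W : ℝ → E} {r T M : ℝ} (hT : 0 ≤ T) (hb : GBoundOn W r T M) : 0 ≤ M := by
  have := hb 0 0 0 (fun _ => 0) le_rfl hT ⟨rfl, rfl, fun i hi => absurd hi (Nat.not_lt_zero i)⟩
  simpa [chainSum] using this

lemma gbound_minus {Y : ℝ → E} {T MY qq : ℝ} (hT : 0 < T) (hq : 0 ≤ qq)
    (hYc : Cadlag Y 0 T) (hY : GBoundOn Y qq T MY) :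
    GBoundOn (minus Y 0) qq T MY := by
  intro u v n c hu hv hc
  rcases Nat.eq_zero_or_pos n with rfl|hn
  · simpa [chainSum] using gbound_nonneg hT.le hY
  apply le_of_forall_pos_le_add
  intro ε hε
  have hεn : 0 < ε / n := by positivity
  have hδi : ∀ i : ℕ, ∃ δ > 0, ∀ s : ℝ,
      |s - ‖minus Y 0 (c (i+1)) - minus Y 0 (c i)‖| < δ →
      ‖minus Y 0 (c (i+1)) - minus Y 0 (c i)‖ ^ qq < s ^ qq + ε / n :=
    fun i => rpow_approx hq hεn
  choose δf hδf0 hδf using hδi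
  have hrne : (Finset.range n).Nonempty := Finset.nonempty_range_iff.2 (by omega)
  set δ := (Finset.range n).inf' hrne δf with hδdef
  have hδ0 : 0 < δ := (Finset.lt_inf'_iff hrne).2 (fun i _ => hδf0 i)
  have hδle : ∀ i ∈ Finset.range n, δ ≤ δf i := fun i hi => Finset.inf'_le _ hi
  have hc0 : 0 ≤ c 0 := hc.1 ▸ hu
  have hcpos : ∀ i, 1 ≤ i → i ≤ n → 0 < c i := fun i h1 h2 =>
    lt_of_le_of_lt hc0 (hc.mono_lt (by omega) h2)
  have hciT : ∀ i, i ≤ n → c i ≤ T := fun i hi =>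
    le_trans (hc.2.1 ▸ hc.mono_le hi le_rfl) hv
  have hy : ∀ i, ∃ y, i ≤ n → (0 ≤ y ∧ y ≤ c i ∧ (0 < c i → y < c i) ∧
      (1 ≤ i → c (i-1) < y) ∧ ‖Y y - minus Y 0 (c i)‖ < δ / 2) := by
    intro i
    rcases Nat.lt_or_ge n i with h|h
    · exact ⟨0, fun hin => absurd hin (by omega)⟩
    have hc0i : 0 ≤ c i := le_trans hc0 (hc.mono_le (Nat.zero_le i) h)
    rcases le_or_gt (c i) 0 with h0|h0
    · refine ⟨c i, fun _ => ⟨hc0i, le_rfl, fun hcc => absurd hcc (not_lt.2 h0), ?_, ?_⟩⟩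
      · intro h1; exact absurd (hcpos i h1 h) (not_lt.2 h0)
      · have hci : c i = 0 := le_antisymm h0 hc0i
        rw [hci]
        simp only [minus, if_pos le_rfl, sub_self, norm_zero]
        positivity
    · have hl0 : 0 ≤ (if i = 0 then c 0 / 2 else c (i-1)) := by
        rcases Nat.eq_zero_or_pos i with rfl|hi
        · rw [if_pos rfl]; linarith
        · rw [if_neg (by omega)]
          exact le_trans hc0 (hc.mono_le (Nat.zero_le _) (by omega))
      have hlx : (if i = 0 then c 0 / 2 else c (i-1)) < c i := by
        rcases Nat.eq_zero_or_pos i with rfl|hi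
        · rw [if_pos rfl]; linarith
        · rw [if_neg (by omega)]
          have he : i - 1 + 1 = i := by omega
          have := hc.2.2 (i-1) (by omega)
          rwa [he] at this
      obtain ⟨y, hy1, hy2, hy3⟩ := exists_approx hYc h0 (hciT i h) hlx (show (0:ℝ) < δ/2 by positivity)
      refine ⟨y, fun _ => ⟨le_trans hl0 hy1.le, hy2.le, fun _ => hy2, ?_, hy3⟩⟩
      intro h1
      have hli : (if i = 0 then c 0 / 2 else c (i-1)) = c (i-1) := if_neg (by omega)
      rw [← hli]
      exact hy1
  choose yf hyf using hy
  have hyprop := fun i (hi : i ≤ n) => hyf i hi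
  have hychain : chainOn (yf 0) (yf n) n yf := by
    refine ⟨rfl, rfl, ?_⟩
    intro i hi
    calc yf i ≤ c i := (hyprop i (by omega)).2.1
    _ < yf (i+1) := by
        have := (hyprop (i+1) (by omega)).2.2.2.1 (by omega)
        simpa using this
  have hS : chainSum Y qq n yf ≤ MY :=
    hY (yf 0) (yf n) n yf (hyprop 0 (by omega)).1
      (le_trans (hyprop n le_rfl).2.1 (hciT n le_rfl)) hychain
  have hterm : ∀ i ∈ Finset.range n,
      ‖minus Y 0 (c (i+1)) - minus Y 0 (c i)‖ ^ qq ≤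
      ‖Y (yf (i+1)) - Y (yf i)‖ ^ qq + ε / n := by
    intro i hi
    have hi' := Finset.mem_range.1 hi
    apply le_of_lt
    apply hδf i
    have habs : |‖Y (yf (i+1)) - Y (yf i)‖ - ‖minus Y 0 (c (i+1)) - minus Y 0 (c i)‖|
        ≤ ‖(Y (yf (i+1)) - minus Y 0 (c (i+1))) - (Y (yf i) - minus Y 0 (c i))‖ := by
      have := abs_norm_sub_norm_le (Y (yf (i+1)) - Y (yf i))
        (minus Y 0 (c (i+1)) - minus Y 0 (c i))
      have heq : (Y (yf (i+1)) - Y (yf i)) - (minus Y 0 (c (i+1)) - minus Y 0 (c i))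
          = (Y (yf (i+1)) - minus Y 0 (c (i+1))) - (Y (yf i) - minus Y 0 (c i)) := by abel
      rwa [heq] at this
    apply lt_of_le_of_lt habs
    calc ‖(Y (yf (i+1)) - minus Y 0 (c (i+1))) - (Y (yf i) - minus Y 0 (c i))‖
        ≤ ‖Y (yf (i+1)) - minus Y 0 (c (i+1))‖ + ‖Y (yf i) - minus Y 0 (c i)‖ := norm_sub_le _ _
    _ < δ / 2 + δ / 2 := add_lt_add ((hyprop (i+1) (by omega)).2.2.2.2) ((hyprop i (by omega)).2.2.2.2)
    _ = δ := by ring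
    _ ≤ δf i := hδle i hi
  calc chainSum (minus Y 0) qq n c
      ≤ ∑ i ∈ Finset.range n, (‖Y (yf (i+1)) - Y (yf i)‖ ^ qq + ε / n) :=
        Finset.sum_le_sum hterm
  _ = chainSum Y qq n yf + n * (ε / n) := by
      rw [Finset.sum_add_distrib, Finset.sum_const, Finset.card_range]
      simp [chainSum, nsmul_eq_mul]
  _ ≤ MY + ε := by
      have hnn : (n:ℝ) ≠ 0 := by positivity
      have : (n:ℝ) * (ε / n) = ε := by field_simp
      rw [this]
      linarith

lemma jump_sum_core {Y : ℝ → E} {T MY qq : ℝ} (hT : 0 < T) (hq : 0 ≤ qq)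
    (hYc : Cadlag Y 0 T) (hY : GBoundOn Y qq T MY) {u v : ℝ} {n : ℕ} {c : ℕ → ℝ}
    (hu : 0 < u) (hv : v ≤ T) (hc : chainOn u v n c) (hn : 0 < n) :
    ∑ i ∈ Finset.range n, ‖Y (c i) - minus Y 0 (c i)‖ ^ qq ≤ MY := by
  apply le_of_forall_pos_le_add
  intro ε hε
  have hεn : 0 < ε / n := by positivity
  have hδi : ∀ i : ℕ, ∃ δ > 0, ∀ s : ℝ,
      |s - ‖Y (c i) - minus Y 0 (c i)‖| < δ →
      ‖Y (c i) - minus Y 0 (c i)‖ ^ qq < s ^ qq + ε / n :=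
    fun i => rpow_approx hq hεn
  choose δf hδf0 hδf using hδi
  have hrne : (Finset.range n).Nonempty := Finset.nonempty_range_iff.2 (by omega)
  set δ := (Finset.range n).inf' hrne δf with hδdef
  have hδ0 : 0 < δ := (Finset.lt_inf'_iff hrne).2 (fun i _ => hδf0 i)
  have hδle : ∀ i ∈ Finset.range n, δ ≤ δf i := fun i hi => Finset.inf'_le _ hi
  have hc0 : 0 < c 0 := hc.1 ▸ hu
  have hcpos : ∀ i, i ≤ n → 0 < c i := fun i hi =>
    lt_of_lt_of_le hc0 (hc.mono_le (Nat.zero_le i) hi)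
  have hciT : ∀ i, i ≤ n → c i ≤ T := fun i hi =>
    le_trans (hc.2.1 ▸ hc.mono_le hi le_rfl) hv
  have hy : ∀ i, ∃ y, i ≤ n → ((if i = 0 then c 0 / 2 else c (i-1)) < y ∧ y < c i ∧
      ‖Y y - minus Y 0 (c i)‖ < δ) := by
    intro i
    rcases Nat.lt_or_ge n i with h|h
    · exact ⟨0, fun hin => absurd hin (by omega)⟩
    have hlx : (if i = 0 then c 0 / 2 else c (i-1)) < c i := by
      rcases Nat.eq_zero_or_pos i with rfl|hi
      · rw [if_pos rfl]; linarith
      · rw [if_neg (by omega)]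
        have he : i - 1 + 1 = i := by omega
        have := hc.2.2 (i-1) (by omega)
        rwa [he] at this
    obtain ⟨y, hy1, hy2, hy3⟩ :=
      exists_approx hYc (hcpos i h) (hciT i h) hlx (show (0:ℝ) < δ by positivity)
    exact ⟨y, fun _ => ⟨hy1, hy2, hy3⟩⟩
  choose yf hyf using hy
  have hyprop := fun i (hi : i ≤ n) => hyf i hi
  have hy0 : 0 < yf 0 := by
    have := (hyprop 0 (by omega)).1
    rw [if_pos rfl] at this
    linarith
  -- interleaved chain
  set N := 2 * n - 1 with hN
  set w : ℕ → ℝ := fun m => if Even m then yf (m / 2) else c (m / 2) with hw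
  have hweven : ∀ k, w (2 * k) = yf k := by
    intro k
    simp only [hw, even_two_mul k, if_pos]
    norm_num
  have hwodd : ∀ k, w (2 * k + 1) = c k := by
    intro k
    have : ¬ Even (2 * k + 1) := by
      simp [Nat.even_add_one, even_two_mul]
    simp only [hw, if_neg this]
    norm_num
    congr 1
    omega
  have hwchain : chainOn (yf 0) (c (n-1)) N w := by
    refine ⟨by simpa using hweven 0, ?_, ?_⟩
    · have : N = 2 * (n-1) + 1 := by omega
      rw [this, hwodd]
    · intro m hm
      rcases Nat.even_or_odd m with ⟨k, hk⟩|⟨k, hk⟩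
      · have hm2 : m = 2 * k := by omega
        have hkn : k ≤ n := by omega
        rw [hm2, hweven k, show 2 * k + 1 = 2 * k + 1 from rfl, hwodd k]
        exact (hyprop k hkn).2.1
      · have hm2 : m = 2 * k + 1 := by omega
        have hkn : k + 1 ≤ n := by omega
        rw [hm2, hwodd k, show 2 * k + 1 + 1 = 2 * (k+1) from by ring, hweven (k+1)]
        have h1 := (hyprop (k+1) hkn).1
        rw [if_neg (by omega)] at h1
        simpa using h1
  have hSw : chainSum Y qq N w ≤ MY :=
    hY (yf 0) (c (n-1)) N w hy0.le (hciT (n-1) (by omega)) hwchain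
  -- termwise bound
  have hterm : ∀ i ∈ Finset.range n,
      ‖Y (c i) - minus Y 0 (c i)‖ ^ qq ≤ ‖Y (c i) - Y (yf i)‖ ^ qq + ε / n := by
    intro i hi
    have hi' := Finset.mem_range.1 hi
    apply le_of_lt
    apply hδf i
    have habs : |‖Y (c i) - Y (yf i)‖ - ‖Y (c i) - minus Y 0 (c i)‖|
        ≤ ‖Y (yf i) - minus Y 0 (c i)‖ := by
      have h1 := abs_norm_sub_norm_le (Y (c i) - Y (yf i)) (Y (c i) - minus Y 0 (c i))
      have heq : (Y (c i) - Y (yf i)) - (Y (c i) - minus Y 0 (c i))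
          = minus Y 0 (c i) - Y (yf i) := by abel
      rw [heq, norm_sub_rev (minus Y 0 (c i)) (Y (yf i))] at h1
      exact h1
    exact lt_of_le_of_lt habs (lt_of_lt_of_le ((hyprop i (by omega)).2.2) (hδle i hi))
  -- sum over even positions
  have hsub : ∑ i ∈ Finset.range n, ‖Y (c i) - Y (yf i)‖ ^ qq ≤ chainSum Y qq N w := by
    have himg : ∀ i ∈ Finset.range n,
        ‖Y (c i) - Y (yf i)‖ ^ qq = ‖Y (w (2 * i + 1)) - Y (w (2 * i))‖ ^ qq := by
      intro i hi
      rw [hweven i, hwodd i]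
    rw [Finset.sum_congr rfl himg]
    have hinj : ∀ i ∈ Finset.range n, ∀ j ∈ Finset.range n, 2 * i = 2 * j → i = j := by
      intro i _ j _ h; omega
    apply le_trans (le_of_eq (Eq.symm (Finset.sum_image (g := fun i => 2 * i)
      (f := fun m => ‖Y (w (m + 1)) - Y (w m)‖ ^ qq) hinj)))
    apply Finset.sum_le_sum_of_subset_of_nonneg
    · intro m hm
      simp only [Finset.mem_image, Finset.mem_range] at hm ⊢
      obtain ⟨i, hi, rfl⟩ := hm
      omega
    · intro m _ _
      exact Real.rpow_nonneg (norm_nonneg _) _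
  calc ∑ i ∈ Finset.range n, ‖Y (c i) - minus Y 0 (c i)‖ ^ qq
      ≤ ∑ i ∈ Finset.range n, (‖Y (c i) - Y (yf i)‖ ^ qq + ε / n) := Finset.sum_le_sum hterm
  _ = (∑ i ∈ Finset.range n, ‖Y (c i) - Y (yf i)‖ ^ qq) + n * (ε / n) := by
      rw [Finset.sum_add_distrib, Finset.sum_const, Finset.card_range, nsmul_eq_mul]
  _ ≤ MY + ε := by
      have hnn : (n:ℝ) ≠ 0 := by positivity
      have hee : (n:ℝ) * (ε / n) = ε := by field_simp
      rw [hee]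
      linarith [le_trans hsub hSw]

lemma jump_sum_bound {Y : ℝ → E} {T MY qq : ℝ} (hT : 0 < T) (hq : 0 < qq)
    (hYc : Cadlag Y 0 T) (hY : GBoundOn Y qq T MY) {u v : ℝ} {n : ℕ} {c : ℕ → ℝ}
    (hu : 0 ≤ u) (hv : v ≤ T) (hc : chainOn u v n c) :
    ∑ i ∈ Finset.range n, ‖Y (c i) - minus Y 0 (c i)‖ ^ qq ≤ MY := by
  have hMY : 0 ≤ MY := gbound_nonneg hT.le hY
  rcases Nat.eq_zero_or_pos n with rfl|hn
  · simpa using hMY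
  rcases eq_or_lt_of_le hu with h0|h0
  · -- u = 0
    obtain ⟨m, rfl⟩ : ∃ m, n = m + 1 := ⟨n - 1, by omega⟩
    rw [Finset.sum_range_succ']
    have hterm0 : ‖Y (c 0) - minus Y 0 (c 0)‖ ^ qq = 0 := by
      rw [hc.1, ← h0]
      simp only [minus, if_pos le_rfl, sub_self, norm_zero]
      exact Real.zero_rpow hq.ne'
    rw [hterm0, add_zero]
    rcases Nat.eq_zero_or_pos m with rfl|hm
    · simpa using hMY
    have hc' : chainOn (c 1) v m (fun i => c (i + 1)) :=
      ⟨rfl, hc.2.1, fun i hi => hc.2.2 (i+1) (by omega)⟩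
    have hc1 : 0 < c 1 := by
      have := hc.2.2 0 (by omega)
      rw [hc.1, ← h0] at this
      exact this
    exact jump_sum_core hT hq.le hYc hY hc1 hv hc' hm
  · exact jump_sum_core hT hq.le hYc hY (hc.1 ▸ h0) hv hc hn

lemma sum_merge {M : Type*} [AddCommMonoid M] (F : ℕ → M) (n k : ℕ) (hk : k < n) :
    ∑ i ∈ Finset.range (n + 1), F i =
    ∑ i ∈ Finset.range n, (if i < k then F i else if i = k then F k + F (k + 1) else F (i + 1)) := by
  induction n with
  | zero => omega
  | succ m ih =>
    rcases Nat.lt_or_ge k m with h|h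
    · rw [Finset.sum_range_succ (n := m + 1), ih h, Finset.sum_range_succ]
      congr 1
      rw [if_neg (by omega), if_neg (by omega)]
    · have hkm : k = m := by omega
      subst hkm
      simp only [Finset.sum_range_succ]
      have hcong : (∑ i ∈ Finset.range k,
          (if i < k then F i else if i = k then F k + F (k + 1) else F (i + 1)))
          = ∑ i ∈ Finset.range k, F i :=
        Finset.sum_congr rfl (fun i hi => if_pos (Finset.mem_range.1 hi))
      rw [hcong]
      simp [add_assoc]

section young_removal

variable {d : ℕ}

lemma T2_add_right (a u v : EuclideanSpace ℝ (Fin d)) : T2 a (u + v) = T2 a u + T2 a v := by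
  funext i j
  simp only [T2, Pi.add_apply]
  rw [show (u + v) j = u j + v j from rfl]
  ring

lemma young_removal {X g : ℝ → EuclideanSpace ℝ (Fin d)} {T γ s t : ℝ}
    (hγ : 1 < γ) {ω : ℝ → ℝ → ℝ}
    (hnn : ∀ u v, 0 ≤ u → u ≤ v → v ≤ T → 0 ≤ ω u v)
    (hmono : ∀ u u' v' v, 0 ≤ u → u ≤ u' → u' ≤ v' → v' ≤ v → v ≤ T → ω u' v' ≤ ω u v)
    (hsuper : ∀ u m v, 0 ≤ u → u ≤ m → m ≤ v → v ≤ T → ω u m + ω m v ≤ ω u v)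
    (hprod : ∀ a b e, 0 ≤ a → a < b → b < e → e ≤ T →
      ‖g b - g a‖ * ‖X e - X b‖ ≤ ω a e ^ γ)
    (hs : 0 ≤ s) (ht : t ≤ T) :
    ∀ n, ∀ c : ℕ → ℝ, chainOn s t n c → 1 ≤ n →
      ‖(∑ i ∈ Finset.range n, T2 (g (c i)) (X (c (i + 1)) - X (c i))) - T2 (g s) (X t - X s)‖
        ≤ (2 * ω s t) ^ γ * ∑ k ∈ Finset.range (n - 1), ((1:ℝ) / (k + 1)) ^ γ := by
  intro n
  induction n using Nat.strong_induction_on with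
  | _ n IH =>
  intro c hc hn1
  have hst : s ≤ t := hc.le
  have hωnn : 0 ≤ ω s t := hnn s t hs hst ht
  have hrhsnn : 0 ≤ (2 * ω s t) ^ γ := Real.rpow_nonneg (by linarith) _
  rcases Nat.lt_or_ge n 2 with hn2|hn2
  · -- n = 1
    have hn : n = 1 := by omega
    subst hn
    have h0 : c 0 = s := hc.1
    have h1 : c 1 = t := hc.2.1
    simp only [Finset.sum_range_one, h0, h1, sub_self, norm_zero]
    simp
  · -- n ≥ 2
    set m := n / 2 with hm
    have hm1 : 1 ≤ m := by omega
    have hciT : ∀ i, i ≤ n → c i ≤ T := fun i hi =>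
      le_trans (hc.2.1 ▸ hc.mono_le hi le_rfl) ht
    have hci0 : ∀ i, i ≤ n → 0 ≤ c i := fun i hi => le_trans hs (hc.1 ▸ hc.mono_le (Nat.zero_le i) hi)
    -- pairing sum
    have hEsum : ∑ j ∈ Finset.range m, ω (c (2 * j)) (c (2 * j + 2)) ≤ ω s t := by
      set e : ℕ → ℝ := fun j => c (min (2 * j) n) with he_def
      have hev : ∀ j, e j = c (min (2 * j) n) := fun j => rfl
      have he : ∀ j ∈ Finset.range m,
          ω (c (2 * j)) (c (2 * j + 2)) = ω (e j) (e (j + 1)) := by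
        intro j hj
        have hj' := Finset.mem_range.1 hj
        rw [hev j, hev (j + 1), show min (2 * j) n = 2 * j from by omega,
          show min (2 * (j + 1)) n = 2 * j + 2 from by omega]
      rw [Finset.sum_congr rfl he]
      have hchain := omega_chain_sum (T := T) hsuper hnn
        (m := m) (e := e)
        (fun j _ => by
          rw [hev j, hev (j + 1)]
          exact hc.mono_le (by omega) (by omega))
        (by rw [hev 0, show min (2 * 0) n = 0 from by omega, hc.1]; exact hs)
        (by rw [hev m]; exact hciT _ (by omega))
      apply le_trans hchain
      rw [hev 0, hev m, show min (2 * 0) n = 0 from by omega, hc.1]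
      exact hmono s s (c (min (2 * m) n)) t hs le_rfl
        (by rw [← hc.1]; exact hc.mono_le (by omega) (by omega))
        (by rw [← hc.2.1]; exact hc.mono_le (by omega) le_rfl) ht
    -- find a good index
    have hgood : ∃ j ∈ Finset.range m, ω (c (2 * j)) (c (2 * j + 2)) ≤ ω s t / m := by
      by_contra hcon
      push_neg at hcon
      have : ω s t < ∑ j ∈ Finset.range m, ω (c (2 * j)) (c (2 * j + 2)) := by
        calc ω s t = ∑ _j ∈ Finset.range m, ω s t / m := by
              rw [Finset.sum_const, Finset.card_range, nsmul_eq_mul]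
              field_simp
        _ < _ := Finset.sum_lt_sum_of_nonempty (Finset.nonempty_range_iff.2 (by omega))
              (fun j hj => hcon j hj)
      linarith
    obtain ⟨j0, hj0m, hj0⟩ := hgood
    have hj0' := Finset.mem_range.1 hj0m
    set k := 2 * j0 + 1 with hk
    have hk1 : 1 ≤ k := by omega
    have hkn : k ≤ n - 1 := by omega
    -- the reduced chain
    set c' : ℕ → ℝ := fun i => if i < k then c i else c (i + 1) with hc'def
    have hc' : chainOn s t (n - 1) c' := by
      refine ⟨?_, ?_, ?_⟩
      · rw [hc'def]; simp only [if_pos (by omega : 0 < k)]; exact hc.1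
      · rw [hc'def]
        simp only [if_neg (by omega : ¬ (n - 1 < k))]
        rw [show n - 1 + 1 = n from by omega]
        exact hc.2.1
      · intro i hi
        rcases Nat.lt_or_ge (i + 1) k with h|h
        · simp only [hc'def, if_pos (by omega : i < k), if_pos h]
          exact hc.2.2 i (by omega)
        · rcases Nat.lt_or_ge i k with h'|h'
          · simp only [hc'def, if_pos h', if_neg (by omega : ¬ (i + 1 < k))]
            exact hc.mono_lt (by omega) (by omega)
          · simp only [hc'def, if_neg (by omega : ¬ (i < k)), if_neg (by omega : ¬ (i + 1 < k))]
            exact hc.2.2 (i + 1) (by omega)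
    -- sums
    set F : ℕ → (Fin d → Fin d → ℝ) := fun i => T2 (g (c i)) (X (c (i + 1)) - X (c i)) with hF
    set F' : ℕ → (Fin d → Fin d → ℝ) := fun i => T2 (g (c' i)) (X (c' (i + 1)) - X (c' i)) with hF'
    set D : Fin d → Fin d → ℝ := T2 (g (c k) - g (c (k - 1))) (X (c (k + 1)) - X (c k)) with hD
    have hAB : ∑ i ∈ Finset.range n, F i - ∑ i ∈ Finset.range (n - 1), F' i = D := by
      have hmerge := sum_merge F (n - 1) (k - 1) (by omega)
      rw [show n - 1 + 1 = n from by omega, show k - 1 + 1 = k from by omega] at hmerge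
      rw [hmerge, ← Finset.sum_sub_distrib]
      have hzero : ∀ i ∈ Finset.range (n - 1), i ≠ k - 1 →
          ((if i < k - 1 then F i else if i = k - 1 then F (k - 1) + F k else F (i + 1)) - F' i)
          = 0 := by
        intro i hi hik
        have hi' := Finset.mem_range.1 hi
        rcases Nat.lt_or_ge i (k - 1) with h|h
        · rw [if_pos h]
          have : F' i = F i := by
            simp only [hF', hF, hc'def, if_pos (by omega : i < k), if_pos (by omega : i + 1 < k)]
          rw [this, sub_self]
        · rw [if_neg (by omega), if_neg hik]
          have : F' i = F (i + 1) := by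
            simp only [hF', hF, hc'def, if_neg (by omega : ¬ (i < k)),
              if_neg (by omega : ¬ (i + 1 < k))]
          rw [this, sub_self]
      rw [Finset.sum_eq_single_of_mem (k - 1) (Finset.mem_range.2 (by omega)) hzero]
      rw [if_neg (by omega), if_pos rfl]
      have hFk' : F' (k - 1) = T2 (g (c (k - 1))) (X (c (k + 1)) - X (c (k - 1))) := by
        simp only [hF', hc'def, if_pos (by omega : k - 1 < k), if_neg (by omega : ¬ (k - 1 + 1 < k))]
        rw [show k - 1 + 1 = k from by omega]
      rw [hFk']
      simp only [hF, hD]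
      rw [show k - 1 + 1 = k from by omega]
      have hsplit : X (c (k + 1)) - X (c (k - 1)) = (X (c k) - X (c (k - 1))) + (X (c (k + 1)) - X (c k)) := by abel
      rw [hsplit, T2_add_right, ← T2_sub_left]
      abel
    -- norm of D
    have hcast : ((n - 1 - 1 : ℕ) : ℝ) + 1 = (n : ℝ) - 1 := by
      have h5 : ((n - 1 - 1 : ℕ) : ℝ) = (n : ℝ) - 2 := by
        rw [show n - 1 - 1 = n - 2 from by omega, Nat.cast_sub (by omega : 2 ≤ n)]
        norm_num
      rw [h5]; ring
    have hDnorm : ‖D‖ ≤ (2 * ω s t) ^ γ * ((1:ℝ) / (((n - 1 - 1 : ℕ) : ℝ) + 1)) ^ γ := by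
      have h1 : ‖D‖ ≤ ‖g (c k) - g (c (k - 1))‖ * ‖X (c (k + 1)) - X (c k)‖ := T2_norm_le _ _
      have h2 : ‖g (c k) - g (c (k - 1))‖ * ‖X (c (k + 1)) - X (c k)‖ ≤ ω (c (k - 1)) (c (k + 1)) ^ γ :=
        hprod (c (k - 1)) (c k) (c (k + 1)) (hci0 (k - 1) (by omega))
          (hc.mono_lt (by omega) (by omega)) (hc.2.2 k (by omega)) (hciT (k + 1) (by omega))
      have h3 : ω (c (k - 1)) (c (k + 1)) ≤ ω s t / m := by
        have e1 : k - 1 = 2 * j0 := by omega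
        have e2 : k + 1 = 2 * j0 + 2 := by omega
        rw [e1, e2]
        exact hj0
      have hnp : (0:ℝ) < (n:ℝ) - 1 := by
        have : (2:ℝ) ≤ n := by exact_mod_cast hn2
        linarith
      have hmp : (0:ℝ) < (m:ℝ) := by exact_mod_cast hm1
      have hmge : ((n:ℝ) - 1) ≤ 2 * m := by
        have h5 : n - 1 ≤ 2 * m := by omega
        have h6 := (Nat.cast_le (α := ℝ)).2 h5
        rw [Nat.cast_sub (by omega : 1 ≤ n)] at h6
        push_cast at h6 ⊢
        linarith
      have h4 : ω s t / m ≤ 2 * ω s t * ((1:ℝ) / (((n - 1 - 1 : ℕ) : ℝ) + 1)) := by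
        have hgoal : ω s t / (m:ℝ) ≤ 2 * ω s t / ((n:ℝ) - 1) := by
          rw [div_le_div_iff₀ hmp hnp]
          nlinarith [hωnn, hmge]
        calc ω s t / (m:ℝ) ≤ 2 * ω s t / ((n:ℝ) - 1) := hgoal
        _ = 2 * ω s t * ((1:ℝ) / (((n - 1 - 1 : ℕ) : ℝ) + 1)) := by rw [hcast]; ring
      have h5 : ω (c (k - 1)) (c (k + 1)) ^ γ
          ≤ (2 * ω s t * ((1:ℝ) / (((n - 1 - 1 : ℕ) : ℝ) + 1))) ^ γ := by
        apply Real.rpow_le_rpow (hnn _ _ (hci0 (k - 1) (by omega))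
          (hc.mono_le (by omega) (by omega)) (hciT (k + 1) (by omega)))
          (le_trans h3 h4) (by linarith)
      have h6 : (2 * ω s t * ((1:ℝ) / (((n - 1 - 1 : ℕ) : ℝ) + 1))) ^ γ
          = (2 * ω s t) ^ γ * ((1:ℝ) / (((n - 1 - 1 : ℕ) : ℝ) + 1)) ^ γ :=
        Real.mul_rpow (by linarith) (by positivity)
      calc ‖D‖ ≤ _ := h1
      _ ≤ _ := h2
      _ ≤ _ := h5
      _ = _ := h6
    -- induction
    have hIH := IH (n - 1) (by omega) c' hc' (by omega)
    have htri : ‖(∑ i ∈ Finset.range n, F i) - T2 (g s) (X t - X s)‖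
        ≤ ‖D‖ + ‖(∑ i ∈ Finset.range (n - 1), F' i) - T2 (g s) (X t - X s)‖ := by
      have : (∑ i ∈ Finset.range n, F i) - T2 (g s) (X t - X s)
          = D + ((∑ i ∈ Finset.range (n - 1), F' i) - T2 (g s) (X t - X s)) := by
        rw [← hAB]; abel
      rw [this]
      exact norm_add_le _ _
    have hsum : ∑ k ∈ Finset.range (n - 1), ((1:ℝ) / (k + 1)) ^ γ
        = ∑ k ∈ Finset.range (n - 1 - 1), ((1:ℝ) / (k + 1)) ^ γ
          + ((1:ℝ) / (((n - 1 - 1 : ℕ) : ℝ) + 1)) ^ γ := by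
      rw [show n - 1 = (n - 1 - 1) + 1 from by omega, Finset.sum_range_succ]
      simp [Nat.add_sub_cancel]
    calc ‖(∑ i ∈ Finset.range n, F i) - T2 (g s) (X t - X s)‖
        ≤ ‖D‖ + ‖(∑ i ∈ Finset.range (n - 1), F' i) - T2 (g s) (X t - X s)‖ := htri
    _ ≤ (2 * ω s t) ^ γ * ((1:ℝ) / (((n - 1 - 1 : ℕ) : ℝ) + 1)) ^ γ
        + (2 * ω s t) ^ γ * ∑ k ∈ Finset.range (n - 1 - 1), ((1:ℝ) / (k + 1)) ^ γ :=
        add_le_add hDnorm hIH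
    _ = (2 * ω s t) ^ γ * ∑ k ∈ Finset.range (n - 1), ((1:ℝ) / (k + 1)) ^ γ := by
        rw [hsum]; ring

end young_removal

lemma le_rpow_inv {a b pp : ℝ} (ha : 0 ≤ a) (hab : a ^ pp ≤ b) (hp0 : 0 < pp) :
    a ≤ b ^ (1 / pp) := by
  have hb : 0 ≤ b := le_trans (Real.rpow_nonneg ha _) hab
  have h1 : a = (a ^ pp) ^ (1 / pp) := by
    rw [← Real.rpow_mul ha, mul_one_div_cancel hp0.ne', Real.rpow_one]
  rw [h1]
  exact Real.rpow_le_rpow (Real.rpow_nonneg ha _) hab (by positivity)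

lemma summable_young {γ : ℝ} (hγ : 1 < γ) :
    Summable (fun k : ℕ => ((1:ℝ) / ((k:ℝ) + 1)) ^ γ) := by
  have h1 := Real.summable_one_div_nat_rpow.2 hγ
  have h2 := (summable_nat_add_iff 1).2 h1
  apply Summable.congr h2
  intro k
  push_cast
  rw [Real.div_rpow (by norm_num) (by positivity), Real.one_rpow]

lemma zbound {d : ℕ} {X Y : ℝ → EuclideanSpace ℝ (Fin d)} {T MX MY p q γ : ℝ}
    (hT : 0 < T) (hp : 1 ≤ p) (hq : 1 ≤ q) (hγdef : γ = 1 / p + 1 / q) (hγ : 1 < γ)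
    (GBX : GBoundOn X p T MX) (GBm : GBoundOn (minus Y 0) q T MY)
    {Zst : Fin d → Fin d → ℝ} {s t : ℝ} (hs : 0 ≤ s) (hst : s < t) (ht : t ≤ T)
    (hZst : RRSTendsto s t (fun P => ∑ x ∈ P.erase t,
          (fun i j => (minus Y 0 x i - Y s i) * (X (nextPt P t x) j - X x j)
            : Fin d → Fin d → ℝ)) Zst) :
    ‖Zst‖ ≤ ‖Y s - minus Y 0 s‖ *
        (ctrl X p s t + ctrl (minus Y 0) q s t) ^ (1 / p)
      + (2 * (ctrl X p s t + ctrl (minus Y 0) q s t)) ^ γ *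
        ∑' k : ℕ, ((1:ℝ) / ((k:ℝ) + 1)) ^ γ := by
  have hp0 : 0 < p := lt_of_lt_of_le one_pos hp
  have hq0 : 0 < q := lt_of_lt_of_le one_pos hq
  set ω : ℝ → ℝ → ℝ := fun u v => ctrl X p u v + ctrl (minus Y 0) q u v with hωdef
  have hωnn : ∀ u v, 0 ≤ u → u ≤ v → v ≤ T → 0 ≤ ω u v := fun u v hu huv hv =>
    add_nonneg (ctrl_nonneg GBX hu hv huv) (ctrl_nonneg GBm hu hv huv)
  have hωmono : ∀ u u' v' v, 0 ≤ u → u ≤ u' → u' ≤ v' → v' ≤ v → v ≤ T → ω u' v' ≤ ω u v :=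
    fun u u' v' v h0 h1 h2 h3 h4 =>
      add_le_add (ctrl_mono GBX h0 h4 h1 h2 h3) (ctrl_mono GBm h0 h4 h1 h2 h3)
  have hωsuper : ∀ u m v, 0 ≤ u → u ≤ m → m ≤ v → v ≤ T → ω u m + ω m v ≤ ω u v := by
    intro u m v h0 h1 h2 h3
    have hX := ctrl_superadd GBX h0 h3 h1 h2
    have hm := ctrl_superadd GBm h0 h3 h1 h2
    simp only [hωdef]
    linarith
  set g : ℝ → EuclideanSpace ℝ (Fin d) := fun x => minus Y 0 x - Y s with hgdef
  have hprod : ∀ a b e, 0 ≤ a → a < b → b < e → e ≤ T →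
      ‖g b - g a‖ * ‖X e - X b‖ ≤ ω a e ^ γ := by
    intro a b e h0 h1 h2 h3
    have hgsub : g b - g a = minus Y 0 b - minus Y 0 a := by
      simp only [hgdef]
      abel
    have hbnd1 : ‖g b - g a‖ ≤ (ω a e) ^ (1 / q) := by
      rw [hgsub]
      apply le_rpow_inv (norm_nonneg _) _ hq0
      calc ‖minus Y 0 b - minus Y 0 a‖ ^ q ≤ ctrl (minus Y 0) q a b :=
            rpow_le_ctrl GBm h0 (le_trans (le_of_lt h2) h3) h1
      _ ≤ ctrl (minus Y 0) q a e :=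
            ctrl_mono GBm h0 h3 le_rfl h1.le h2.le
      _ ≤ ω a e := by
            simp only [hωdef]
            have := ctrl_nonneg GBX h0 h3 (le_trans h1.le h2.le)
            linarith
    have hbnd2 : ‖X e - X b‖ ≤ (ω a e) ^ (1 / p) := by
      apply le_rpow_inv (norm_nonneg _) _ hp0
      calc ‖X e - X b‖ ^ p ≤ ctrl X p b e :=
            rpow_le_ctrl GBX (le_trans h0 h1.le) h3 h2
      _ ≤ ctrl X p a e := ctrl_mono GBX h0 h3 h1.le h2.le le_rfl
      _ ≤ ω a e := by
            simp only [hωdef]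
            have := ctrl_nonneg GBm h0 h3 (le_trans h1.le h2.le)
            linarith
    have hωae : 0 ≤ ω a e := hωnn a e h0 (le_trans h1.le h2.le) h3
    calc ‖g b - g a‖ * ‖X e - X b‖ ≤ (ω a e) ^ (1 / q) * (ω a e) ^ (1 / p) :=
          mul_le_mul hbnd1 hbnd2 (norm_nonneg _) (Real.rpow_nonneg hωae _)
    _ = (ω a e) ^ (1 / q + 1 / p) := (Real.rpow_add' hωae (by positivity)).symm
    _ = (ω a e) ^ γ := by rw [hγdef, add_comm]
  have hsummable := summable_young hγ
  set Zγ := ∑' k : ℕ, ((1:ℝ) / ((k:ℝ) + 1)) ^ γ with hZγ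
  have hZγnn : 0 ≤ Zγ := tsum_nonneg (fun k => Real.rpow_nonneg (by positivity) _)
  have hpartial : ∀ N : ℕ, ∑ k ∈ Finset.range N, ((1:ℝ) / ((k:ℝ) + 1)) ^ γ ≤ Zγ :=
    fun N => Summable.sum_le_tsum _ (fun k _ => Real.rpow_nonneg (by positivity) _) hsummable
  have hωst : 0 ≤ ω s t := hωnn s t hs hst.le ht
  have hrp : 0 ≤ (2 * ω s t) ^ γ := Real.rpow_nonneg (by linarith) _
  apply le_of_forall_pos_le_add
  intro ε hε
  obtain ⟨P₀, hP₀, hconv⟩ := hZst ε hε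
  have hRS := hconv P₀ hP₀ (subset_refl P₀)
  obtain ⟨n, c, hc, hcmem, hnext, himg, hinj⟩ := partition_chain hP₀
  -- rewrite the Riemann sum as a chain sum
  have hsumeq : (∑ x ∈ P₀.erase t,
      (fun i j => (minus Y 0 x i - Y s i) * (X (nextPt P₀ t x) j - X x j)
        : Fin d → Fin d → ℝ))
      = ∑ i ∈ Finset.range n, T2 (g (c i)) (X (c (i + 1)) - X (c i)) := by
    have := sum_erase_eq (fun x y => (fun i j => (minus Y 0 x i - Y s i) * (X y j - X x j)
        : Fin d → Fin d → ℝ)) himg hnext (fun i j hi hj => hinj i j hi.le hj.le)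
    rw [this]
    apply Finset.sum_congr rfl
    intro i _
    funext ii jj
    simp only [T2, hgdef]
    rw [show (minus Y 0 (c i) - Y s) ii = minus Y 0 (c i) ii - Y s ii from rfl,
      show (X (c (i + 1)) - X (c i)) jj = X (c (i + 1)) jj - X (c i) jj from rfl]
  have hn1 : 1 ≤ n := by
    by_contra h
    have hn0 : n = 0 := by omega
    have := hc.2.1
    rw [hn0, hc.1] at this
    exact absurd this (ne_of_lt hst)
  have hyoung := young_removal hγ hωnn hωmono hωsuper hprod hs ht n c hc hn1
  have hbase : ‖T2 (g s) (X t - X s)‖ ≤ ‖Y s - minus Y 0 s‖ * (ω s t) ^ (1 / p) := by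
    have h1 : ‖T2 (g s) (X t - X s)‖ ≤ ‖g s‖ * ‖X t - X s‖ := T2_norm_le _ _
    have h2 : ‖g s‖ = ‖Y s - minus Y 0 s‖ := by rw [hgdef]; exact norm_sub_rev _ _
    have h3 : ‖X t - X s‖ ≤ (ω s t) ^ (1 / p) := by
      apply le_rpow_inv (norm_nonneg _) _ hp0
      calc ‖X t - X s‖ ^ p ≤ ctrl X p s t := rpow_le_ctrl GBX hs ht hst
      _ ≤ ω s t := by
          simp only [hωdef]
          have := ctrl_nonneg GBm hs ht hst.le
          linarith
    calc ‖T2 (g s) (X t - X s)‖ ≤ ‖g s‖ * ‖X t - X s‖ := h1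
    _ ≤ ‖Y s - minus Y 0 s‖ * (ω s t) ^ (1 / p) := by
        rw [h2]
        exact mul_le_mul_of_nonneg_left h3 (norm_nonneg _)
  have hRSbound : ‖∑ i ∈ Finset.range n, T2 (g (c i)) (X (c (i + 1)) - X (c i))‖
      ≤ ‖Y s - minus Y 0 s‖ * (ω s t) ^ (1 / p) + (2 * ω s t) ^ γ * Zγ := by
    have h1 : ‖∑ i ∈ Finset.range n, T2 (g (c i)) (X (c (i + 1)) - X (c i))‖
        ≤ ‖T2 (g s) (X t - X s)‖
          + ‖(∑ i ∈ Finset.range n, T2 (g (c i)) (X (c (i + 1)) - X (c i)))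
            - T2 (g s) (X t - X s)‖ := by
      have := norm_add_le (T2 (g s) (X t - X s))
        ((∑ i ∈ Finset.range n, T2 (g (c i)) (X (c (i + 1)) - X (c i))) - T2 (g s) (X t - X s))
      simpa using this
    apply le_trans h1
    apply add_le_add hbase
    apply le_trans hyoung
    exact mul_le_mul_of_nonneg_left (hpartial (n - 1)) hrp
  set S₀ : Fin d → Fin d → ℝ := ∑ x ∈ P₀.erase t,
      (fun i j => (minus Y 0 x i - Y s i) * (X (nextPt P₀ t x) j - X x j)
        : Fin d → Fin d → ℝ) with hS₀
  calc ‖Zst‖ = ‖S₀ - (S₀ - Zst)‖ := by congr 1; abel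
  _ ≤ ‖S₀‖ + ‖S₀ - Zst‖ := norm_sub_le _ _
  _ = ‖∑ i ∈ Finset.range n, T2 (g (c i)) (X (c (i + 1)) - X (c i))‖ + ‖S₀ - Zst‖ := by
      rw [hsumeq]
  _ ≤ (‖Y s - minus Y 0 s‖ * (ω s t) ^ (1 / p) + (2 * ω s t) ^ γ * Zγ) + ε :=
      add_le_add hRSbound (le_of_lt hRS)

end YoungAux

open YoungAux in
/-- If `X, Y` are càdlàg of finite `p`- resp. `q`-variation with
`1/p + 1/q > 1`, then for any `θ > 0` with `1/p + 1/q ≥ 1/θ` the Young integral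
`Z_{s,t} = ∫_{(s,t]} (Y_{r-} − Y_s) ⊗ dX_r` (defined as refinement-Riemann–Stieltjes limit
of left-point Riemann sums) has finite `θ`-variation. -/
theorem young_two_parameter_theta_variation
    {d : ℕ} (T p q θ : ℝ) (hT : 0 < T) (hp : 1 ≤ p) (hq : 1 ≤ q)
    (hpq : 1 / p + 1 / q > 1) (hθ : 0 < θ) (hθpq : 1 / p + 1 / q ≥ 1 / θ)
    (X Y : ℝ → EuclideanSpace ℝ (Fin d))
    (hXc : Cadlag X 0 T) (hYc : Cadlag Y 0 T)
    (hXv : HasFiniteVar X p 0 T) (hYv : HasFiniteVar Y q 0 T)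
    (Z : ℝ → ℝ → (Fin d → Fin d → ℝ))
    (hZ : ∀ s t : ℝ, 0 ≤ s → s < t → t ≤ T →
      RRSTendsto s t
        (fun P => ∑ x ∈ P.erase t,
          (fun i j => (minus Y 0 x i - Y s i) * (X (nextPt P t x) j - X x j)
            : Fin d → Fin d → ℝ))
        (Z s t)) :
    HasFiniteVar2 Z θ 0 T := by
  classical
  have hp0 : 0 < p := lt_of_lt_of_le one_pos hp
  have hq0 : 0 < q := lt_of_lt_of_le one_pos hq
  obtain ⟨MX₀, hMX₀⟩ := hXv
  obtain ⟨MY₀, hMY₀⟩ := hYv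
  have GBX : GBoundOn X p T MX₀ := gboundOn_of_var' hMX₀
  have GBY : GBoundOn Y q T MY₀ := gboundOn_of_var' hMY₀
  have GBm : GBoundOn (minus Y 0) q T MY₀ := gbound_minus hT hq0.le hYc GBY
  have hMX : 0 ≤ MX₀ := gbound_nonneg hT.le GBX
  have hMY : 0 ≤ MY₀ := gbound_nonneg hT.le GBY
  set γ : ℝ := 1 / p + 1 / q with hγdef
  have hγ : 1 < γ := hpq
  set Zγ : ℝ := ∑' k : ℕ, ((1:ℝ) / ((k:ℝ) + 1)) ^ γ with hZγdef
  have hZγnn : 0 ≤ Zγ := tsum_nonneg (fun k => Real.rpow_nonneg (by positivity) _)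
  set K : ℝ := (2:ℝ) ^ γ * Zγ with hKdef
  have hKnn : 0 ≤ K := mul_nonneg (Real.rpow_nonneg (by norm_num) _) hZγnn
  have hθγ1 : 1 ≤ θ * γ := by
    have h1 := mul_le_mul_of_nonneg_left hθpq hθ.le
    rwa [mul_one_div_cancel hθ.ne'] at h1
  have hθq : 0 < θ / q := by positivity
  have hθp : 0 < θ / p := by positivity
  have hid : θ / q + θ / p = θ * γ := by rw [hγdef]; ring
  refine ⟨2 ^ θ * (MY₀ ^ (θ / q) * (MX₀ + MY₀) ^ (θ / p)
    + K ^ θ * (MX₀ + MY₀) ^ (γ * θ)), ?_⟩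
  intro P hP
  obtain ⟨N, c, hc, hcmem, hnext, himg, hinj⟩ := partition_chain hP
  have hvs : varSum2 Z θ T P = ∑ i ∈ Finset.range N, ‖Z (c i) (c (i + 1))‖ ^ θ :=
    sum_erase_eq (fun x y => ‖Z x y‖ ^ θ) himg hnext (fun i j hi hj => hinj i j hi.le hj.le)
  rw [hvs]
  have hciT : ∀ i, i ≤ N → c i ≤ T := fun i hi => (hc.mem_Icc hi).2
  have hci0 : ∀ i, i ≤ N → 0 ≤ c i := fun i hi => (hc.mem_Icc hi).1
  set j : ℕ → ℝ := fun i => ‖Y (c i) - minus Y 0 (c i)‖ with hjdef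
  set w : ℕ → ℝ := fun i => ctrl X p (c i) (c (i + 1)) + ctrl (minus Y 0) q (c i) (c (i + 1))
    with hwdef
  have hjnn : ∀ i, 0 ≤ j i := fun i => norm_nonneg _
  have hwnn : ∀ i, i < N → 0 ≤ w i := by
    intro i hi
    exact add_nonneg
      (ctrl_nonneg GBX (hci0 i hi.le) (hciT (i + 1) hi) (hc.2.2 i hi).le)
      (ctrl_nonneg GBm (hci0 i hi.le) (hciT (i + 1) hi) (hc.2.2 i hi).le)
  -- per-interval bound on Z
  have hterm : ∀ i ∈ Finset.range N,
      ‖Z (c i) (c (i + 1))‖ ≤ j i * (w i) ^ (1 / p) + K * (w i) ^ γ := by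
    intro i hi
    have hi' := Finset.mem_range.1 hi
    have hzb := zbound hT hp hq hγdef hγ GBX GBm (hci0 i hi'.le) (hc.2.2 i hi')
      (hciT (i + 1) hi') (hZ (c i) (c (i + 1)) (hci0 i hi'.le) (hc.2.2 i hi')
        (hciT (i + 1) hi'))
    apply le_trans hzb
    apply add_le_add
    · exact le_of_eq rfl
    · have hexp : (2 * (ctrl X p (c i) (c (i + 1)) + ctrl (minus Y 0) q (c i) (c (i + 1)))) ^ γ
          = (2:ℝ) ^ γ * (w i) ^ γ := Real.mul_rpow (by norm_num) (hwnn i hi')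
      rw [hexp, hKdef]
      exact le_of_eq (by ring)
  -- θ-power bound
  have hpow : ∀ i ∈ Finset.range N, ‖Z (c i) (c (i + 1))‖ ^ θ
      ≤ 2 ^ θ * ((j i ^ q) ^ (θ / q) * (w i) ^ (θ / p) + K ^ θ * (w i) ^ (γ * θ)) := by
    intro i hi
    have hi' := Finset.mem_range.1 hi
    have h1 : ‖Z (c i) (c (i + 1))‖ ^ θ ≤ (j i * (w i) ^ (1 / p) + K * (w i) ^ γ) ^ θ :=
      Real.rpow_le_rpow (norm_nonneg _) (hterm i hi) hθ.le
    have h2 : (j i * (w i) ^ (1 / p) + K * (w i) ^ γ) ^ θ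
        ≤ 2 ^ θ * ((j i * (w i) ^ (1 / p)) ^ θ + (K * (w i) ^ γ) ^ θ) :=
      add_rpow_le (mul_nonneg (hjnn i) (Real.rpow_nonneg (hwnn i hi') _))
        (mul_nonneg hKnn (Real.rpow_nonneg (hwnn i hi') _)) hθ.le
    have hA : (j i * (w i) ^ (1 / p)) ^ θ = (j i ^ q) ^ (θ / q) * (w i) ^ (θ / p) := by
      rw [Real.mul_rpow (hjnn i) (Real.rpow_nonneg (hwnn i hi') _)]
      congr 1
      · rw [← Real.rpow_mul (hjnn i), show q * (θ / q) = θ from by field_simp]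
      · rw [← Real.rpow_mul (hwnn i hi'), show 1 / p * θ = θ / p from by ring]
    have hB : (K * (w i) ^ γ) ^ θ = K ^ θ * (w i) ^ (γ * θ) := by
      rw [Real.mul_rpow hKnn (Real.rpow_nonneg (hwnn i hi') _),
        ← Real.rpow_mul (hwnn i hi')]
    calc ‖Z (c i) (c (i + 1))‖ ^ θ ≤ _ := h1
    _ ≤ _ := h2
    _ = 2 ^ θ * ((j i ^ q) ^ (θ / q) * (w i) ^ (θ / p) + K ^ θ * (w i) ^ (γ * θ)) := by
        rw [hA, hB]
  -- global sums
  have hjq : ∑ i ∈ Finset.range N, j i ^ q ≤ MY₀ :=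
    jump_sum_bound hT hq0 hYc GBY le_rfl le_rfl hc
  have hwsum : ∑ i ∈ Finset.range N, w i ≤ MX₀ + MY₀ := by
    have hsuper : ∀ u m v, 0 ≤ u → u ≤ m → m ≤ v → v ≤ T →
        (fun u v => ctrl X p u v + ctrl (minus Y 0) q u v) u m
        + (fun u v => ctrl X p u v + ctrl (minus Y 0) q u v) m v
        ≤ (fun u v => ctrl X p u v + ctrl (minus Y 0) q u v) u v := by
      intro u m v h0 h1 h2 h3
      have hx := ctrl_superadd GBX h0 h3 h1 h2
      have hm := ctrl_superadd GBm h0 h3 h1 h2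
      simp only
      linarith
    have hnn : ∀ u v, 0 ≤ u → u ≤ v → v ≤ T →
        0 ≤ (fun u v => ctrl X p u v + ctrl (minus Y 0) q u v) u v := by
      intro u v h0 h1 h2
      exact add_nonneg (ctrl_nonneg GBX h0 h2 h1) (ctrl_nonneg GBm h0 h2 h1)
    have hchain := omega_chain_sum (T := T) hsuper hnn (m := N) (e := c)
      (fun i hi => (hc.2.2 i hi).le) (hc.1 ▸ le_rfl) (hc.2.1 ▸ le_rfl)
    rw [hc.1, hc.2.1] at hchain
    apply le_trans hchain
    exact add_le_add (ctrl_le GBX le_rfl le_rfl hT.le) (ctrl_le GBm le_rfl le_rfl hT.le)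
  have hMXY : 0 ≤ MX₀ + MY₀ := by linarith
  -- Hoelder
  have hhoelder : ∑ i ∈ Finset.range N, (j i ^ q) ^ (θ / q) * (w i) ^ (θ / p)
      ≤ MY₀ ^ (θ / q) * (MX₀ + MY₀) ^ (θ / p) := by
    have h1 := hoelder_pair (s := Finset.range N) (f := fun i => j i ^ q) (g := w)
      (fun i _ => Real.rpow_nonneg (hjnn i) _)
      (fun i hi => hwnn i (Finset.mem_range.1 hi)) hθq hθp (hid ▸ hθγ1)
    apply le_trans h1
    apply mul_le_mul
    · exact Real.rpow_le_rpow (Finset.sum_nonneg fun i _ => Real.rpow_nonneg (hjnn i) _)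
        hjq hθq.le
    · exact Real.rpow_le_rpow (Finset.sum_nonneg fun i hi => hwnn i (Finset.mem_range.1 hi))
        hwsum hθp.le
    · exact Real.rpow_nonneg (Finset.sum_nonneg fun i hi => hwnn i (Finset.mem_range.1 hi)) _
    · exact Real.rpow_nonneg hMY _
  have hwγθ : ∑ i ∈ Finset.range N, (w i) ^ (γ * θ) ≤ (MX₀ + MY₀) ^ (γ * θ) := by
    have h1 := sum_rpow_le_rpow_sum (s := Finset.range N) (f := w) (r := γ * θ)
      (fun i hi => hwnn i (Finset.mem_range.1 hi)) (by rw [mul_comm]; exact hθγ1)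
    apply le_trans h1
    exact Real.rpow_le_rpow (Finset.sum_nonneg fun i hi => hwnn i (Finset.mem_range.1 hi))
      hwsum (by nlinarith)
  -- conclude
  calc ∑ i ∈ Finset.range N, ‖Z (c i) (c (i + 1))‖ ^ θ
      ≤ ∑ i ∈ Finset.range N,
        2 ^ θ * ((j i ^ q) ^ (θ / q) * (w i) ^ (θ / p) + K ^ θ * (w i) ^ (γ * θ)) :=
      Finset.sum_le_sum hpow
  _ = 2 ^ θ * ((∑ i ∈ Finset.range N, (j i ^ q) ^ (θ / q) * (w i) ^ (θ / p))
      + K ^ θ * ∑ i ∈ Finset.range N, (w i) ^ (γ * θ)) := by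
      symm
      rw [Finset.mul_sum _ _ (K ^ θ), ← Finset.sum_add_distrib, Finset.mul_sum]
  _ ≤ 2 ^ θ * (MY₀ ^ (θ / q) * (MX₀ + MY₀) ^ (θ / p) + K ^ θ * (MX₀ + MY₀) ^ (γ * θ)) := by
      apply mul_le_mul_of_nonneg_left _ (Real.rpow_nonneg (by norm_num) _)
      apply add_le_add hhoelder
      exact mul_le_mul_of_nonneg_left hwγθ (Real.rpow_nonneg hKnn _)
end
end

section
/- Let X be a d-dimensional compound Poisson process X_t = ∑_{i=1}^{N_t} J_i with i.i.d. jumps J_i ∈ ℝ^d having finite moments of all orders, and N an independent Poisson process of intensity λ. Then the expected (Marcus/minimal-jump) signature of X on [0,1], truncated at level N, satisfies E[S^N(X)_{0,1}] = exp^{(N)}( λ (E[exp^{(N)}(J)] − 1) ) in the truncated tensor algebra T^{(N)}(ℝ^d). -/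
open scoped BigOperators
open MeasureTheory

noncomputable section

/-- Truncated (at level `N`) tensor-algebra multiplication, in the model of
`T^{(N)}(ℝ^d)` as real-valued functions on words over the alphabet `Fin d`. -/
noncomputable def taMul (N : ℕ) {d : ℕ} (x y : List (Fin d) → ℝ) : List (Fin d) → ℝ :=
  fun w => if w.length ≤ N then
    ∑ i ∈ Finset.range (w.length + 1), x (w.take i) * y (w.drop i) else 0

/-- The unit of the tensor algebra. -/
def taOne {d : ℕ} : List (Fin d) → ℝ := fun w => if w = [] then 1 else 0

/-- Powers in the truncated tensor algebra. -/
noncomputable def taPow (N : ℕ) {d : ℕ} (x : List (Fin d) → ℝ) : ℕ → (List (Fin d) → ℝ)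
  | 0 => taOne
  | k + 1 => taMul N x (taPow N x k)

/-- Truncated tensor exponential `exp^{(N)}(x) = ∑_{k=0}^N x^{⊗k}/k!`. -/
noncomputable def taExp (N : ℕ) {d : ℕ} (x : List (Fin d) → ℝ) : List (Fin d) → ℝ :=
  fun w => ∑ k ∈ Finset.range (N + 1), ((k.factorial : ℝ))⁻¹ * taPow N x k w

/-- Truncated tensor logarithm `log^{(N)}(x) = ∑_{k=1}^N (−1)^{k+1}/k (x−1)^{⊗k}`. -/
noncomputable def taLog (N : ℕ) {d : ℕ} (x : List (Fin d) → ℝ) : List (Fin d) → ℝ :=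
  fun w => ∑ k ∈ Finset.Icc 1 N,
    ((-1 : ℝ)) ^ (k + 1) / k * taPow N (fun u => x u - taOne u) k w

/-- Inverse in the group `T₁^{(N)}`: `(1+g)⁻¹ = ∑_k (−g)^{⊗k}`. -/
noncomputable def taInv (N : ℕ) {d : ℕ} (x : List (Fin d) → ℝ) : List (Fin d) → ℝ :=
  fun w => ∑ k ∈ Finset.range (N + 1), ((-1 : ℝ)) ^ k * taPow N (fun u => x u - taOne u) k w

/-- Embedding of `ℝ^d` as 1-tensors. -/
def taInj {d : ℕ} (v : Fin d → ℝ) : List (Fin d) → ℝ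
  | [i] => v i
  | _ => 0

/-- Embedding of a matrix as a 2-tensor. -/
def ta2 {d : ℕ} (a : Fin d → Fin d → ℝ) : List (Fin d) → ℝ
  | [i, j] => a i j
  | _ => 0

/-- Homogeneous norm `‖1+g‖ = ∑_{k=1}^N |g^k|^{1/k}` on the truncated tensor algebra,
equivalent to the Carnot–Carathéodory norm on group-like elements. -/
noncomputable def taHomNorm (N : ℕ) {d : ℕ} (x : List (Fin d) → ℝ) : ℝ :=
  ∑ k ∈ Finset.Icc 1 N, (∑ f : Fin k → Fin d, |x (List.ofFn f)|) ^ ((k : ℝ)⁻¹)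

section Alg
variable {N d : ℕ}

lemma taOne_ne_nil {u : List (Fin d)} (h : u ≠ []) : (taOne u : ℝ) = 0 := if_neg h

lemma taMul_of_lt (x y : List (Fin d) → ℝ) {u : List (Fin d)} (h : N < u.length) :
    taMul N x y u = 0 := if_neg (not_le.mpr h)

lemma taPow_of_lt (x : List (Fin d) → ℝ) (k : ℕ) {u : List (Fin d)} (h : N < u.length) :
    taPow N x k u = 0 := by
  cases k with
  | zero => exact taOne_ne_nil (by rintro rfl; simp at h)
  | succ k => exact taMul_of_lt _ _ h

lemma taInj_ne_one {u : List (Fin d)} (v : Fin d → ℝ) (h : u.length ≠ 1) : taInj v u = 0 := by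
  match u, h with
  | [], _ => rfl
  | [i], h => simp at h
  | (i :: j :: t), _ => rfl

lemma taPow_taInj (v : Fin d → ℝ) (k : ℕ) (u : List (Fin d)) :
    taPow N (taInj v) k u =
      if k = u.length ∧ u.length ≤ N then (u.map v).prod else 0 := by
  induction k generalizing u with
  | zero =>
    cases u with
    | nil => simp [taPow, taOne]
    | cons a t => simp [taPow, taOne]
  | succ k ih =>
    by_cases hu : u.length ≤ N
    · cases u with
      | nil =>
        simp only [taPow, taMul, List.length_nil, Nat.zero_le, if_pos, Finset.range_one,
          Finset.sum_singleton, List.take_nil, List.drop_nil]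
        have : taInj v ([] : List (Fin d)) = 0 := rfl
        simp [this]
      | cons a t =>
        have hlen : (a :: t).length = t.length + 1 := rfl
        simp only [taPow, taMul, if_pos hu]
        rw [Finset.sum_eq_single 1]
        · have h1 : (a :: t).take 1 = [a] := rfl
          have h2 : (a :: t).drop 1 = t := rfl
          rw [h1, h2, ih]
          have htN : t.length ≤ N := by simp [hlen] at hu; omega
          have hN' : t.length + 1 ≤ N := by simpa [hlen] using hu
          by_cases hk : k = t.length
          · simp [hk, htN, hlen, taInj, hN']
          · have : ¬ (k + 1 = (a :: t).length) := by simp [hlen]; omega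
            simp [hk, this, taInj]
        · intro i hi hne
          rcases Nat.eq_zero_or_pos i with rfl | hpos
          · simp only [List.take_zero]
            rw [show taInj v ([] : List (Fin d)) = 0 from rfl, zero_mul]
          · have hlt : i ≤ (a :: t).length := by
              simpa using Nat.lt_succ_iff.mp (Finset.mem_range.mp hi)
            have : ((a :: t).take i).length = i := by
              rw [List.length_take]; omega
            rw [taInj_ne_one v (by omega)]
            simp
        · intro h
          simp at h
    · rw [taPow, taMul_of_lt _ _ (not_le.mp hu)]
      simp [not_le.mp hu, hu]

lemma taExp_taInj (v : Fin d → ℝ) (u : List (Fin d)) :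
    taExp N (taInj v) u =
      if u.length ≤ N then ((u.length.factorial : ℝ))⁻¹ * (u.map v).prod else 0 := by
  unfold taExp
  by_cases hu : u.length ≤ N
  · rw [if_pos hu, Finset.sum_eq_single u.length]
    · rw [taPow_taInj, if_pos ⟨rfl, hu⟩]
    · intro k hk hne
      rw [taPow_taInj, if_neg (by tauto)]
      simp
    · intro h
      exact absurd (Finset.mem_range.mpr (Nat.lt_succ_of_le hu)) h
  · rw [if_neg hu]
    apply Finset.sum_eq_zero
    intro k hk
    rw [taPow_taInj, if_neg (by tauto)]
    simp

lemma taExp_taInj_nil (v : Fin d → ℝ) : taExp N (taInj v) ([] : List (Fin d)) = 1 := by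
  rw [taExp_taInj]; simp

lemma abs_list_prod_le (v : Fin d → ℝ) (u : List (Fin d)) :
    |(u.map v).prod| ≤ (1 + ‖v‖) ^ u.length := by
  have h1 : (0:ℝ) ≤ 1 + ‖v‖ := by positivity
  induction u with
  | nil => simp
  | cons a t ih =>
    simp only [List.map_cons, List.prod_cons, List.length_cons, abs_mul, pow_succ]
    have hva : |v a| ≤ 1 + ‖v‖ := by
      have h2 : |v a| ≤ ‖v‖ := by simpa using norm_le_pi_norm v a
      linarith
    calc |v a| * |(t.map v).prod| ≤ (1 + ‖v‖) * ((1 + ‖v‖) ^ t.length) :=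
          mul_le_mul hva ih (abs_nonneg _) h1
      _ = (1 + ‖v‖) ^ t.length * (1 + ‖v‖) := by ring

lemma abs_taExp_taInj_le (v : Fin d → ℝ) (u : List (Fin d)) :
    |taExp N (taInj v) u| ≤ (1 + ‖v‖) ^ N := by
  have h1 : (0:ℝ) ≤ 1 + ‖v‖ := by positivity
  have hpow : (0:ℝ) ≤ (1 + ‖v‖) ^ N := by positivity
  rw [taExp_taInj]
  split_ifs with hu
  · have hprod := abs_list_prod_le v u
    have hfac : |((u.length.factorial : ℝ))⁻¹| ≤ 1 := by
      rw [abs_of_nonneg (by positivity)]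
      rw [inv_le_one_iff₀]
      right
      exact_mod_cast Nat.one_le_iff_ne_zero.mpr (Nat.factorial_ne_zero _)
    calc |((u.length.factorial : ℝ))⁻¹ * (u.map v).prod|
        = |((u.length.factorial : ℝ))⁻¹| * |(u.map v).prod| := abs_mul _ _
      _ ≤ 1 * (1 + ‖v‖) ^ u.length := by
          apply mul_le_mul hfac hprod (abs_nonneg _) zero_le_one
      _ = (1 + ‖v‖) ^ u.length := one_mul _
      _ ≤ (1 + ‖v‖) ^ N := pow_le_pow_right₀ (by linarith [norm_nonneg v]) hu
  · simpa using hpow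

lemma measurable_list_prod (u : List (Fin d)) :
    Measurable fun v : Fin d → ℝ => (u.map v).prod := by
  induction u with
  | nil => simpa using measurable_const
  | cons a t ih => exact (measurable_pi_apply a).mul ih

lemma measurable_taExp_taInj (u : List (Fin d)) :
    Measurable fun v : Fin d → ℝ => taExp N (taInj v) u := by
  have : (fun v : Fin d → ℝ => taExp N (taInj v) u) =
      fun v => if u.length ≤ N then ((u.length.factorial : ℝ))⁻¹ * (u.map v).prod else 0 := by
    funext v; exact taExp_taInj v u
  rw [this]
  split_ifs
  · exact (measurable_list_prod u).const_mul _
  · exact measurable_const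

end Alg

section Alg2
variable {N d : ℕ}

lemma taPow_succ_apply (g : List (Fin d) → ℝ) (k : ℕ) (u : List (Fin d)) (hu : u.length ≤ N) :
    taPow N g (k+1) u = ∑ i ∈ Finset.range (u.length + 1), g (u.take i) * taPow N g k (u.drop i) := by
  rw [taPow, taMul, if_pos hu]

lemma take_ne_nil {u : List (Fin d)} {i : ℕ} (hi : i ≠ 0) (hu : u ≠ []) : u.take i ≠ [] := by
  cases u with
  | nil => exact absurd rfl hu
  | cons a t => cases i with
    | zero => exact absurd rfl hi
    | succ j => simp

lemma choose_sum_aux (n : ℕ) (x : ℕ → ℝ) :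
    ∑ k ∈ Finset.range (n + 2), (((n+1).choose k : ℕ) : ℝ) * x k
    = ∑ k ∈ Finset.range (n + 1), ((n.choose k : ℕ) : ℝ) * x k
      + ∑ k ∈ Finset.range (n + 1), ((n.choose k : ℕ) : ℝ) * x (k+1) := by
  rw [Finset.sum_range_succ' (fun k => (((n+1).choose k : ℕ) : ℝ) * x k) (n+1),
    Finset.sum_range_succ' (fun k => ((n.choose k : ℕ) : ℝ) * x k) n]
  simp only [Nat.choose_succ_succ, Nat.cast_add, add_mul, Finset.sum_add_distrib,
    Nat.choose_zero_right, Nat.cast_one, one_mul]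
  rw [Finset.sum_range_succ (fun j => ((n.choose (j+1) : ℕ) : ℝ) * x (j+1)) n,
    Nat.choose_succ_self]
  push_cast
  ring

lemma taPow_one_add (g : List (Fin d) → ℝ) (n : ℕ) (u : List (Fin d)) :
    taPow N (fun w => taOne w + g w) n u =
      ∑ k ∈ Finset.range (n + 1), (n.choose k : ℝ) * taPow N g k u := by
  induction n generalizing u with
  | zero => simp [taPow]
  | succ n ih =>
    by_cases hu : u.length ≤ N
    · rw [taPow_succ_apply _ _ _ hu]
      have expand : ∀ i ∈ Finset.range (u.length + 1),
          (taOne (u.take i) + g (u.take i)) * taPow N (fun w => taOne w + g w) n (u.drop i)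
          = taOne (u.take i) * (∑ k ∈ Finset.range (n + 1), (n.choose k : ℝ) * taPow N g k (u.drop i))
            + g (u.take i) * (∑ k ∈ Finset.range (n + 1), (n.choose k : ℝ) * taPow N g k (u.drop i)) := by
        intro i _
        rw [ih]
        ring
      rw [Finset.sum_congr rfl expand, Finset.sum_add_distrib]
      have first : ∑ i ∈ Finset.range (u.length + 1),
          taOne (u.take i) * (∑ k ∈ Finset.range (n + 1), (n.choose k : ℝ) * taPow N g k (u.drop i))
          = ∑ k ∈ Finset.range (n + 1), (n.choose k : ℝ) * taPow N g k u := by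
        rw [Finset.sum_eq_single 0]
        · simp [taOne]
        · intro i hi hne
          by_cases hnil : u = []
          · subst hnil; simp at hi; omega
          · rw [taOne_ne_nil (take_ne_nil hne hnil), zero_mul]
        · intro h; simp at h
      have second : ∑ i ∈ Finset.range (u.length + 1),
          g (u.take i) * (∑ k ∈ Finset.range (n + 1), (n.choose k : ℝ) * taPow N g k (u.drop i))
          = ∑ k ∈ Finset.range (n + 1), (n.choose k : ℝ) * taPow N g (k+1) u := by
        simp_rw [Finset.mul_sum]
        rw [Finset.sum_comm]
        apply Finset.sum_congr rfl
        intro k _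
        rw [taPow_succ_apply _ _ _ hu, Finset.mul_sum]
        apply Finset.sum_congr rfl
        intro i _
        ring
      rw [first, second, ← choose_sum_aux]
    · rw [taPow, taMul_of_lt _ _ (not_le.mp hu)]
      symm
      apply Finset.sum_eq_zero
      intro k hk
      rw [taPow_of_lt _ _ (not_le.mp hu), mul_zero]

end Alg2

section Alg3
variable {N d : ℕ}

lemma taPow_smul (c : ℝ) (g : List (Fin d) → ℝ) (k : ℕ) (u : List (Fin d)) :
    taPow N (fun w => c * g w) k u = c ^ k * taPow N g k u := by
  induction k generalizing u with
  | zero => simp [taPow]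
  | succ k ih =>
    by_cases hu : u.length ≤ N
    · rw [taPow_succ_apply _ _ _ hu, taPow_succ_apply _ _ _ hu, Finset.mul_sum]
      apply Finset.sum_congr rfl
      intro i _
      rw [ih]
      ring
    · rw [taPow, taPow, taMul_of_lt _ _ (not_le.mp hu), taMul_of_lt _ _ (not_le.mp hu), mul_zero]

lemma taPow_eq_zero_of_len_lt {g : List (Fin d) → ℝ} (hg : g [] = 0) {k : ℕ} {u : List (Fin d)}
    (h : u.length < k) : taPow N g k u = 0 := by
  induction k generalizing u with
  | zero => omega
  | succ k ih =>
    by_cases hu : u.length ≤ N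
    · rw [taPow_succ_apply _ _ _ hu]
      apply Finset.sum_eq_zero
      intro i hi
      rcases Nat.eq_zero_or_pos i with rfl | hpos
      · simp [hg]
      · have hi' : i ≤ u.length := Nat.lt_succ_iff.mp (Finset.mem_range.mp hi)
        have : (u.drop i).length < k := by
          rw [List.length_drop]; omega
        rw [ih this, mul_zero]
    · exact taPow_of_lt _ _ (not_le.mp hu)

lemma hasSum_poisson_choose (lam : ℝ) (k : ℕ) :
    HasSum (fun n : ℕ => Real.exp (-lam) * lam ^ n / n.factorial * (n.choose k : ℝ))
      (lam ^ k / k.factorial) := by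
  have hexp : HasSum (fun m : ℕ => lam ^ m / m.factorial) (Real.exp lam) := by
    rw [Real.exp_eq_exp_ℝ]
    exact NormedSpace.expSeries_div_hasSum_exp lam
  have hmul := hexp.mul_left (Real.exp (-lam) * lam ^ k / k.factorial)
  have hval : Real.exp (-lam) * lam ^ k / k.factorial * Real.exp lam = lam ^ k / k.factorial := by
    rw [Real.exp_neg]
    have := Real.exp_pos lam
    field_simp
  rw [hval] at hmul
  have hinj : Function.Injective (fun m : ℕ => k + m) := fun a b h => by simpa using h
  rw [← hinj.hasSum_iff]
  · apply hmul.congr_fun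
    intro m
    have hfact : ((k + m).choose k : ℝ) * (k.factorial : ℝ) * (m.factorial : ℝ)
        = ((k + m).factorial : ℝ) := by
      rw [show k + m = m + k by omega]
      have := congrArg (Nat.cast (R := ℝ)) (Nat.add_choose_mul_factorial_mul_factorial m k)
      push_cast at this ⊢
      linarith
    have h1 : ((k+m).factorial : ℝ) ≠ 0 := Nat.cast_ne_zero.mpr (Nat.factorial_ne_zero _)
    have h2 : (k.factorial : ℝ) ≠ 0 := Nat.cast_ne_zero.mpr (Nat.factorial_ne_zero _)
    have h3 : (m.factorial : ℝ) ≠ 0 := Nat.cast_ne_zero.mpr (Nat.factorial_ne_zero _)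
    show Real.exp (-lam) * lam ^ (k + m) / ((k+m).factorial : ℝ) * (((k+m).choose k : ℕ) : ℝ)
        = Real.exp (-lam) * lam ^ k / k.factorial * (lam ^ m / m.factorial)
    rw [pow_add]
    field_simp
    rw [← hfact]
    ring
  · intro n hn
    have : n < k := by
      by_contra hle
      exact hn ⟨n - k, by simp; omega⟩
    rw [Nat.choose_eq_zero_of_lt this]
    simp

end Alg3

section SigProd
variable {N d : ℕ}

noncomputable def sigProd (N : ℕ) {d : ℕ} (l : List ℕ) (js : ℕ → Fin d → ℝ) : List (Fin d) → ℝ :=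
  l.foldr (fun i acc => taMul N (taExp N (taInj (js i))) acc) taOne

lemma sigProd_nil (js : ℕ → Fin d → ℝ) : sigProd N [] js = taOne := rfl

lemma sigProd_cons (a : ℕ) (t : List ℕ) (js : ℕ → Fin d → ℝ) :
    sigProd N (a :: t) js = taMul N (taExp N (taInj (js a))) (sigProd N t js) := rfl

lemma measurable_sigProd (l : List ℕ) (u : List (Fin d)) :
    Measurable fun js : ℕ → Fin d → ℝ => sigProd N l js u := by
  induction l generalizing u with
  | nil => exact measurable_const
  | cons a t ih =>
    have heq : (fun js : ℕ → Fin d → ℝ => sigProd N (a :: t) js u) =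
        fun js => if u.length ≤ N then ∑ i ∈ Finset.range (u.length + 1),
          taExp N (taInj (js a)) (u.take i) * sigProd N t js (u.drop i) else 0 := by
      funext js
      rw [sigProd_cons, taMul]
    rw [heq]
    split_ifs
    · exact Finset.measurable_sum _ fun i _ =>
        ((measurable_taExp_taInj _).comp (measurable_pi_apply a)).mul (ih _)
    · exact measurable_const

lemma sigProd_congr {l : List ℕ} {js js' : ℕ → Fin d → ℝ} (h : ∀ i ∈ l, js i = js' i) :
    sigProd N l js = sigProd N l js' := by
  induction l with
  | nil => rfl
  | cons a t ih =>
    rw [sigProd_cons, sigProd_cons, h a List.mem_cons_self,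
      ih fun i hi => h i (List.mem_cons_of_mem a hi)]

end SigProd

open ProbabilityTheory

/-- Let `X_t = ∑_{i=1}^{N_t} J_i` be a `d`-dimensional compound Poisson
process with i.i.d. jumps `J_i` having moments of all orders and an independent Poisson
process `N` of intensity `λ`.  Conditionally on `N_1 = n` the Marcus signature on `[0,1]` is
`exp(J_1) ⊗ ⋯ ⊗ exp(J_n)`; its expectation, truncated at level `N`, equals
`exp^{(N)}(λ(E[exp^{(N)}(J)] − 1))` in `T^{(N)}(ℝ^d)`. -/
theorem compound_poisson_expected_signature
    {d N : ℕ} {Ω : Type*} [MeasurableSpace Ω] (P : Measure Ω) [IsProbabilityMeasure P]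
    (lam : ℝ) (hlam : 0 < lam)
    (J : ℕ → Ω → (Fin d → ℝ)) (hJmeas : ∀ i, Measurable (J i))
    (hJid : ∀ i, IdentDistrib (J i) (J 0) P P)
    (hJindep : iIndepFun J P)
    (hJmom : ∀ m : ℕ, Integrable (fun ω => ‖J 0 ω‖ ^ m) P)
    (N₁ : Ω → ℕ) (hNmeas : Measurable N₁)
    (hPoisson : ∀ k : ℕ,
      P {ω | N₁ ω = k} = ENNReal.ofReal (Real.exp (-lam) * lam ^ k / k.factorial))
    (hNJindep : IndepFun N₁ (fun ω i => J i ω) P) :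
    ∀ w : List (Fin d),
      (∫ ω, ((List.range (N₁ ω)).foldr
          (fun i acc => taMul N (taExp N (taInj (J i ω))) acc) taOne) w ∂P) =
        taExp N (fun u => lam * ((∫ ω, taExp N (taInj (J 0 ω)) u ∂P) - taOne u)) w := by
  intro w
  -- notation
  set π : Ω → ℕ → Fin d → ℝ := fun ω i => J i ω with hπdef
  have hπmeas : Measurable π := measurable_pi_lambda _ hJmeas
  set A : List (Fin d) → ℝ := fun u => ∫ ω, taExp N (taInj (J 0 ω)) u ∂P with hAdef
  -- measurability of the basic exponentials
  have he_meas : ∀ (a : ℕ) (u : List (Fin d)),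
      Measurable fun ω => taExp N (taInj (J a ω)) u :=
    fun a u => (measurable_taExp_taInj u).comp (hJmeas a)
  have hHmeas : Measurable fun v : Fin d → ℝ => (1 + ‖v‖) ^ N :=
    (measurable_const.add measurable_norm).pow_const N
  -- integrability of the dominating weight
  have hH : ∀ a : ℕ, Integrable (fun ω => (1 + ‖J a ω‖) ^ N) P := by
    intro a
    have hident : IdentDistrib (fun ω => (1 + ‖J a ω‖) ^ N) (fun ω => (1 + ‖J 0 ω‖) ^ N) P P :=
      (hJid a).comp hHmeas
    rw [hident.integrable_iff]
    apply Integrable.mono (((integrable_const (1:ℝ)).add (hJmom N)).const_mul (2 ^ N))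
    · exact (hHmeas.comp (hJmeas 0)).aestronglyMeasurable
    · apply Filter.Eventually.of_forall
      intro ω
      set x := ‖J 0 ω‖ with hx
      have hx0 : 0 ≤ x := norm_nonneg _
      have h1 : (1 + x) ^ N ≤ 2 ^ N * (1 + x ^ N) := by
        have hmax : 1 + x ≤ 2 * max 1 x := by
          rcases le_total 1 x with h | h
          · rw [max_eq_right h]; linarith
          · rw [max_eq_left h]; linarith
        have hmax2 : (max 1 x) ^ N ≤ 1 + x ^ N := by
          rcases le_total 1 x with h | h
          · rw [max_eq_right h]; nlinarith [pow_nonneg hx0 N]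
          · rw [max_eq_left h]; rw [one_pow]; nlinarith [pow_nonneg hx0 N]
        calc (1 + x) ^ N ≤ (2 * max 1 x) ^ N :=
              pow_le_pow_left₀ (by positivity) hmax N
          _ = 2 ^ N * (max 1 x) ^ N := mul_pow _ _ _
          _ ≤ 2 ^ N * (1 + x ^ N) := by
              apply mul_le_mul_of_nonneg_left hmax2 (by positivity)
      have h2 : ‖(1 + x) ^ N‖ = (1 + x) ^ N := by
        rw [Real.norm_eq_abs, abs_of_nonneg (by positivity)]
      rw [h2]
      calc (1 + x) ^ N ≤ 2 ^ N * (1 + x ^ N) := h1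
        _ ≤ ‖2 ^ N * (1 + x ^ N)‖ := le_abs_self _
  -- integrability of the exponentials
  have he_int : ∀ (a : ℕ) (u : List (Fin d)),
      Integrable (fun ω => taExp N (taInj (J a ω)) u) P := by
    intro a u
    apply Integrable.mono (hH a) ((he_meas a u).aestronglyMeasurable)
    apply Filter.Eventually.of_forall
    intro ω
    rw [Real.norm_eq_abs, Real.norm_eq_abs]
    exact (abs_taExp_taInj_le _ u).trans (le_abs_self _)
  set CA : ℝ := ∫ ω, (1 + ‖J 0 ω‖) ^ N ∂P with hCAdef
  have hCA0 : 0 ≤ CA := integral_nonneg fun ω => by positivity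
  have he_absint : ∀ (a : ℕ) (u : List (Fin d)),
      ∫ ω, |taExp N (taInj (J a ω)) u| ∂P ≤ CA := by
    intro a u
    have hid : ∫ ω, (1 + ‖J a ω‖) ^ N ∂P = CA := ((hJid a).comp hHmeas).integral_eq
    rw [← hid]
    exact integral_mono (he_int a u).abs (hH a) fun ω => abs_taExp_taInj_le _ u
  have he_A : ∀ (a : ℕ) (u : List (Fin d)),
      ∫ ω, taExp N (taInj (J a ω)) u ∂P = A u :=
    fun a u => ((hJid a).comp (measurable_taExp_taInj u)).integral_eq
  set K : ℝ := (N + 1 : ℝ) * CA with hKdef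
  have hK0 : 0 ≤ K := mul_nonneg (by positivity) hCA0
  -- the key induction
  have key : ∀ l : List ℕ, l.Nodup → ∀ u : List (Fin d),
      Integrable (fun ω => sigProd N l (π ω) u) P ∧
      (∫ ω, sigProd N l (π ω) u ∂P) = taPow N A l.length u ∧
      (∫ ω, |sigProd N l (π ω) u| ∂P) ≤ K ^ l.length := by
    intro l
    induction l with
    | nil =>
      intro _ u
      refine ⟨?_, ?_, ?_⟩
      · simpa [sigProd_nil] using integrable_const (taOne u : ℝ)
      · simp [sigProd_nil, taPow]
      · simp only [sigProd_nil, List.length_nil, pow_zero]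
        rw [integral_const]
        simp only [probReal_univ, one_smul]
        unfold taOne
        split_ifs <;> simp
    | cons a t ih =>
      intro hnd
      obtain ⟨ha, ht⟩ := List.nodup_cons.mp hnd
      have iht := ih ht
      -- independence of `J a` from the tail variables
      have hbase : IndepFun (J a) (fun ω (i : t.toFinset) => J i ω) P := by
        have hdisj : Disjoint ({a} : Finset ℕ) t.toFinset :=
          Finset.disjoint_singleton_left.mpr (fun h => ha (List.mem_toFinset.mp h))
        have h0 := hJindep.indepFun_finset {a} t.toFinset hdisj hJmeas
        have h1 := h0.comp
          (measurable_pi_apply (⟨a, Finset.mem_singleton_self a⟩ : ({a} : Finset ℕ)))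
          measurable_id
        exact h1
      -- a measurable extension map
      have hfill_meas : Measurable
          (fun (f : {j : ℕ // j ∈ t.toFinset} → Fin d → ℝ) (i : ℕ) =>
            if h : i ∈ t.toFinset then f ⟨i, h⟩ else 0) := by
        apply measurable_pi_lambda
        intro i
        by_cases h : i ∈ t.toFinset
        · simp only [dif_pos h]; exact measurable_pi_apply _
        · simp only [dif_neg h]; exact measurable_const
      have hrw : ∀ (u2 : List (Fin d)) (ω : Ω),
          sigProd N t (fun i : ℕ =>
            if h : i ∈ t.toFinset then (fun i : t.toFinset => J i ω) ⟨i, h⟩ else 0) u2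
            = sigProd N t (π ω) u2 := by
        intro u2 ω
        exact congrFun (sigProd_congr fun i hi => by
          rw [dif_pos (List.mem_toFinset.mpr hi)]) u2
      have hindep : ∀ (u1 u2 : List (Fin d)) (φ ψ : ℝ → ℝ), Measurable φ → Measurable ψ →
          IndepFun (fun ω => φ (taExp N (taInj (J a ω)) u1))
            (fun ω => ψ (sigProd N t (π ω) u2)) P := by
        intro u1 u2 φ ψ hφ hψ
        have h1 := hbase.comp (hφ.comp (measurable_taExp_taInj (N:=N) u1))
          (hψ.comp ((measurable_sigProd (N:=N) t u2).comp hfill_meas))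
        have h2 : (fun ω => (ψ ∘ ((fun js => sigProd N t js u2) ∘
            (fun (f : {j : ℕ // j ∈ t.toFinset} → Fin d → ℝ) (i : ℕ) =>
              if h : i ∈ t.toFinset then f ⟨i, h⟩ else 0)))
            ((fun ω (i : t.toFinset) => J i ω) ω))
            = fun ω => ψ (sigProd N t (π ω) u2) := by
          funext ω
          simp only [Function.comp_apply]
          rw [hrw u2 ω]
        exact h2 ▸ h1
      intro u
      by_cases hu : u.length ≤ N
      · -- main case
        have hexpand : ∀ ω, sigProd N (a :: t) (π ω) u =
            ∑ i ∈ Finset.range (u.length + 1),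
              taExp N (taInj (J a ω)) (u.take i) * sigProd N t (π ω) (u.drop i) := by
          intro ω
          rw [sigProd_cons, taMul, if_pos hu]
        have hterm_int : ∀ i : ℕ, Integrable
            (fun ω => taExp N (taInj (J a ω)) (u.take i) * sigProd N t (π ω) (u.drop i)) P := by
          intro i
          exact (hindep _ _ id id measurable_id measurable_id).integrable_mul
            (he_int a _) ((iht _).1)
        have habs_int : ∀ i : ℕ, Integrable
            (fun ω => |taExp N (taInj (J a ω)) (u.take i)| * |sigProd N t (π ω) (u.drop i)|) P := by
          intro i
          exact (hindep _ _ (fun x => |x|) (fun x => |x|) measurable_abs measurable_abs).integrable_mul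
            (he_int a _).abs ((iht _).1).abs
        refine ⟨?_, ?_, ?_⟩
        · rw [show (fun ω => sigProd N (a :: t) (π ω) u) = fun ω =>
            ∑ i ∈ Finset.range (u.length + 1),
              taExp N (taInj (J a ω)) (u.take i) * sigProd N t (π ω) (u.drop i)
            from funext hexpand]
          exact integrable_finset_sum _ fun i _ => hterm_int i
        · rw [show (fun ω => sigProd N (a :: t) (π ω) u) = fun ω =>
            ∑ i ∈ Finset.range (u.length + 1),
              taExp N (taInj (J a ω)) (u.take i) * sigProd N t (π ω) (u.drop i)
            from funext hexpand]
          rw [integral_finset_sum _ fun i _ => hterm_int i]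
          have hterm_val : ∀ i ∈ Finset.range (u.length + 1),
              ∫ ω, taExp N (taInj (J a ω)) (u.take i) * sigProd N t (π ω) (u.drop i) ∂P
                = A (u.take i) * taPow N A t.length (u.drop i) := by
            intro i _
            have h := (hindep (u.take i) (u.drop i) id id measurable_id
              measurable_id).integral_fun_mul_eq_mul_integral (he_int a _).aestronglyMeasurable ((iht _).1).aestronglyMeasurable
            simp only [id_eq] at h
            rw [← he_A a (u.take i), ← (iht (u.drop i)).2.1]
            exact h
          rw [Finset.sum_congr rfl hterm_val, List.length_cons, taPow_succ_apply _ _ _ hu]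
        · rw [show (fun ω => |sigProd N (a :: t) (π ω) u|) = fun ω =>
            |∑ i ∈ Finset.range (u.length + 1),
              taExp N (taInj (J a ω)) (u.take i) * sigProd N t (π ω) (u.drop i)|
            from funext fun ω => by rw [hexpand ω]]
          have step1 : ∫ ω, |∑ i ∈ Finset.range (u.length + 1),
              taExp N (taInj (J a ω)) (u.take i) * sigProd N t (π ω) (u.drop i)| ∂P
              ≤ ∑ i ∈ Finset.range (u.length + 1), ∫ ω,
                |taExp N (taInj (J a ω)) (u.take i)| * |sigProd N t (π ω) (u.drop i)| ∂P := by
            rw [← integral_finset_sum _ fun i _ => habs_int i]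
            apply integral_mono ((integrable_finset_sum _ fun i _ => hterm_int i).abs)
              (integrable_finset_sum _ fun i _ => habs_int i)
            intro ω
            refine (Finset.abs_sum_le_sum_abs _ _).trans ?_
            apply Finset.sum_le_sum
            intro i _
            rw [abs_mul]
          have step2 : ∀ i ∈ Finset.range (u.length + 1), ∫ ω,
              |taExp N (taInj (J a ω)) (u.take i)| * |sigProd N t (π ω) (u.drop i)| ∂P
              ≤ CA * K ^ t.length := by
            intro i _
            have h := (hindep (u.take i) (u.drop i) (fun x => |x|) (fun x => |x|) measurable_abs
              measurable_abs).integral_fun_mul_eq_mul_integral (he_int a _).abs.aestronglyMeasurable ((iht _).1).abs.aestronglyMeasurable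
            refine le_trans (le_of_eq h) ?_
            apply mul_le_mul (he_absint a _) ((iht _).2.2)
              (integral_nonneg fun ω => abs_nonneg _) hCA0
          calc ∫ ω, |∑ i ∈ Finset.range (u.length + 1),
              taExp N (taInj (J a ω)) (u.take i) * sigProd N t (π ω) (u.drop i)| ∂P
              ≤ ∑ i ∈ Finset.range (u.length + 1), ∫ ω,
                |taExp N (taInj (J a ω)) (u.take i)| * |sigProd N t (π ω) (u.drop i)| ∂P := step1
            _ ≤ ∑ i ∈ Finset.range (u.length + 1), CA * K ^ t.length :=
                Finset.sum_le_sum step2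
            _ = (u.length + 1 : ℝ) * (CA * K ^ t.length) := by
                rw [Finset.sum_const, Finset.card_range]
                push_cast
                ring
            _ ≤ (N + 1 : ℝ) * (CA * K ^ t.length) := by
                apply mul_le_mul_of_nonneg_right _ (mul_nonneg hCA0 (pow_nonneg hK0 _))
                exact_mod_cast by omega
            _ = K ^ (a :: t).length := by
                rw [List.length_cons, pow_succ, hKdef]
                ring
      · -- trivial case `N < u.length`
        have hzero : ∀ ω, sigProd N (a :: t) (π ω) u = 0 := fun ω => by
          rw [sigProd_cons]
          exact taMul_of_lt _ _ (not_le.mp hu)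
        rw [show (fun ω => sigProd N (a :: t) (π ω) u) = fun _ => (0:ℝ) from funext hzero]
        refine ⟨integrable_const 0, ?_, ?_⟩
        · rw [integral_const, taPow_of_lt _ _ (not_le.mp hu)]
          simp
        · rw [show (fun ω => |sigProd N (a :: t) (π ω) u|) = fun _ => (0:ℝ)
            from funext fun ω => by rw [hzero ω, abs_zero]]
          rw [integral_const]
          simp only [smul_zero]
          exact pow_nonneg hK0 _
  -- Poisson probabilities
  set p : ℕ → ℝ := fun n => Real.exp (-lam) * lam ^ n / n.factorial with hpdef
  have hp0 : ∀ n, 0 ≤ p n := fun n => by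
    rw [hpdef]
    positivity
  have hPn : ∀ n, (P {ω | N₁ ω = n}).toReal = p n := fun n => by
    rw [hPoisson n, ENNReal.toReal_ofReal (hp0 n)]
  -- the conditional signatures
  set f : ℕ → Ω → ℝ := fun n ω => sigProd N (List.range n) (π ω) w with hfdef
  have hf_int : ∀ n, Integrable (f n) P := fun n =>
    (key (List.range n) List.nodup_range w).1
  have hf_val : ∀ n, ∫ ω, f n ω ∂P = taPow N A n w := fun n => by
    have h := (key (List.range n) List.nodup_range w).2.1
    rwa [List.length_range] at h
  have hf_abs : ∀ n, ∫ ω, |f n ω| ∂P ≤ K ^ n := fun n => by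
    have h := (key (List.range n) List.nodup_range w).2.2
    rwa [List.length_range] at h
  -- indicators
  set ind : ℕ → Ω → ℝ := fun n ω => if N₁ ω = n then 1 else 0 with hinddef
  have hSmeas : ∀ n, MeasurableSet {ω | N₁ ω = n} := fun n =>
    hNmeas (measurableSet_singleton n)
  have hind_eq : ∀ n, ind n = Set.indicator {ω | N₁ ω = n} (fun _ => (1:ℝ)) := by
    intro n
    funext ω
    by_cases h : N₁ ω = n
    · rw [Set.indicator_of_mem (show ω ∈ {ω' | N₁ ω' = n} from h)]
      simp [hinddef, h]
    · rw [Set.indicator_of_notMem (show ω ∉ {ω' | N₁ ω' = n} from h)]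
      simp [hinddef, h]
  have hind_int : ∀ n, Integrable (ind n) P := fun n => by
    rw [hind_eq n]
    exact (integrable_const (1:ℝ)).indicator (hSmeas n)
  have hind_val : ∀ n, ∫ ω, ind n ω ∂P = p n := fun n => by
    rw [show (fun ω => ind n ω) = Set.indicator {ω | N₁ ω = n} (fun _ => (1:ℝ)) from hind_eq n,
      integral_indicator_const (1:ℝ) (hSmeas n), smul_eq_mul, mul_one, measureReal_def, hPn n]
  -- independence of the indicator and the conditional signature
  have hIndF : ∀ (n : ℕ) (φ ψ : ℝ → ℝ), Measurable φ → Measurable ψ →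
      IndepFun (fun ω => φ (ind n ω)) (fun ω => ψ (f n ω)) P := by
    intro n φ ψ hφ hψ
    have hφ' : Measurable fun m : ℕ => φ (if m = n then (1:ℝ) else 0) :=
      (hφ.comp (Measurable.ite measurableSet_eq measurable_const measurable_const))
    have hψ' : Measurable fun js : ℕ → Fin d → ℝ => ψ (sigProd N (List.range n) js w) :=
      hψ.comp (measurable_sigProd (List.range n) w)
    exact hNJindep.comp hφ' hψ'
  -- pointwise decomposition over the fibers of `N₁`
  have hpt : ∀ ω, sigProd N (List.range (N₁ ω)) (π ω) w
      = ∑' n, Set.indicator {ω' | N₁ ω' = n} (f n) ω := by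
    intro ω
    rw [tsum_eq_single (N₁ ω) (fun n hn => Set.indicator_of_notMem
      (fun hmem => hn (by exact (Set.mem_setOf_eq ▸ hmem).symm ▸ rfl)) _)]
    · rw [Set.indicator_of_mem (show ω ∈ {ω' | N₁ ω' = N₁ ω} from rfl)]
  have hF_eq : ∀ n, Set.indicator {ω' | N₁ ω' = n} (f n) = fun ω => ind n ω * f n ω := by
    intro n
    funext ω
    by_cases h : N₁ ω = n
    · rw [Set.indicator_of_mem (show ω ∈ {ω' | N₁ ω' = n} from h)]
      simp [hinddef, h]
    · rw [Set.indicator_of_notMem (show ω ∉ {ω' | N₁ ω' = n} from h)]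
      simp [hinddef, h]
  have hIndF' : ∀ n, IndepFun (ind n) (f n) P := fun n => by
    have := hIndF n id id measurable_id measurable_id
    simpa [id_eq] using this
  have hF_int : ∀ n, Integrable (Set.indicator {ω' | N₁ ω' = n} (f n)) P := fun n => by
    rw [hF_eq n]
    exact (hIndF' n).integrable_mul (hind_int n) (hf_int n)
  have hF_val : ∀ n, ∫ ω, Set.indicator {ω' | N₁ ω' = n} (f n) ω ∂P
      = p n * taPow N A n w := by
    intro n
    have h2 := (hIndF' n).integral_fun_mul_eq_mul_integral (hind_int n).aestronglyMeasurable (hf_int n).aestronglyMeasurable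
    have h3 : ∫ ω, Set.indicator {ω' | N₁ ω' = n} (f n) ω ∂P = ∫ ω, ind n ω * f n ω ∂P := by
      rw [hF_eq n]
    rw [h3, ← hind_val n, ← hf_val n]
    exact h2
  -- domination
  have hF_bound : ∀ n, ∫⁻ ω, ‖Set.indicator {ω' | N₁ ω' = n} (f n) ω‖₊ ∂P
      ≤ ENNReal.ofReal (p n * K ^ n) := by
    intro n
    simp only [← enorm_eq_nnnorm]
    rw [← ofReal_integral_norm_eq_lintegral_enorm (hF_int n)]
    apply ENNReal.ofReal_le_ofReal
    have habs : (fun ω => ‖Set.indicator {ω' | N₁ ω' = n} (f n) ω‖)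
        = fun ω => ind n ω * |f n ω| := by
      funext ω
      by_cases h : N₁ ω = n
      · rw [Set.indicator_of_mem (show ω ∈ {ω' | N₁ ω' = n} from h)]
        simp [hinddef, h, Real.norm_eq_abs]
      · rw [Set.indicator_of_notMem (show ω ∉ {ω' | N₁ ω' = n} from h)]
        simp [hinddef, h]
    rw [habs]
    have hind_abs : IndepFun (ind n) (fun ω => |f n ω|) P := by
      have := hIndF n id (fun x => |x|) measurable_id measurable_abs
      simpa [id_eq] using this
    have h2 := hind_abs.integral_fun_mul_eq_mul_integral (hind_int n).aestronglyMeasurable (hf_int n).abs.aestronglyMeasurable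
    refine le_trans (le_of_eq h2) ?_
    rw [hind_val n]
    exact mul_le_mul_of_nonneg_left (hf_abs n) (hp0 n)
  -- summability of the dominating series
  have hsum : Summable (fun n => p n * K ^ n) := by
    apply ((Real.summable_pow_div_factorial (lam * K)).mul_left (Real.exp (-lam))).congr
    intro n
    rw [hpdef, mul_pow]
    ring
  have htsum_ne : (∑' n, ∫⁻ ω, ‖Set.indicator {ω' | N₁ ω' = n} (f n) ω‖₊ ∂P) ≠ ⊤ := by
    apply ne_top_of_le_ne_top _ (ENNReal.tsum_le_tsum hF_bound)
    rw [← ENNReal.ofReal_tsum_of_nonneg (fun n => mul_nonneg (hp0 n) (pow_nonneg hK0 n)) hsum]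
    exact ENNReal.ofReal_ne_top
  -- the left-hand side as a series
  have hLHS : (∫ ω, sigProd N (List.range (N₁ ω)) (π ω) w ∂P)
      = ∑' n, p n * taPow N A n w := by
    rw [show (fun ω => sigProd N (List.range (N₁ ω)) (π ω) w)
      = fun ω => ∑' n, Set.indicator {ω' | N₁ ω' = n} (f n) ω from funext hpt]
    rw [integral_tsum (fun n => (hF_int n).aestronglyMeasurable) htsum_ne]
    exact tsum_congr hF_val
  -- the series evaluates to the truncated exponential
  set g : List (Fin d) → ℝ := fun u => A u - taOne u with hgdef
  have hg_nil : g [] = 0 := by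
    have hA1 : A [] = 1 := by
      show (∫ ω, taExp N (taInj (J 0 ω)) ([] : List (Fin d)) ∂P) = 1
      rw [show (fun ω => taExp N (taInj (J 0 ω)) ([] : List (Fin d))) = fun _ => (1:ℝ)
        from funext fun ω => taExp_taInj_nil _]
      simp
    show A [] - taOne [] = 0
    rw [hA1]
    simp [taOne]
  have hA_split : A = fun u => taOne u + g u := funext fun u => by
    rw [hgdef]
    ring
  have hgk_w : ∀ k, w.length < k → taPow N g k w = 0 := fun k hk =>
    taPow_eq_zero_of_len_lt hg_nil hk
  have hrange : ∀ n : ℕ, ∑ k ∈ Finset.range (n+1), (n.choose k : ℝ) * taPow N g k w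
      = ∑ k ∈ Finset.range (w.length + 1), (n.choose k : ℝ) * taPow N g k w := by
    intro n
    have h1 := Finset.sum_subset (s₁ := Finset.range (n+1))
      (s₂ := Finset.range (max n w.length + 1))
      (Finset.range_subset_range.mpr (by omega))
      (f := fun k => (n.choose k : ℝ) * taPow N g k w)
      (fun k hk hnk => by
        have h3 : n < k := by
          simp only [Finset.mem_range] at hk hnk
          omega
        show ((n.choose k : ℕ) : ℝ) * taPow N g k w = 0
        rw [Nat.choose_eq_zero_of_lt h3]
        simp)
    have h2 := Finset.sum_subset (s₁ := Finset.range (w.length+1))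
      (s₂ := Finset.range (max n w.length + 1))
      (Finset.range_subset_range.mpr (by omega))
      (f := fun k => (n.choose k : ℝ) * taPow N g k w)
      (fun k hk hnk => by
        have h3 : w.length < k := by
          simp only [Finset.mem_range] at hk hnk
          omega
        show ((n.choose k : ℕ) : ℝ) * taPow N g k w = 0
        rw [hgk_w k h3, mul_zero])
    rw [h1, h2]
  have hseries : HasSum (fun n => p n * taPow N A n w)
      (∑ k ∈ Finset.range (w.length + 1), (lam ^ k / k.factorial) * taPow N g k w) := by
    have hk : ∀ k ∈ Finset.range (w.length + 1),
        HasSum (fun n => p n * (n.choose k : ℝ) * taPow N g k w)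
          ((lam ^ k / k.factorial) * taPow N g k w) := by
      intro k _
      apply ((hasSum_poisson_choose lam k).mul_right (taPow N g k w)).congr_fun
      intro n
      rw [hpdef]
    have hsum2 := hasSum_sum hk
    apply hsum2.congr_fun
    intro n
    rw [hA_split, taPow_one_add, hrange n, Finset.mul_sum]
    apply Finset.sum_congr rfl
    intro k _
    ring
  have hRHS : taExp N (fun u => lam * g u) w
      = ∑ k ∈ Finset.range (w.length + 1), (lam ^ k / k.factorial) * taPow N g k w := by
    have hterm : ∀ k, ((k.factorial : ℝ))⁻¹ * taPow N (fun u => lam * g u) k w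
        = (lam ^ k / k.factorial) * taPow N g k w := fun k => by
      rw [taPow_smul]
      ring
    have hstep : taExp N (fun u => lam * g u) w
        = ∑ k ∈ Finset.range (N + 1), (lam ^ k / k.factorial) * taPow N g k w :=
      Finset.sum_congr rfl fun k _ => hterm k
    rw [hstep]
    have h1 := Finset.sum_subset (s₁ := Finset.range (N+1))
      (s₂ := Finset.range (max N w.length + 1))
      (Finset.range_subset_range.mpr (by omega))
      (f := fun k => (lam ^ k / k.factorial) * taPow N g k w)
      (fun k hk hnk => by
        have hNk : N < k := by
          simp only [Finset.mem_range] at hk hnk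
          omega
        show (lam ^ k / k.factorial) * taPow N g k w = 0
        by_cases hwk : w.length < k
        · rw [hgk_w k hwk, mul_zero]
        · rw [taPow_of_lt _ _ (show N < w.length by omega), mul_zero])
    have h2 := Finset.sum_subset (s₁ := Finset.range (w.length+1))
      (s₂ := Finset.range (max N w.length + 1))
      (Finset.range_subset_range.mpr (by omega))
      (f := fun k => (lam ^ k / k.factorial) * taPow N g k w)
      (fun k hk hnk => by
        have h3 : w.length < k := by
          simp only [Finset.mem_range] at hk hnk
          omega
        show (lam ^ k / k.factorial) * taPow N g k w = 0
        rw [hgk_w k h3, mul_zero])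
    rw [h1, h2]
  have final : (∫ ω, sigProd N (List.range (N₁ ω)) (π ω) w ∂P)
      = taExp N (fun u => lam * g u) w := by
    rw [hLHS, hseries.tsum_eq, hRHS]
  exact final
end
end

section
/- Let p ∈ [2,3) and let 𝐗 = (X, 𝕏) be a level-2 rough path over ℝ^d on [0,T] (Chen's relation holds and X, 𝕏 have finite p- and p/2-variation respectively, as two-parameter functions). Define 𝕏̃_{s,t} := 𝕏_{s,t} + (Δ_s X) ⊗ X_{s,t}, where Δ_s X = X_s − X_{s-}. Then for all s ≤ u ≤ t: 𝕏̃_{s,t} − 𝕏̃_{s,u} − 𝕏̃_{u,t} = X^-_{s,u} ⊗ X_{u,t}, where X^-_t := X_{t-} (with X^-_0 := X_0), and 𝕏̃ has finite p/2-variation. -/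
open scoped BigOperators
open MeasureTheory

noncomputable section

lemma euclid_abs_coord_le {d : ℕ} (a : EuclideanSpace ℝ (Fin d)) (i : Fin d) : |a i| ≤ ‖a‖ := by
  rw [EuclideanSpace.norm_eq, ← Real.sqrt_sq_eq_abs]
  apply Real.sqrt_le_sqrt
  simpa [Real.norm_eq_abs, sq_abs] using
    Finset.single_le_sum (f := fun j => ‖a j‖ ^ 2) (fun j _ => sq_nonneg _) (Finset.mem_univ i)

lemma jump_sum_le {d : ℕ} {T p M : ℝ} (hT : 0 < T) (hp : 1 ≤ p)
    {X : ℝ → EuclideanSpace ℝ (Fin d)} (hXc : Cadlag X 0 T)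
    (hM : ∀ P : Finset ℝ, IsPartition 0 T P → varSum X p T P ≤ M)
    (F : Finset ℝ) (hF : ↑F ⊆ Set.Icc (0:ℝ) T) :
    ∑ x ∈ F, ‖jump X 0 x‖ ^ p ≤ M := by
  have hp0 : (0:ℝ) < p := lt_of_lt_of_le one_pos hp
  -- reduce to F' of positive points
  set F' : Finset ℝ := F.filter (fun x => 0 < x) with hF'
  have hsplit : ∑ x ∈ F, ‖jump X 0 x‖ ^ p = ∑ x ∈ F', ‖jump X 0 x‖ ^ p := by
    rw [← Finset.sum_filter_add_sum_filter_not F (fun x => 0 < x)]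
    have : ∑ x ∈ F.filter (fun x => ¬ 0 < x), ‖jump X 0 x‖ ^ p = 0 := by
      apply Finset.sum_eq_zero
      intro x hx
      rcases Finset.mem_filter.1 hx with ⟨hxF, hx0⟩
      have hx0' : x = 0 := le_antisymm (not_lt.1 hx0) (hF hxF).1
      subst hx0'
      rw [jump, minus, if_pos le_rfl, sub_self, norm_zero, Real.zero_rpow (ne_of_gt hp0)]
    rw [this, add_zero]
  rw [hsplit]
  -- suffices to bound by M + ε for all ε > 0
  by_contra hcon
  push_neg at hcon
  set ε : ℝ := (∑ x ∈ F', ‖jump X 0 x‖ ^ p - M) / 2 with hε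
  have hεpos : 0 < ε := by simp only [hε]; linarith
  set ε' : ℝ := ε / (F'.card + 1) with hε'
  have hε'pos : 0 < ε' := by positivity
  set G : Finset ℝ := insert (0:ℝ) F with hG
  -- choose approximating points
  have key : ∀ x : ℝ, ∃ y : ℝ, x ∈ F' →
      ((∀ z ∈ G, z < x → z < y) ∧ y < x ∧ ‖jump X 0 x‖ ^ p ≤ ‖X x - X y‖ ^ p + ε') := by
    intro x
    by_cases hx : x ∈ F'
    · rcases Finset.mem_filter.1 hx with ⟨hxF, hx0⟩
      have hxT : x ≤ T := (hF hxF).2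
      obtain ⟨L, hL⟩ := hXc.2 x ⟨hx0, hxT⟩
      have hmin : minus X 0 x = L := by
        rw [minus, if_neg (not_le.2 hx0)]
        exact leftLim_eq_of_tendsto hL
      have hGne : (G.filter (· < x)).Nonempty :=
        ⟨0, Finset.mem_filter.2 ⟨Finset.mem_insert_self _ _, hx0⟩⟩
      set m : ℝ := (G.filter (· < x)).max' hGne with hm
      have hmx : m < x := (Finset.mem_filter.1 ((G.filter (· < x)).max'_mem hGne)).2
      have h1 : Filter.Tendsto (fun y => ‖X x - X y‖ ^ p) (nhdsWithin x (Set.Iio x))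
          (nhds (‖X x - L‖ ^ p)) :=
        ((Filter.Tendsto.sub tendsto_const_nhds hL).norm).rpow_const (Or.inr hp0.le)
      have hlt : ‖jump X 0 x‖ ^ p - ε' < ‖X x - L‖ ^ p := by
        rw [jump, hmin]; linarith
      have h2 := h1.eventually_const_lt hlt
      have h3 : Set.Ioo m x ∈ nhdsWithin x (Set.Iio x) :=
        Ioo_mem_nhdsLT_of_mem ⟨hmx, le_refl x⟩
      obtain ⟨y, hy1, hy2⟩ := (h2.and (Filter.eventually_of_mem h3 (fun z hz => hz))).exists
      refine ⟨y, fun _ => ⟨?_, hy2.2, by linarith [hy1]⟩⟩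
      · intro z hz hzx
        have : z ≤ m := Finset.le_max' (G.filter (· < x)) z (Finset.mem_filter.2 ⟨hz, hzx⟩)
        exact lt_of_le_of_lt this hy2.1
    · exact ⟨0, fun h => absurd h hx⟩
  choose y hy using key
  -- basic facts about y
  have hylt : ∀ x ∈ F', y x < x := fun x hx => (hy x hx).2.1
  have hypos : ∀ x ∈ F', 0 < y x := fun x hx =>
    (hy x hx).1 0 (Finset.mem_insert_self _ _) (Finset.mem_filter.1 hx).2
  have hyG : ∀ x ∈ F', ∀ z ∈ G, z < x → z < y x := fun x hx => (hy x hx).1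
  have hF'G : ∀ x ∈ F', x ∈ G := fun x hx =>
    Finset.mem_insert_of_mem (Finset.mem_filter.1 hx).1
  -- the refining partition
  set Q : Finset ℝ := insert 0 (insert T (F' ∪ F'.image y)) with hQ
  have hQmem : ∀ x ∈ F', x ∈ Q := fun x hx => by
    simp only [hQ, Finset.mem_insert, Finset.mem_union]
    exact Or.inr (Or.inr (Or.inl hx))
  have hQymem : ∀ x ∈ F', y x ∈ Q := fun x hx => by
    simp only [hQ, Finset.mem_insert, Finset.mem_union, Finset.mem_image]
    exact Or.inr (Or.inr (Or.inr ⟨x, hx, rfl⟩))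
  have hQpart : IsPartition 0 T Q := by
    refine ⟨Finset.mem_insert_self _ _, by simp [hQ], ?_⟩
    intro q hq
    simp only [hQ, Finset.mem_insert, Finset.mem_union, Finset.mem_image] at hq
    rcases hq with rfl | rfl | hq | ⟨x, hx, rfl⟩
    · exact ⟨le_rfl, hT.le⟩
    · exact ⟨hT.le, le_rfl⟩
    · exact hF (Finset.mem_filter.1 hq).1
    · exact ⟨(hypos x hx).le, le_trans (hylt x hx).le (hF (Finset.mem_filter.1 hx).1).2⟩
  -- nextPt of y x in Q is x
  have hnext : ∀ x ∈ F', nextPt Q T (y x) = x := by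
    intro x hx
    have hxT : x ≤ T := (hF (Finset.mem_filter.1 hx).1).2
    have hxS : x ∈ Q.filter (fun z => y x < z) :=
      Finset.mem_filter.2 ⟨hQmem x hx, hylt x hx⟩
    have hminle : (Q.filter (fun z => y x < z)).min ≤ (x : WithTop ℝ) := Finset.min_le hxS
    have hlemin : (x : WithTop ℝ) ≤ (Q.filter (fun z => y x < z)).min := by
      apply Finset.le_min
      intro b hb
      rcases Finset.mem_filter.1 hb with ⟨hbQ, hyb⟩
      simp only [hQ, Finset.mem_insert, Finset.mem_union, Finset.mem_image] at hbQ
      rcases hbQ with rfl | rfl | hbF | ⟨x', hx', rfl⟩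
      · exact absurd hyb (not_lt.2 (hypos x hx).le)
      · exact_mod_cast hxT
      · have hxb : x ≤ b := by
          by_contra hc
          push_neg at hc
          exact lt_asymm hyb (hyG x hx b (hF'G b hbF) hc)
        exact_mod_cast hxb
      · rcases lt_trichotomy x' x with h | rfl | h
        · have h1 : x' < y x := hyG x hx x' (hF'G x' hx') h
          have h2 : y x' < x' := hylt x' hx'
          exact absurd hyb (not_lt.2 (h2.trans h1).le)
        · exact absurd hyb (lt_irrefl _)
        · have h1 : x < y x' := hyG x' hx' x (hF'G x hx) h
          exact_mod_cast h1.le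
    have : (Q.filter (fun z => y x < z)).min = (x : WithTop ℝ) := le_antisymm hminle hlemin
    rw [nextPt, this]; rfl
  -- injectivity of y on F'
  have hinj : ∀ a ∈ F', ∀ b ∈ F', y a = y b → a = b := by
    intro a ha b hb hab
    rcases lt_trichotomy a b with h | h | h
    · have h1 : a < y b := hyG b hb a (hF'G a ha) h
      have h2 : y a < a := hylt a ha
      rw [hab] at h2; exact absurd (h2.trans h1) (lt_irrefl _)
    · exact h
    · have h1 : b < y a := hyG a ha b (hF'G b hb) h
      have h2 : y b < b := hylt b hb
      rw [← hab] at h2; exact absurd (h2.trans h1) (lt_irrefl _)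
  -- sum comparison
  have himg : F'.image y ⊆ Q.erase T := by
    intro z hz
    rcases Finset.mem_image.1 hz with ⟨x, hx, rfl⟩
    refine Finset.mem_erase.2 ⟨?_, hQymem x hx⟩
    have : y x < x := hylt x hx
    have hxT : x ≤ T := (hF (Finset.mem_filter.1 hx).1).2
    exact ne_of_lt (lt_of_lt_of_le this hxT)
  have h4 : ∑ x ∈ F', ‖X x - X (y x)‖ ^ p ≤ varSum X p T Q := by
    calc ∑ x ∈ F', ‖X x - X (y x)‖ ^ p
        = ∑ x ∈ F', ‖X (nextPt Q T (y x)) - X (y x)‖ ^ p := by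
          apply Finset.sum_congr rfl
          intro x hx
          rw [hnext x hx]
      _ = ∑ z ∈ F'.image y, ‖X (nextPt Q T z) - X z‖ ^ p := by rw [Finset.sum_image hinj]
      _ ≤ varSum X p T Q := by
          apply Finset.sum_le_sum_of_subset_of_nonneg himg
          intro z _ _
          exact Real.rpow_nonneg (norm_nonneg _) p
  have h5 : varSum X p T Q ≤ M := hM Q hQpart
  have h6 : ∑ x ∈ F', ‖jump X 0 x‖ ^ p ≤ ∑ x ∈ F', (‖X x - X (y x)‖ ^ p + ε') :=
    Finset.sum_le_sum (fun x hx => (hy x hx).2.2)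
  rw [Finset.sum_add_distrib, Finset.sum_const, nsmul_eq_mul] at h6
  have hcard : (F'.card : ℝ) * ε' ≤ ε := by
    have h0 : (0:ℝ) < (F'.card : ℝ) + 1 := by positivity
    rw [hε', mul_div_assoc', div_le_iff₀ h0]
    nlinarith
  have : ∑ x ∈ F', ‖jump X 0 x‖ ^ p ≤ M + ε := by linarith
  simp only [hε] at this
  linarith


/-- Let `p ∈ [2,3)` and let `(X, 𝕏)` be a càdlàg level-2 rough path over
`ℝ^d` (Chen's relation; `X`, `𝕏` of finite `p`- resp. `p/2`-variation).  Then
`𝕏̃_{s,t} = 𝕏_{s,t} + Δ_sX ⊗ X_{s,t}` satisfies the modified Chen relation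
`𝕏̃_{s,t} − 𝕏̃_{s,u} − 𝕏̃_{u,t} = X⁻_{s,u} ⊗ X_{u,t}` and has finite `p/2`-variation. -/
theorem tilde_enhancement_chen_and_variation
    {d : ℕ} (T p : ℝ) (hT : 0 < T) (hp1 : 2 ≤ p) (hp2 : p < 3)
    (X : ℝ → EuclideanSpace ℝ (Fin d)) (hXc : Cadlag X 0 T)
    (hXv : HasFiniteVar X p 0 T)
    (𝕏 : ℝ → ℝ → (Fin d → Fin d → ℝ))
    (hChen : ∀ s u t : ℝ, 0 ≤ s → s ≤ u → u ≤ t → t ≤ T →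
      𝕏 s t = fun i j => 𝕏 s u i j + 𝕏 u t i j + (X u i - X s i) * (X t j - X u j))
    (h𝕏v : HasFiniteVar2 𝕏 (p / 2) 0 T)
    (Xt : ℝ → ℝ → (Fin d → Fin d → ℝ))
    (hXt : ∀ s t : ℝ, Xt s t = fun i j => 𝕏 s t i j + jump X 0 s i * (X t j - X s j)) :
    (∀ s u t : ℝ, 0 ≤ s → s ≤ u → u ≤ t → t ≤ T →
        (fun i j => Xt s t i j - Xt s u i j - Xt u t i j) =
          fun i j => (minus X 0 u i - minus X 0 s i) * (X t j - X u j)) ∧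
      HasFiniteVar2 Xt (p / 2) 0 T := by
  obtain ⟨M, hM⟩ := hXv
  obtain ⟨M2, hM2⟩ := h𝕏v
  have hp0 : (0:ℝ) < p := by linarith
  set q : ℝ := p / 2 with hq
  have hq1 : (1:ℝ) ≤ q := by rw [hq]; linarith
  have hq0 : (0:ℝ) < q := by linarith
  constructor
  · intro s u t h0s hsu hut htT
    funext i j
    simp only [hXt, hChen s u t h0s hsu hut htT, jump, PiLp.sub_apply]
    ring
  · refine ⟨(2:ℝ) ^ q * (M2 + (M + M)), ?_⟩
    intro P hP
    have hterm : ∀ x ∈ P.erase T, ‖Xt x (nextPt P T x)‖ ^ q ≤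
        (2:ℝ) ^ q * (‖𝕏 x (nextPt P T x)‖ ^ q +
          (‖jump X 0 x‖ ^ p + ‖X (nextPt P T x) - X x‖ ^ p)) := by
      intro x _
      set t' : ℝ := nextPt P T x with ht'
      set A : ℝ := ‖𝕏 x t'‖ with hA
      set a : ℝ := ‖jump X 0 x‖ with ha
      set b : ℝ := ‖X t' - X x‖ with hb
      have hA0 : 0 ≤ A := norm_nonneg _
      have ha0 : 0 ≤ a := norm_nonneg _
      have hb0 : 0 ≤ b := norm_nonneg _
      have h1 : ‖Xt x t'‖ ≤ A + a * b := by
        rw [hXt]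
        rw [pi_norm_le_iff_of_nonneg (by positivity)]
        intro i
        rw [pi_norm_le_iff_of_nonneg (by positivity)]
        intro j
        rw [Real.norm_eq_abs]
        have e1 : |𝕏 x t' i j| ≤ A := le_trans (norm_le_pi_norm (𝕏 x t' i) j)
          (norm_le_pi_norm (𝕏 x t') i)
        have e2 : |jump X 0 x i| ≤ a := euclid_abs_coord_le _ i
        have e3 : |X t' j - X x j| ≤ b := by
          have := euclid_abs_coord_le (X t' - X x) j
          rwa [PiLp.sub_apply] at this
        calc |𝕏 x t' i j + jump X 0 x i * (X t' j - X x j)|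
            ≤ |𝕏 x t' i j| + |jump X 0 x i * (X t' j - X x j)| := abs_add_le _ _
          _ = |𝕏 x t' i j| + |jump X 0 x i| * |X t' j - X x j| := by rw [abs_mul]
          _ ≤ A + a * b := add_le_add e1 (mul_le_mul e2 e3 (abs_nonneg _) ha0)
      have h2 : ‖Xt x t'‖ ^ q ≤ (A + a * b) ^ q :=
        Real.rpow_le_rpow (norm_nonneg _) h1 hq0.le
      have hab0 : 0 ≤ a * b := mul_nonneg ha0 hb0
      have hmax0 : 0 ≤ max A (a * b) := le_trans hA0 (le_max_left _ _)
      have h3 : (A + a * b) ^ q ≤ (2:ℝ) ^ q * (A ^ q + (a * b) ^ q) := by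
        have e1 : A + a * b ≤ 2 * max A (a * b) := by
          rcases max_cases A (a * b) with ⟨h, h'⟩ | ⟨h, h'⟩ <;> rw [h] <;> linarith
        calc (A + a * b) ^ q ≤ (2 * max A (a * b)) ^ q :=
              Real.rpow_le_rpow (by positivity) e1 hq0.le
          _ = (2:ℝ) ^ q * (max A (a * b)) ^ q := Real.mul_rpow (by norm_num) hmax0
          _ ≤ (2:ℝ) ^ q * (A ^ q + (a * b) ^ q) := by
              apply mul_le_mul_of_nonneg_left _ (by positivity)
              rcases max_choice A (a * b) with h | h <;> rw [h]
              · exact le_add_of_nonneg_right (Real.rpow_nonneg hab0 q)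
              · exact le_add_of_nonneg_left (Real.rpow_nonneg hA0 q)
      have h4 : (a * b) ^ q ≤ a ^ p + b ^ p := by
        set m : ℝ := max a b with hm
        have hm0 : 0 ≤ m := le_trans ha0 (le_max_left _ _)
        have e1 : a * b ≤ m * m :=
          mul_le_mul (le_max_left _ _) (le_max_right _ _) hb0 hm0
        have e2 : m * m = m ^ (2:ℝ) := by
          rw [show ((2:ℝ) = ((2:ℕ):ℝ)) by norm_num, Real.rpow_natCast]
          ring
        calc (a * b) ^ q ≤ (m * m) ^ q := Real.rpow_le_rpow hab0 e1 hq0.le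
          _ = (m ^ (2:ℝ)) ^ q := by rw [e2]
          _ = m ^ p := by
              rw [← Real.rpow_mul hm0]
              congr 1
              rw [hq]; ring
          _ ≤ a ^ p + b ^ p := by
              rcases max_choice a b with h | h <;> rw [hm, h]
              · exact le_add_of_nonneg_right (Real.rpow_nonneg hb0 p)
              · exact le_add_of_nonneg_left (Real.rpow_nonneg ha0 p)
      calc ‖Xt x t'‖ ^ q ≤ (2:ℝ) ^ q * (A ^ q + (a * b) ^ q) := h2.trans h3
        _ ≤ (2:ℝ) ^ q * (A ^ q + (a ^ p + b ^ p)) := by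
            apply mul_le_mul_of_nonneg_left (add_le_add_right h4 _) (by positivity)
    have hsum : varSum2 Xt q T P ≤
        (2:ℝ) ^ q * (varSum2 𝕏 q T P +
          ((∑ x ∈ P.erase T, ‖jump X 0 x‖ ^ p) + varSum X p T P)) := by
      rw [varSum2, varSum2, varSum]
      rw [← Finset.sum_add_distrib, ← Finset.sum_add_distrib, Finset.mul_sum]
      exact Finset.sum_le_sum hterm
    have hjs : ∑ x ∈ P.erase T, ‖jump X 0 x‖ ^ p ≤ M := by
      apply jump_sum_le hT (by linarith) hXc hM
      intro x hx
      exact hP.2.2 x (Finset.mem_of_mem_erase hx)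
    have hXsum : varSum X p T P ≤ M := hM P hP
    have h𝕏sum : varSum2 𝕏 q T P ≤ M2 := hM2 P hP
    calc varSum2 Xt q T P ≤ (2:ℝ) ^ q * (varSum2 𝕏 q T P +
          ((∑ x ∈ P.erase T, ‖jump X 0 x‖ ^ p) + varSum X p T P)) := hsum
      _ ≤ (2:ℝ) ^ q * (M2 + (M + M)) := by
          apply mul_le_mul_of_nonneg_left _ (by positivity)
          exact add_le_add h𝕏sum (add_le_add hjs hXsum)
end
end

section
/- Let Ξ_{s,t} be a two-parameter ℝ^e-valued function on {0 ≤ s ≤ t ≤ T} satisfying the additivity-defect relation Ξ_{s,t} − Ξ_{s,u} − Ξ_{u,t} = X^-_{s,u} ⊗ X_{u,t} for a càdlàg X, and suppose t ↦ Ξ_{0,t} is càdlàg. Then for every ε > 0 there exists a finite partition 0 = t₀ < t₁ < ⋯ < t_n = T such that the oscillation of Ξ on each open interval (t_i, t_{i+1}) is at most ε, where Osc(Ξ, I) := sup{|Ξ_{u,v}| : u ≤ v, u,v ∈ I}. -/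
open scoped BigOperators
open MeasureTheory

noncomputable section

section GoodP
variable {E : Type*} [NormedAddCommGroup E]

def GoodPart (f : ℝ → E) (δ t : ℝ) : Prop :=
  ∃ n : ℕ, ∃ τ : Fin (n + 1) → ℝ, StrictMono τ ∧ τ 0 = 0 ∧ τ (Fin.last n) = t ∧
    ∀ i : Fin n, ∀ u v : ℝ, τ i.castSucc < u → u ≤ v → v < τ i.succ →
      ‖f v - f u‖ ≤ δ

lemma GoodPart.extend {f : ℝ → E} {δ t t' : ℝ} (h : GoodPart f δ t) (htt' : t < t')
    (hosc : ∀ u v : ℝ, t < u → u ≤ v → v < t' → ‖f v - f u‖ ≤ δ) :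
    GoodPart f δ t' := by
  obtain ⟨n, τ, hmono, h0, hlast, hI⟩ := h
  refine ⟨n + 1, Fin.snoc τ t', ?_, ?_, ?_, ?_⟩
  · rw [Fin.strictMono_iff_lt_succ]
    intro i
    refine Fin.lastCases ?_ ?_ i
    · rw [Fin.succ_last, Fin.snoc_last, Fin.snoc_castSucc, hlast]
      exact htt'
    · intro j
      rw [Fin.succ_castSucc, Fin.snoc_castSucc, Fin.snoc_castSucc]
      exact hmono (Fin.castSucc_lt_succ (i := j))
  · have : (0 : Fin (n + 2)) = (0 : Fin (n + 1)).castSucc := by simp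
    rw [this, Fin.snoc_castSucc, h0]
  · rw [Fin.snoc_last]
  · intro i
    refine Fin.lastCases ?_ ?_ i
    · intro u v hu huv hv
      rw [Fin.snoc_castSucc, hlast] at hu
      rw [Fin.succ_last, Fin.snoc_last] at hv
      exact hosc u v hu huv hv
    · intro j u v hu huv hv
      rw [Fin.snoc_castSucc] at hu
      rw [Fin.succ_castSucc, Fin.snoc_castSucc] at hv
      exact hI j u v hu huv hv

lemma goodPart_zero (f : ℝ → E) (δ : ℝ) : GoodPart f δ 0 := by
  refine ⟨0, fun _ => 0, ?_, rfl, rfl, fun i => i.elim0⟩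
  intro i j hij
  exact absurd (Fin.ext (by omega : i.val = j.val)) (ne_of_lt hij)

lemma goodPart_of_cadlag {f : ℝ → E} {T : ℝ} (hT : 0 < T) (hf : Cadlag f 0 T)
    {δ : ℝ} (hδ : 0 < δ) : GoodPart f δ T := by
  -- right extension property
  have hright : ∀ t, 0 ≤ t → t < T → ∃ t', t < t' ∧ t' ≤ T ∧
      ∀ u v : ℝ, t < u → u ≤ v → v < t' → ‖f v - f u‖ ≤ δ := by
    intro t ht htT
    have htend := hf.1 t ⟨ht, htT⟩
    have hmem : f ⁻¹' Metric.closedBall (f t) (δ / 2) ∈ nhdsWithin t (Set.Ici t) :=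
      htend (Metric.closedBall_mem_nhds (f t) (half_pos hδ))
    rw [Metric.mem_nhdsWithin_iff] at hmem
    obtain ⟨η, hη, hball⟩ := hmem
    refine ⟨min (t + η) T, lt_min (by linarith) htT, min_le_right _ _, ?_⟩
    intro u v hu huv hv
    have hb : ∀ w : ℝ, t < w → w < min (t + η) T → ‖f w - f t‖ ≤ δ / 2 := by
      intro w hw hw'
      have : w ∈ Metric.ball t η ∩ Set.Ici t := by
        constructor
        · rw [Metric.mem_ball, Real.dist_eq, abs_lt]
          constructor <;> [linarith; skip]
          have := lt_of_lt_of_le hw' (min_le_left _ _)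
          linarith
        · exact le_of_lt hw
      have := hball this
      simpa [Metric.mem_closedBall, dist_eq_norm] using this
    have h1 := hb u hu (lt_of_le_of_lt huv hv)
    have h2 := hb v (lt_of_lt_of_le hu huv) hv
    calc ‖f v - f u‖ = ‖(f v - f t) - (f u - f t)‖ := by abel_nf
      _ ≤ ‖f v - f t‖ + ‖f u - f t‖ := norm_sub_le _ _
      _ ≤ δ / 2 + δ / 2 := add_le_add h2 h1
      _ = δ := by ring
  set A : Set ℝ := {t | t ≤ T ∧ GoodPart f δ t} with hA
  have h0A : (0 : ℝ) ∈ A := ⟨hT.le, goodPart_zero f δ⟩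
  have hbdd : BddAbove A := ⟨T, fun x hx => hx.1⟩
  have hne : A.Nonempty := ⟨0, h0A⟩
  set c := sSup A with hc
  have hcT : c ≤ T := csSup_le hne fun x hx => hx.1
  -- c > 0
  obtain ⟨t0, h0t0, ht0T, hosc0⟩ := hright 0 le_rfl hT
  have ht0A : t0 ∈ A := ⟨ht0T, (goodPart_zero f δ).extend h0t0 hosc0⟩
  have hcpos : 0 < c := lt_of_lt_of_le h0t0 (le_csSup hbdd ht0A)
  -- c ∈ A
  obtain ⟨L, hL⟩ := hf.2 c ⟨hcpos, hcT⟩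
  have hmem : f ⁻¹' Metric.closedBall L (δ / 2) ∈ nhdsWithin c (Set.Iio c) :=
    hL (Metric.closedBall_mem_nhds L (half_pos hδ))
  rw [Metric.mem_nhdsWithin_iff] at hmem
  obtain ⟨η, hη, hball⟩ := hmem
  have hbL : ∀ w : ℝ, c - η < w → w < c → ‖f w - L‖ ≤ δ / 2 := by
    intro w hw hw'
    have : w ∈ Metric.ball c η ∩ Set.Iio c := by
      refine ⟨?_, hw'⟩
      rw [Metric.mem_ball, Real.dist_eq, abs_lt]
      constructor <;> linarith
    have := hball this
    simpa [Metric.mem_closedBall, dist_eq_norm] using this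
  obtain ⟨t1, ht1A, ht1⟩ := exists_lt_of_lt_csSup hne (by linarith : c - η < c)
  have ht1c : t1 ≤ c := le_csSup hbdd ht1A
  have hgc : GoodPart f δ c := by
    rcases eq_or_lt_of_le ht1c with h | h
    · exact h ▸ ht1A.2
    · refine ht1A.2.extend h ?_
      intro u v hu huv hv
      have h1 := hbL u (lt_trans ht1 hu) (lt_of_le_of_lt huv hv)
      have h2 := hbL v (lt_trans ht1 (lt_of_lt_of_le hu huv)) hv
      calc ‖f v - f u‖ = ‖(f v - L) - (f u - L)‖ := by abel_nf
        _ ≤ ‖f v - L‖ + ‖f u - L‖ := norm_sub_le _ _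
        _ ≤ δ / 2 + δ / 2 := add_le_add h2 h1
        _ = δ := by ring
  rcases eq_or_lt_of_le hcT with h | h
  · exact h ▸ hgc
  · obtain ⟨t', hct', ht'T, hosc'⟩ := hright c hcpos.le h
    have : t' ≤ c := le_csSup hbdd ⟨ht'T, hgc.extend hct' hosc'⟩
    linarith

lemma partition_locate {n : ℕ} {τ : Fin (n + 1) → ℝ} (hmono : StrictMono τ) {t : ℝ}
    (h0 : τ 0 ≤ t) (h1 : t ≤ τ (Fin.last n)) :
    (∃ i, τ i = t) ∨ ∃ i : Fin n, τ i.castSucc < t ∧ t < τ i.succ := by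
  classical
  set s : Finset (Fin (n + 1)) := Finset.univ.filter (fun i => τ i ≤ t) with hs
  have hsne : s.Nonempty := ⟨0, by simp [hs, h0]⟩
  set i0 := s.max' hsne with hi0def
  have hi0 : τ i0 ≤ t := by
    have := s.max'_mem hsne
    simpa [hs] using this
  rcases eq_or_lt_of_le hi0 with heq | hlt
  · exact Or.inl ⟨i0, heq⟩
  · have hi0ne : i0 ≠ Fin.last n := by
      intro h
      rw [h] at hlt; linarith
    have hi0lt : (i0 : ℕ) < n := by
      have := i0.isLt
      have : (i0 : ℕ) ≠ n := fun h => hi0ne (Fin.ext (by simp [h]))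
      omega
    set j : Fin n := ⟨i0, hi0lt⟩ with hj
    have hcast : j.castSucc = i0 := Fin.ext rfl
    refine Or.inr ⟨j, by rw [hcast]; exact hlt, ?_⟩
    by_contra hc
    push_neg at hc
    have hmem : j.succ ∈ s := by simp [hs, hc]
    have := s.le_max' _ hmem
    rw [← hi0def] at this
    have : j.castSucc < j.succ := Fin.castSucc_lt_succ (i := j)
    rw [hcast] at this
    exact absurd (le_antisymm (s.le_max' _ hmem) (by exact le_of_lt this)) (ne_of_gt this)

lemma bound_of_goodPart {f : ℝ → E} {T δ : ℝ} (hδ : 0 ≤ δ) (h : GoodPart f δ T) :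
    ∃ B : ℝ, 0 ≤ B ∧ ∀ t : ℝ, 0 ≤ t → t ≤ T → ‖f t - f 0‖ ≤ B := by
  obtain ⟨n, τ, hmono, h0, hlast, hI⟩ := h
  rcases n with _ | m
  · -- T = 0
    refine ⟨0, le_rfl, fun t ht htT => ?_⟩
    have : T = 0 := by rw [← hlast, ← h0]; rfl
    have : t = 0 := le_antisymm (this ▸ htT) ht
    simp [this]
  · set mid : Fin (m + 1) → ℝ := fun i => (τ i.castSucc + τ i.succ) / 2 with hmid
    have hmidmem : ∀ i : Fin (m + 1), τ i.castSucc < mid i ∧ mid i < τ i.succ := by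
      intro i
      have := hmono (Fin.castSucc_lt_succ (i := i))
      constructor <;> [skip; skip] <;> simp [hmid] <;> linarith
    set B1 := Finset.univ.sup' ⟨0, Finset.mem_univ 0⟩ (fun i : Fin (m + 2) => ‖f (τ i) - f 0‖)
    set B2 := Finset.univ.sup' ⟨0, Finset.mem_univ 0⟩ (fun i : Fin (m + 1) => ‖f (mid i) - f 0‖ + δ)
    refine ⟨max B1 B2, ?_, ?_⟩
    · have hb : ‖f (τ 0) - f 0‖ ≤ B1 :=
        Finset.le_sup' (fun i : Fin (m + 2) => ‖f (τ i) - f 0‖) (Finset.mem_univ (0 : Fin (m + 2)))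
      exact le_trans (norm_nonneg _) (le_max_of_le_left hb)
    intro t ht htT
    rcases partition_locate hmono (h0 ▸ ht) (hlast ▸ htT) with ⟨i, hi⟩ | ⟨i, hi1, hi2⟩
    · exact le_trans (hi ▸ Finset.le_sup' (fun i => ‖f (τ i) - f 0‖) (Finset.mem_univ i)) (le_max_left _ _)
    · have hm1 := (hmidmem i).1
      have hm2 := (hmidmem i).2
      have hosc : ‖f t - f (mid i)‖ ≤ δ := by
        rcases le_total t (mid i) with hc | hc
        · rw [norm_sub_rev]
          exact hI i t (mid i) hi1 hc hm2
        · exact hI i (mid i) t hm1 hc hi2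
      have : ‖f t - f 0‖ ≤ ‖f (mid i) - f 0‖ + δ := by
        calc ‖f t - f 0‖ = ‖(f t - f (mid i)) + (f (mid i) - f 0)‖ := by abel_nf
          _ ≤ ‖f t - f (mid i)‖ + ‖f (mid i) - f 0‖ := norm_add_le _ _
          _ ≤ δ + ‖f (mid i) - f 0‖ := by linarith
          _ = ‖f (mid i) - f 0‖ + δ := by ring
      exact le_trans (le_trans this (Finset.le_sup' (fun i => ‖f (mid i) - f 0‖ + δ) (Finset.mem_univ i))) (le_max_right _ _)

end GoodP

lemma euclid_coord_le {d : ℕ} (x : EuclideanSpace ℝ (Fin d)) (i : Fin d) : |x i| ≤ ‖x‖ := by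
  rw [EuclideanSpace.norm_eq, ← Real.sqrt_sq_eq_abs]
  apply Real.sqrt_le_sqrt
  have h := Finset.single_le_sum (f := fun j => ‖x j‖ ^ 2) (fun j _ => sq_nonneg _)
    (Finset.mem_univ i)
  simpa [Real.norm_eq_abs, sq_abs] using h


/-- If `Ξ_{s,t}` satisfies the additivity-defect relation
`Ξ_{s,t} − Ξ_{s,u} − Ξ_{u,t} = X⁻_{s,u} ⊗ X_{u,t}` for a càdlàg `X`, and `t ↦ Ξ_{0,t}` is
càdlàg, then for every `ε > 0` there is a finite partition `0 = t₀ < ⋯ < t_n = T` such that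
the oscillation of `Ξ` on each open interval `(t_i, t_{i+1})` is at most `ε`. -/
theorem small_oscillation_partition
    {d : ℕ} (T : ℝ) (hT : 0 < T)
    (X : ℝ → EuclideanSpace ℝ (Fin d)) (hXc : Cadlag X 0 T)
    (Ξ : ℝ → ℝ → (Fin d → Fin d → ℝ))
    (hrel : ∀ s u t : ℝ, 0 ≤ s → s ≤ u → u ≤ t → t ≤ T →
      (fun i j => Ξ s t i j - Ξ s u i j - Ξ u t i j) =
        fun i j => (minus X 0 u i - minus X 0 s i) * (X t j - X u j))
    (hΞc : Cadlag (fun t => Ξ 0 t) 0 T) :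
    ∀ ε : ℝ, 0 < ε → ∃ n : ℕ, ∃ τ : Fin (n + 1) → ℝ,
      StrictMono τ ∧ τ 0 = 0 ∧ τ (Fin.last n) = T ∧
      ∀ i : Fin n, ∀ u v : ℝ, τ i.castSucc < u → u ≤ v → v < τ i.succ →
        ‖Ξ u v‖ ≤ ε := by
  intro ε hε
  obtain ⟨B, hBnn, hB⟩ := bound_of_goodPart zero_le_one (goodPart_of_cadlag hT hXc one_pos)
  have hLL : ∀ u : ℝ, 0 < u → u ≤ T → ‖Function.leftLim X u - X 0‖ ≤ B := by
    intro u hu huT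
    obtain ⟨L, hL⟩ := hXc.2 u ⟨hu, huT⟩
    have hne : nhdsWithin u (Set.Iio u) ≠ ⊥ := (nhdsLT_neBot u).ne'
    rw [leftLim_eq_of_tendsto hL]
    have htend : Filter.Tendsto (fun w => ‖X w - X 0‖) (nhdsWithin u (Set.Iio u))
        (nhds ‖L - X 0‖) := (hL.sub tendsto_const_nhds).norm
    refine le_of_tendsto htend ?_
    have h1 : ∀ᶠ w in nhdsWithin u (Set.Iio u), 0 < w :=
      Filter.Eventually.filter_mono nhdsWithin_le_nhds (eventually_gt_nhds hu)
    have h2 : ∀ᶠ w in nhdsWithin u (Set.Iio u), w < u :=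
      eventually_mem_nhdsWithin.mono fun w hw => hw
    filter_upwards [h1, h2] with w hw1 hw2
    exact hB w hw1.le (le_trans hw2.le huT)
  have hBpos : (0 : ℝ) < 1 + B := by linarith
  set δ := ε / (1 + B) with hδdef
  have hδ : 0 < δ := div_pos hε hBpos
  set g : ℝ → ((Fin d → Fin d → ℝ) × EuclideanSpace ℝ (Fin d)) := fun t => (Ξ 0 t, X t)
    with hg
  have hgc : Cadlag g 0 T := by
    constructor
    · intro t ht
      exact (hΞc.1 t ht).prodMk_nhds (hXc.1 t ht)
    · intro t ht
      obtain ⟨L1, h1⟩ := hΞc.2 t ht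
      obtain ⟨L2, h2⟩ := hXc.2 t ht
      exact ⟨(L1, L2), h1.prodMk_nhds h2⟩
  obtain ⟨n, τ, hmono, h0, hlast, hI⟩ := goodPart_of_cadlag hT hgc hδ
  refine ⟨n, τ, hmono, h0, hlast, ?_⟩
  intro i u v hu huv hv
  have h0u : 0 < u := lt_of_le_of_lt (by rw [← h0]; exact hmono.monotone (Fin.zero_le _)) hu
  have hvT : v ≤ T :=
    le_of_lt (lt_of_lt_of_le hv (by rw [← hlast]; exact hmono.monotone (Fin.le_last _)))
  have hgd : ‖g v - g u‖ ≤ δ := hI i u v hu huv hv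
  have hΞd : ‖Ξ 0 v - Ξ 0 u‖ ≤ δ := by
    calc ‖Ξ 0 v - Ξ 0 u‖ = ‖(g v - g u).1‖ := by simp [hg]
      _ ≤ ‖g v - g u‖ := norm_fst_le _
      _ ≤ δ := hgd
  have hXd : ‖X v - X u‖ ≤ δ := by
    calc ‖X v - X u‖ = ‖(g v - g u).2‖ := by simp [hg]
      _ ≤ ‖g v - g u‖ := norm_snd_le _
      _ ≤ δ := hgd
  have hrel' := hrel 0 u v le_rfl h0u.le huv hvT
  have hminus0 : minus X 0 0 = X 0 := by simp [minus]
  have hminusu : minus X 0 u = Function.leftLim X u := by simp [minus, not_le.mpr h0u]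
  rw [pi_norm_le_iff_of_nonneg hε.le]
  intro i'
  rw [pi_norm_le_iff_of_nonneg hε.le]
  intro j
  have hentry := congrFun (congrFun hrel' i') j
  simp only at hentry
  have e1 : |Ξ 0 v i' j - Ξ 0 u i' j| ≤ δ := by
    have h1 : ‖(Ξ 0 v - Ξ 0 u) i'‖ ≤ ‖Ξ 0 v - Ξ 0 u‖ := norm_le_pi_norm _ i'
    have h2 : ‖(Ξ 0 v - Ξ 0 u) i' j‖ ≤ ‖(Ξ 0 v - Ξ 0 u) i'‖ := norm_le_pi_norm _ j
    have h3 : (Ξ 0 v - Ξ 0 u) i' j = Ξ 0 v i' j - Ξ 0 u i' j := rfl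
    rw [h3] at h2
    exact le_trans (le_trans h2 h1) hΞd
  have e2 : |X v j - X u j| ≤ δ := by
    have h4 := euclid_coord_le (X v - X u) j
    rw [PiLp.sub_apply] at h4
    exact le_trans h4 hXd
  have e3 : |minus X 0 u i' - minus X 0 0 i'| ≤ B := by
    rw [hminusu, hminus0]
    have h5 := euclid_coord_le (Function.leftLim X u - X 0) i'
    rw [PiLp.sub_apply] at h5
    exact le_trans h5 (hLL u h0u (le_trans huv hvT))
  have hΞuv : Ξ u v i' j =
      (Ξ 0 v i' j - Ξ 0 u i' j) - (minus X 0 u i' - minus X 0 0 i') * (X v j - X u j) := by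
    linarith [hentry]
  have hsum : δ + B * δ = ε := by
    rw [hδdef]; field_simp
  rw [Real.norm_eq_abs, hΞuv]
  calc |(Ξ 0 v i' j - Ξ 0 u i' j) - (minus X 0 u i' - minus X 0 0 i') * (X v j - X u j)|
      ≤ |Ξ 0 v i' j - Ξ 0 u i' j| + |(minus X 0 u i' - minus X 0 0 i') * (X v j - X u j)| :=
        abs_sub _ _
    _ = |Ξ 0 v i' j - Ξ 0 u i' j| + |minus X 0 u i' - minus X 0 0 i'| * |X v j - X u j| := by
        rw [abs_mul]
    _ ≤ δ + B * δ := add_le_add e1 (mul_le_mul e3 e2 (abs_nonneg _) hBnn)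
    _ = ε := hsum
end
end

section
/- Let C ∈ T^{(4)}(ℝ^d) have symmetric level-4 component π₄C (e.g. π₄C = (1/4!)∫ y^{⊗4} K(dy)), and suppose the expected level-4 signature satisfies E[𝐗^{(4)}_{s,t}] = exp(C(t−s)) with 𝐗 group-like. Then for i ≠ j, E[(𝔸^{i,j}_{s,t})²] = O(|t−s|²), where 𝔸 = (𝕏 − 𝕏ᵀ)/2 is the antisymmetric part of the level-2 component; indeed (𝔸^{i,j}_{s,t})² = 𝐗^{iijj}_{s,t} − 𝐗^{ijji}_{s,t} − 𝐗^{jiij}_{s,t} + 𝐗^{jjii}_{s,t} by the shuffle product formula, and the first-order term in (t−s) vanishes: C^{iijj} − C^{ijji} − C^{jiij} + C^{jjii} = 0 by symmetry of π₄C. -/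
open scoped BigOperators
open MeasureTheory

noncomputable section

/-- The multiset of shuffles of two words. -/
def shuffles {d : ℕ} : List (Fin d) → List (Fin d) → Multiset (List (Fin d))
  | [], w => {w}
  | v, [] => {v}
  | a :: v, b :: w =>
      ((shuffles v (b :: w)).map (a :: ·)) + ((shuffles (a :: v) w).map (b :: ·))
  termination_by v w => v.length + w.length

namespace AreaAux

lemma shuffle22 {d : ℕ} (a b c e : Fin d) (X : List (Fin d) → ℝ) :
    ((shuffles [a,b] [c,e]).map X).sum =
      X [a,b,c,e] + X [a,c,b,e] + X [a,c,e,b] + X [c,a,b,e] + X [c,a,e,b] + X [c,e,a,b] := by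
  simp [shuffles]
  ring

section
variable {d : ℕ} (x : List (Fin d) → ℝ) (hx : x [] = 0) (a b c e : Fin d)

lemma pow1_0 : taPow 4 x 1 [] = x [] := by
  simp [taPow, taMul, taOne]
lemma pow1_1 : taPow 4 x 1 [a] = x [a] := by
  simp [taPow, taMul, taOne, Finset.sum_range_succ]
lemma pow1_2 : taPow 4 x 1 [a,b] = x [a,b] := by
  simp [taPow, taMul, taOne, Finset.sum_range_succ]
lemma pow1_3 : taPow 4 x 1 [a,b,c] = x [a,b,c] := by
  simp [taPow, taMul, taOne, Finset.sum_range_succ]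
lemma pow1_4 : taPow 4 x 1 [a,b,c,e] = x [a,b,c,e] := by
  simp [taPow, taMul, taOne, Finset.sum_range_succ]
end

section
variable {d : ℕ} (x : List (Fin d) → ℝ) (hx : x [] = 0) (a b c e : Fin d)
include hx

lemma pow2_0 : taPow 4 x 2 [] = 0 := by
  show taMul 4 x (taPow 4 x 1) [] = 0
  simp [taMul, pow1_0, hx]
lemma pow2_1 : taPow 4 x 2 [a] = 0 := by
  show taMul 4 x (taPow 4 x 1) [a] = 0
  simp [taMul, Finset.sum_range_succ, pow1_0, pow1_1, hx]
lemma pow2_2 : taPow 4 x 2 [a,b] = x [a] * x [b] := by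
  show taMul 4 x (taPow 4 x 1) [a,b] = _
  simp [taMul, Finset.sum_range_succ, pow1_0, pow1_1, pow1_2, hx]
lemma pow2_3 : taPow 4 x 2 [a,b,c] = x [a] * x [b,c] + x [a,b] * x [c] := by
  show taMul 4 x (taPow 4 x 1) [a,b,c] = _
  simp [taMul, Finset.sum_range_succ, pow1_0, pow1_1, pow1_2, pow1_3, hx]
lemma pow2_4 : taPow 4 x 2 [a,b,c,e] = x [a] * x [b,c,e] + x [a,b] * x [c,e] + x [a,b,c] * x [e] := by
  show taMul 4 x (taPow 4 x 1) [a,b,c,e] = _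
  simp [taMul, Finset.sum_range_succ, pow1_0, pow1_1, pow1_2, pow1_3, pow1_4, hx]
lemma pow3_3 : taPow 4 x 3 [a,b,c] = x [a] * x [b] * x [c] := by
  show taMul 4 x (taPow 4 x 2) [a,b,c] = _
  simp [taMul, Finset.sum_range_succ, pow2_0 x hx, pow2_1 x hx, pow2_2 x hx, pow2_3 x hx, hx]
  ring
lemma pow3_4 : taPow 4 x 3 [a,b,c,e] =
    x [a] * x [b] * x [c,e] + x [a] * x [b,c] * x [e] + x [a,b] * x [c] * x [e] := by
  show taMul 4 x (taPow 4 x 2) [a,b,c,e] = _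
  simp [taMul, Finset.sum_range_succ, pow2_0 x hx, pow2_1 x hx, pow2_2 x hx, pow2_3 x hx, pow2_4 x hx, hx]
  ring
lemma pow4_4 : taPow 4 x 4 [a,b,c,e] = x [a] * x [b] * x [c] * x [e] := by
  show taMul 4 x (taPow 4 x 3) [a,b,c,e] = _
  have p30 : taPow 4 x 3 [] = 0 := by
    show taMul 4 x (taPow 4 x 2) [] = 0
    simp [taMul, pow2_0 x hx, hx]
  have p31 : taPow 4 x 3 [e] = 0 := by
    show taMul 4 x (taPow 4 x 2) [e] = 0
    simp [taMul, Finset.sum_range_succ, pow2_0 x hx, pow2_1 x hx, hx]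
  have p32 : taPow 4 x 3 [c,e] = 0 := by
    show taMul 4 x (taPow 4 x 2) [c,e] = 0
    simp [taMul, Finset.sum_range_succ, pow2_0 x hx, pow2_1 x hx, pow2_2 x hx, hx]
  simp [taMul, Finset.sum_range_succ, p30, p31, p32, pow3_3 x hx, pow3_4 x hx, hx]
  ring

lemma exp4 : taExp 4 x [a,b,c,e] =
    x [a,b,c,e]
    + (1/2) * (x [a] * x [b,c,e] + x [a,b] * x [c,e] + x [a,b,c] * x [e])
    + (1/6) * (x [a] * x [b] * x [c,e] + x [a] * x [b,c] * x [e] + x [a,b] * x [c] * x [e])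
    + (1/24) * (x [a] * x [b] * x [c] * x [e]) := by
  have h0 : taPow 4 x 0 [a,b,c,e] = 0 := by simp [taPow, taOne]
  simp only [taExp, Finset.sum_range_succ, Finset.sum_range_zero,
    h0, pow1_4, pow2_4 x hx, pow3_4 x hx, pow4_4 x hx]
  norm_num [Nat.factorial]
end

/-- quadratic / cubic / quartic coefficient brackets in the exponential expansion. -/
def Q2 {d : ℕ} (C : List (Fin d) → ℝ) (a b c e : Fin d) : ℝ :=
  C [a] * C [b,c,e] + C [a,b] * C [c,e] + C [a,b,c] * C [e]
def Q3 {d : ℕ} (C : List (Fin d) → ℝ) (a b c e : Fin d) : ℝ :=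
  C [a] * C [b] * C [c,e] + C [a] * C [b,c] * C [e] + C [a,b] * C [c] * C [e]
def Q4 {d : ℕ} (C : List (Fin d) → ℝ) (a b c e : Fin d) : ℝ :=
  C [a] * C [b] * C [c] * C [e]

def S {d : ℕ} (Q : Fin d → Fin d → Fin d → Fin d → ℝ) (i j : Fin d) : ℝ :=
  Q i i j j - Q i j j i - Q j i i j + Q j j i i

lemma expS {d : ℕ} (C : List (Fin d) → ℝ) (hC0 : C [] = 0) (l : ℝ) (i j : Fin d)
    (hΔ : C [i,i,j,j] - C [i,j,j,i] - C [j,i,i,j] + C [j,j,i,i] = 0) :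
    taExp 4 (fun u => l * C u) [i,i,j,j] - taExp 4 (fun u => l * C u) [i,j,j,i]
      - taExp 4 (fun u => l * C u) [j,i,i,j] + taExp 4 (fun u => l * C u) [j,j,i,i]
    = l^2/2 * S (Q2 C) i j + l^3/6 * S (Q3 C) i j + l^4/24 * S (Q4 C) i j := by
  have hx : (fun u => l * C u) [] = 0 := by simp [hC0]
  rw [exp4 _ hx, exp4 _ hx, exp4 _ hx, exp4 _ hx]
  simp only [S, Q2, Q3, Q4]
  linear_combination l * hΔ

end AreaAux

/-- Suppose the expected level-4 signature of a group-like (shuffle-compatible)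
process satisfies `E[𝐗^{(4)}_{s,t}] = exp(C(t−s))` with symmetric level-4 component of `C`.
Then the algebraic shuffle identity `(𝔸^{ij})² = 𝐗^{iijj} − 𝐗^{ijji} − 𝐗^{jiij} + 𝐗^{jjii}`
holds, the first-order coefficient `C^{iijj} − C^{ijji} − C^{jiij} + C^{jjii}` vanishes, and
consequently `E[(𝔸^{ij}_{s,t})²] = O(|t−s|²)`. -/
theorem area_second_moment_via_expected_signature
    {d : ℕ} {Ω : Type*} [MeasurableSpace Ω] (P : Measure Ω) [IsProbabilityMeasure P]
    (T : ℝ) (hT : 0 < T)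
    (XX : ℝ → ℝ → Ω → (List (Fin d) → ℝ))
    (C : List (Fin d) → ℝ) (hC0 : C [] = 0)
    (hCsym : ∀ v w : List (Fin d), v.length = 4 → v.Perm w → C v = C w)
    (hint : ∀ s t : ℝ, ∀ w : List (Fin d), Integrable (fun ω => XX s t ω w) P)
    -- `𝐗_{s,t}` is group-like: the shuffle product formula holds
    (hshuffle : ∀ s t : ℝ, ∀ ω : Ω, ∀ v w : List (Fin d), v.length + w.length ≤ 4 →
      XX s t ω v * XX s t ω w = ((shuffles v w).map (XX s t ω)).sum)
    -- expected signature of exponential Lévy–Kintchine form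
    (hexp : ∀ s t : ℝ, 0 ≤ s → s ≤ t → t ≤ T → ∀ w : List (Fin d),
      (∫ ω, XX s t ω w ∂P) = taExp 4 (fun u => (t - s) * C u) w) :
    (∀ i j : Fin d, C [i, i, j, j] - C [i, j, j, i] - C [j, i, i, j] + C [j, j, i, i] = 0) ∧
    (∀ s t : ℝ, ∀ ω : Ω, ∀ i j : Fin d, i ≠ j →
      ((XX s t ω [i, j] - XX s t ω [j, i]) / 2) ^ 2 =
        XX s t ω [i, i, j, j] - XX s t ω [i, j, j, i]
          - XX s t ω [j, i, i, j] + XX s t ω [j, j, i, i]) ∧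
    (∃ C₂ : ℝ, 0 ≤ C₂ ∧ ∀ s t : ℝ, 0 ≤ s → s ≤ t → t ≤ T → ∀ i j : Fin d, i ≠ j →
      (∫ ω, ((XX s t ω [i, j] - XX s t ω [j, i]) / 2) ^ 2 ∂P) ≤ C₂ * (t - s) ^ 2) := by
  -- Part 1: symmetry kills the first-order coefficient
  have part1 : ∀ i j : Fin d,
      C [i, i, j, j] - C [i, j, j, i] - C [j, i, i, j] + C [j, j, i, i] = 0 := by
    intro i j
    have p1 : ([i,i,j,j] : List (Fin d)).Perm [i,j,j,i] :=
      List.Perm.cons i (List.perm_append_comm (l₁ := [i]) (l₂ := [j,j]))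
    have p2 : ([i,i,j,j] : List (Fin d)).Perm [j,i,i,j] :=
      List.perm_append_comm (l₁ := [i,i,j]) (l₂ := [j])
    have p3 : ([i,i,j,j] : List (Fin d)).Perm [j,j,i,i] :=
      List.perm_append_comm (l₁ := [i,i]) (l₂ := [j,j])
    rw [← hCsym [i,i,j,j] [i,j,j,i] rfl p1, ← hCsym [i,i,j,j] [j,i,i,j] rfl p2,
      ← hCsym [i,i,j,j] [j,j,i,i] rfl p3]
    ring
  -- Part 2: shuffle identity for the squared area
  have part2 : ∀ s t : ℝ, ∀ ω : Ω, ∀ i j : Fin d, i ≠ j →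
      ((XX s t ω [i, j] - XX s t ω [j, i]) / 2) ^ 2 =
        XX s t ω [i, i, j, j] - XX s t ω [i, j, j, i]
          - XX s t ω [j, i, i, j] + XX s t ω [j, j, i, i] := by
    intro s t ω i j _
    set X := XX s t ω with hX
    have e1 : X [i,j] * X [i,j] = 2 * X [i,j,i,j] + 4 * X [i,i,j,j] := by
      rw [hshuffle s t ω [i,j] [i,j] (by norm_num), AreaAux.shuffle22]; ring
    have e2 : X [i,j] * X [j,i]
        = 2 * X [i,j,j,i] + X [i,j,i,j] + X [j,i,j,i] + 2 * X [j,i,i,j] := by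
      rw [hshuffle s t ω [i,j] [j,i] (by norm_num), AreaAux.shuffle22]; ring
    have e3 : X [j,i] * X [j,i] = 2 * X [j,i,j,i] + 4 * X [j,j,i,i] := by
      rw [hshuffle s t ω [j,i] [j,i] (by norm_num), AreaAux.shuffle22]; ring
    linear_combination (e1 - 2 * e2 + e3) / 4
  refine ⟨part1, part2, ?_⟩
  -- Part 3: second moment bound
  set g : Fin d × Fin d → ℝ := fun p =>
    |AreaAux.S (AreaAux.Q2 C) p.1 p.2| / 2 + T * |AreaAux.S (AreaAux.Q3 C) p.1 p.2| / 6
      + T ^ 2 * |AreaAux.S (AreaAux.Q4 C) p.1 p.2| / 24 with hg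
  have hgnn : ∀ p : Fin d × Fin d, 0 ≤ g p := by
    intro p
    have := abs_nonneg (AreaAux.S (AreaAux.Q2 C) p.1 p.2)
    have := abs_nonneg (AreaAux.S (AreaAux.Q3 C) p.1 p.2)
    have := abs_nonneg (AreaAux.S (AreaAux.Q4 C) p.1 p.2)
    have hT' := hT.le
    simp only [hg]
    positivity
  refine ⟨∑ p : Fin d × Fin d, g p, Finset.sum_nonneg fun p _ => hgnn p, ?_⟩
  intro s t hs hst htT i j hij
  set l := t - s with hl
  have hl0 : 0 ≤ l := by simp [hl]; linarith
  have hlT : l ≤ T := by simp [hl]; linarith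
  -- compute the integral
  have hIeq : (∫ ω, ((XX s t ω [i, j] - XX s t ω [j, i]) / 2) ^ 2 ∂P)
      = l^2/2 * AreaAux.S (AreaAux.Q2 C) i j + l^3/6 * AreaAux.S (AreaAux.Q3 C) i j
        + l^4/24 * AreaAux.S (AreaAux.Q4 C) i j := by
    have h1 : (∫ ω, ((XX s t ω [i, j] - XX s t ω [j, i]) / 2) ^ 2 ∂P)
        = ∫ ω, (XX s t ω [i,i,j,j] - XX s t ω [i,j,j,i]
            - XX s t ω [j,i,i,j] + XX s t ω [j,j,i,i]) ∂P := by
      apply integral_congr_ae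
      filter_upwards with ω
      exact part2 s t ω i j hij
    rw [h1]
    have hA : Integrable (fun ω => XX s t ω [i,i,j,j]) P := hint s t _
    have hB : Integrable (fun ω => XX s t ω [i,j,j,i]) P := hint s t _
    have hCc : Integrable (fun ω => XX s t ω [j,i,i,j]) P := hint s t _
    have hD : Integrable (fun ω => XX s t ω [j,j,i,i]) P := hint s t _
    have hAB : Integrable (fun ω => XX s t ω [i,i,j,j] - XX s t ω [i,j,j,i]) P := hA.sub hB
    have hABC : Integrable (fun ω => XX s t ω [i,i,j,j] - XX s t ω [i,j,j,i]
        - XX s t ω [j,i,i,j]) P := hAB.sub hCc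
    rw [integral_add hABC hD, integral_sub hAB hCc, integral_sub hA hB]
    rw [hexp s t hs hst htT, hexp s t hs hst htT, hexp s t hs hst htT, hexp s t hs hst htT]
    exact AreaAux.expS C hC0 l i j (part1 i j)
  rw [hIeq]
  -- bound by the uniform constant
  have hsingle : g (i, j) ≤ ∑ p : Fin d × Fin d, g p :=
    Finset.single_le_sum (fun p _ => hgnn p) (Finset.mem_univ (i, j))
  have hbound : l^2/2 * AreaAux.S (AreaAux.Q2 C) i j + l^3/6 * AreaAux.S (AreaAux.Q3 C) i j
      + l^4/24 * AreaAux.S (AreaAux.Q4 C) i j ≤ g (i, j) * l ^ 2 := by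
    simp only [hg]
    set s2 := AreaAux.S (AreaAux.Q2 C) i j with hs2
    set s3 := AreaAux.S (AreaAux.Q3 C) i j with hs3
    set s4 := AreaAux.S (AreaAux.Q4 C) i j with hs4
    clear_value l s2 s3 s4
    have b2 : l^2 * s2 ≤ l^2 * |s2| :=
      mul_le_mul_of_nonneg_left (le_abs_self s2) (by positivity)
    have b3 : l^3 * s3 ≤ T * l^2 * |s3| := by
      calc l^3 * s3 ≤ l^3 * |s3| :=
            mul_le_mul_of_nonneg_left (le_abs_self s3) (by positivity)
        _ ≤ T * l^2 * |s3| := by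
            apply mul_le_mul_of_nonneg_right _ (abs_nonneg s3)
            nlinarith [sq_nonneg l]
    have b4 : l^4 * s4 ≤ T^2 * l^2 * |s4| := by
      calc l^4 * s4 ≤ l^4 * |s4| :=
            mul_le_mul_of_nonneg_left (le_abs_self s4) (by positivity)
        _ ≤ T^2 * l^2 * |s4| := by
            apply mul_le_mul_of_nonneg_right _ (abs_nonneg s4)
            nlinarith [mul_le_mul_of_nonneg_right
              (show l^2 ≤ T^2 by nlinarith) (sq_nonneg l)]
    nlinarith [b2, b3, b4]
  calc l^2/2 * AreaAux.S (AreaAux.Q2 C) i j + l^3/6 * AreaAux.S (AreaAux.Q3 C) i j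
      + l^4/24 * AreaAux.S (AreaAux.Q4 C) i j ≤ g (i, j) * l ^ 2 := hbound
    _ ≤ (∑ p : Fin d × Fin d, g p) * l ^ 2 :=
      mul_le_mul_of_nonneg_right hsingle (by positivity)
end
end

section
/- Let 𝐊 be a Lévy measure on the group G^{(2)}(ℝ^d) (∫(|g|² ∧ 1)𝐊(dg) < ∞ where |g| is the Euclidean norm of log g ∈ ℝ^d ⊕ so(d)). Then its Carnot–Carathéodory Blumenthal–Getoor index β := inf{q > 0 : ∫(‖g‖_{CC}^q ∧ 1)𝐊(dg) < ∞} satisfies β ≤ 4. -/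
open MeasureTheory

noncomputable section

/-- Let `KK` be a Lévy measure on `G^{(2)}(ℝ^d)`, presented in logarithmic
coordinates `log g = (x, a) ∈ ℝ^d ⊕ so(d)`, i.e. `∫ (|g|² ∧ 1) KK(dg) < ∞` for the Euclidean
norm of `log g`, and let `cc` be the Carnot–Carathéodory norm, so that
`cc(g) ≍ ‖x‖ + ‖a‖^{1/2}`.  Then the Carnot–Carathéodory Blumenthal–Getoor index
`β = inf{q > 0 : ∫ (cc(g)^q ∧ 1) KK(dg) < ∞}` satisfies `β ≤ 4`. -/
theorem ccbg_index_le_four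
    {d : ℕ}
    (KK : Measure ((Fin d → ℝ) × (Fin d → Fin d → ℝ)))
    -- the second (so(d)) coordinate is antisymmetric KK-a.e.
    (hso : ∀ᵐ g ∂KK, ∀ i j, g.2 i j = -g.2 j i)
    -- `KK` is a Lévy measure: no mass at the identity, integrates `|log g|² ∧ 1`
    (h0 : KK {0} = 0)
    (hlevy : (∫⁻ g, ENNReal.ofReal (min (‖g.1‖ ^ 2 + ‖g.2‖ ^ 2) 1) ∂KK) < ⊤)
    -- `cc` is (equivalent to) the Carnot–Carathéodory norm
    (cc : ((Fin d → ℝ) × (Fin d → Fin d → ℝ)) → ℝ)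
    (hcc : ∃ c C : ℝ, 0 < c ∧ 0 < C ∧ ∀ g,
      c * (‖g.1‖ + ‖g.2‖ ^ ((1:ℝ)/2)) ≤ cc g ∧ cc g ≤ C * (‖g.1‖ + ‖g.2‖ ^ ((1:ℝ)/2))) :
    sInf {q : ℝ | 0 < q ∧ (∫⁻ g, ENNReal.ofReal (min (cc g ^ q) 1) ∂KK) < ⊤} ≤ 4 := by
  obtain ⟨c, C, hc, hC, hbound⟩ := hcc
  set M : ℝ := max 1 (16 * C ^ 4) with hM
  have hM1 : (1:ℝ) ≤ M := le_max_left _ _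
  have hM0 : 0 ≤ M := le_trans zero_le_one hM1
  -- pointwise bound
  have key : ∀ g : (Fin d → ℝ) × (Fin d → Fin d → ℝ),
      min (cc g ^ (4:ℝ)) 1 ≤ M * min (‖g.1‖ ^ 2 + ‖g.2‖ ^ 2) 1 := by
    intro g
    set u : ℝ := ‖g.1‖ with hu
    set v : ℝ := ‖g.2‖ ^ ((1:ℝ)/2) with hv
    have hu0 : 0 ≤ u := norm_nonneg _
    have hv0 : 0 ≤ v := Real.rpow_nonneg (norm_nonneg _) _
    have hcc0 : 0 ≤ cc g :=
      le_trans (mul_nonneg hc.le (add_nonneg hu0 hv0)) (hbound g).1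
    have hrw : cc g ^ (4:ℝ) = cc g ^ (4:ℕ) := by
      rw [← Real.rpow_natCast (cc g) 4]; norm_num
    by_cases hS : (1:ℝ) ≤ ‖g.1‖ ^ 2 + ‖g.2‖ ^ 2
    · have : min (‖g.1‖ ^ 2 + ‖g.2‖ ^ 2) 1 = 1 := min_eq_right hS
      rw [this, mul_one]
      exact le_trans (min_le_right _ _) hM1
    · push_neg at hS
      have hmin : min (‖g.1‖ ^ 2 + ‖g.2‖ ^ 2) 1 = ‖g.1‖ ^ 2 + ‖g.2‖ ^ 2 :=
        min_eq_left hS.le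
      rw [hmin]
      have hu1 : u ≤ 1 := by
        nlinarith [sq_nonneg u, sq_nonneg (‖g.2‖), sq_nonneg (u - 1)]
      have hv4 : v ^ (4:ℕ) = ‖g.2‖ ^ 2 := by
        rw [hv, ← Real.rpow_natCast (‖g.2‖ ^ ((1:ℝ)/2)) 4,
          ← Real.rpow_mul (norm_nonneg _)]
        norm_num
      have h1 : cc g ^ (4:ℕ) ≤ C ^ 4 * (u + v) ^ (4:ℕ) := by
        have := (hbound g).2
        calc cc g ^ (4:ℕ) ≤ (C * (u + v)) ^ (4:ℕ) := by
              apply pow_le_pow_left₀ hcc0 this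
          _ = C ^ 4 * (u + v) ^ (4:ℕ) := by ring
      have h2 : (u + v) ^ (4:ℕ) ≤ 8 * (u ^ (4:ℕ) + v ^ (4:ℕ)) := by
        nlinarith [sq_nonneg (u - v), sq_nonneg (u + v), sq_nonneg (u^2 - v^2),
          mul_nonneg hu0 hv0, sq_nonneg (u*v)]
      have hu4 : u ^ (4:ℕ) ≤ u ^ 2 := by
        calc u ^ (4:ℕ) = (u^2)^2 := by ring
          _ ≤ u^2 * 1 := by
              have : u ^ 2 ≤ 1 := by nlinarith
              nlinarith [sq_nonneg u]
          _ = u ^ 2 := by ring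
      calc min (cc g ^ (4:ℝ)) 1 ≤ cc g ^ (4:ℝ) := min_le_left _ _
        _ = cc g ^ (4:ℕ) := hrw
        _ ≤ C ^ 4 * (u + v) ^ (4:ℕ) := h1
        _ ≤ C ^ 4 * (8 * (u ^ (4:ℕ) + v ^ (4:ℕ))) := by
            apply mul_le_mul_of_nonneg_left h2 (by positivity)
        _ = 8 * C ^ 4 * (u ^ (4:ℕ) + v ^ (4:ℕ)) := by ring
        _ ≤ 8 * C ^ 4 * (u ^ 2 + ‖g.2‖ ^ 2) := by
            rw [hv4]
            apply mul_le_mul_of_nonneg_left (by linarith) (by positivity)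
        _ ≤ M * (u ^ 2 + ‖g.2‖ ^ 2) := by
            apply mul_le_mul_of_nonneg_right _ (by positivity)
            calc (8:ℝ) * C ^ 4 ≤ 16 * C ^ 4 := by nlinarith [pow_nonneg hC.le 4]
              _ ≤ M := le_max_right _ _
  -- the integral at q = 4 is finite
  have hfin : (∫⁻ g, ENNReal.ofReal (min (cc g ^ (4:ℝ)) 1) ∂KK) < ⊤ := by
    calc (∫⁻ g, ENNReal.ofReal (min (cc g ^ (4:ℝ)) 1) ∂KK)
        ≤ ∫⁻ g, ENNReal.ofReal M * ENNReal.ofReal (min (‖g.1‖ ^ 2 + ‖g.2‖ ^ 2) 1) ∂KK := by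
          apply lintegral_mono
          intro g
          exact le_trans (ENNReal.ofReal_le_ofReal (key g))
            (le_of_eq (ENNReal.ofReal_mul hM0))
      _ = ENNReal.ofReal M * ∫⁻ g, ENNReal.ofReal (min (‖g.1‖ ^ 2 + ‖g.2‖ ^ 2) 1) ∂KK :=
          lintegral_const_mul' _ _ ENNReal.ofReal_ne_top
      _ < ⊤ := ENNReal.mul_lt_top ENNReal.ofReal_lt_top hlevy
  -- conclude
  apply csInf_le
  · exact ⟨0, fun q hq => hq.1.le⟩
  · exact ⟨by norm_num, hfin⟩
end
end
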